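/- arXiv:1905.07938 — 6 statements merged into one kernel-verified Lean document; each statement's English description precedes it below -/
import Mathlib

section
/- Let (α,β) ∈ [0,1]² with β ≥ min(2α,1). Then there exists a set A ⊆ ℕ of positive integers such that the asymptotic density d(A) exists and equals α, and the asymptotic density d(A+A) exists and equals β. -/
open Filter Topology Pointwise

namespace SD

noncomputable section
open scoped Classical

def lam : ℝ := Real.sqrt 2 - 1
lemma lam_irr : Irrational lam := by
  simpa [lam] using irrational_sqrt_two.sub_intCast 1
lemma lam_pos : 0 < lam := by
  have : (1:ℝ) < Real.sqrt 2 := by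
    nlinarith [Real.sq_sqrt (by norm_num : (2:ℝ) ≥ 0), Real.sqrt_nonneg 2]
  simp [lam]; linarith
def fr (n : ℕ) : ℝ := Int.fract (n * lam)
lemma fr_lt_one (n : ℕ) : fr n < 1 := Int.fract_lt_one _
lemma fr_nonneg (n : ℕ) : 0 ≤ fr n := Int.fract_nonneg _

lemma fr_pos {n : ℕ} (hn : n ≠ 0) : 0 < fr n := by
  rcases lt_or_eq_of_le (fr_nonneg n) with h | h
  · exact h
  · exfalso
    have h2 : Irrational ((n:ℝ) * lam) := lam_irr.natCast_mul hn
    have h3 := Int.fract_add_floor ((n : ℝ) * lam)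
    have h4 : fr n + (⌊(n:ℝ) * lam⌋ : ℝ) = (n : ℝ) * lam := h3
    exact h2.ne_int ⌊(n:ℝ) * lam⌋ (by linarith)

lemma fract_add_aux (a b : ℝ) : Int.fract (a + b) = Int.fract (Int.fract a + Int.fract b) := by
  conv_lhs => rw [← Int.fract_add_floor a, ← Int.fract_add_floor b]
  rw [show Int.fract a + ↑⌊a⌋ + (Int.fract b + ↑⌊b⌋) = (Int.fract a + Int.fract b) + ↑(⌊a⌋ + ⌊b⌋) by push_cast; ring, Int.fract_add_intCast]

lemma fract_add_of_lt {a b : ℝ} (h : Int.fract a + Int.fract b < 1) :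
    Int.fract (a + b) = Int.fract a + Int.fract b := by
  rw [fract_add_aux, Int.fract_eq_self.2 ⟨by
    have := Int.fract_nonneg a; have := Int.fract_nonneg b; linarith, h⟩]

lemma fract_add_of_ge {a b : ℝ} (h : 1 ≤ Int.fract a + Int.fract b) :
    Int.fract (a + b) = Int.fract a + Int.fract b - 1 := by
  rw [fract_add_aux, ← Int.fract_sub_one, Int.fract_eq_self.2 ⟨by linarith, by
    have := Int.fract_lt_one a; have := Int.fract_lt_one b; linarith⟩]

lemma fr_add_of_lt {m n : ℕ} (h : fr m + fr n < 1) : fr (m + n) = fr m + fr n := by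
  have e : ((m + n : ℕ) : ℝ) * lam = (m : ℝ) * lam + (n : ℝ) * lam := by push_cast; ring
  unfold fr
  rw [e, fract_add_of_lt h]

lemma fr_add_of_ge {m n : ℕ} (h : 1 ≤ fr m + fr n) : fr (m + n) = fr m + fr n - 1 := by
  have e : ((m + n : ℕ) : ℝ) * lam = (m : ℝ) * lam + (n : ℝ) * lam := by push_cast; ring
  unfold fr
  rw [e, fract_add_of_ge h]

lemma fr_sub {q n : ℕ} (hqn : q ≤ n) (h : fr q < fr n) : fr (n - q) = fr n - fr q := by
  have hn : (n - q) + q = n := by omega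
  rcases lt_or_ge (fr (n - q) + fr q) 1 with hc | hc
  · have h2 := fr_add_of_lt hc
    rw [hn] at h2; linarith
  · have h2 := fr_add_of_ge hc
    rw [hn] at h2
    have h1 := fr_lt_one (n - q)
    linarith

lemma fr_inj {m n : ℕ} (h : fr m = fr n) : m = n := by
  have key : ∀ m n : ℕ, m < n → fr m = fr n → False := by
    intro m n hlt h
    have hq : n - m ≠ 0 := by omega
    have h1 : 0 < fr (n - m) := fr_pos hq
    have h2 : fr (n - m) < 1 := fr_lt_one _
    have hn : (n - m) + m = n := by omega
    rcases lt_or_ge (fr (n - m) + fr m) 1 with hc | hc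
    · have h3 := fr_add_of_lt hc
      rw [hn] at h3; rw [h] at h3; linarith
    · have h3 := fr_add_of_ge hc
      rw [hn] at h3; rw [h] at h3; linarith
  by_contra hne
  rcases Nat.lt_or_ge m n with hlt | hge
  · exact key m n hlt h
  · exact key n m (by omega) h.symm

def cnt (S : Set ℕ) (N : ℕ) : ℕ := ((Finset.Icc 1 N).filter (· ∈ S)).card

lemma mem_cnt_filter {S : Set ℕ} {N n : ℕ} :
    n ∈ (Finset.Icc 1 N).filter (· ∈ S) ↔ (1 ≤ n ∧ n ≤ N ∧ n ∈ S) := by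
  simp only [Finset.mem_filter, Finset.mem_Icc]; tauto

lemma ncard_inter_eq (S : Set ℕ) (N : ℕ) : (S ∩ Set.Icc 1 N).ncard = cnt S N := by
  rw [show S ∩ Set.Icc 1 N = ↑((Finset.Icc 1 N).filter (· ∈ S)) by
    ext n; simp only [Set.mem_inter_iff, Set.mem_Icc, Finset.coe_filter, Set.mem_setOf_eq,
      Finset.mem_Icc]; tauto]
  exact Set.ncard_coe_finset _

lemma cnt_mono {S T : Set ℕ} (h : S ⊆ T) (N : ℕ) : cnt S N ≤ cnt T N := by
  apply Finset.card_le_card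
  intro n hn
  rw [mem_cnt_filter] at hn ⊢
  exact ⟨hn.1, hn.2.1, h hn.2.2⟩

lemma cnt_le (S : Set ℕ) (N : ℕ) : cnt S N ≤ N := by
  calc cnt S N ≤ (Finset.Icc 1 N).card := Finset.card_filter_le _ _
  _ = N := by rw [Nat.card_Icc]; omega

lemma cnt_union_le (S T : Set ℕ) (N : ℕ) : cnt (S ∪ T) N ≤ cnt S N + cnt T N := by
  refine le_trans (Finset.card_le_card ?_) (Finset.card_union_le _ _)
  intro n hn
  rw [mem_cnt_filter] at hn
  rcases hn.2.2 with h | h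
  · exact Finset.mem_union_left _ (mem_cnt_filter.2 ⟨hn.1, hn.2.1, h⟩)
  · exact Finset.mem_union_right _ (mem_cnt_filter.2 ⟨hn.1, hn.2.1, h⟩)

lemma cnt_le_of_subset_Icc {S : Set ℕ} {K : ℕ} (h : S ⊆ Set.Icc 1 K) (N : ℕ) :
    cnt S N ≤ K := by
  calc cnt S N ≤ ((Finset.Icc 1 K) : Finset ℕ).card := by
        apply Finset.card_le_card
        intro n hn
        rw [mem_cnt_filter] at hn
        have := h hn.2.2
        rw [Set.mem_Icc] at this
        exact Finset.mem_Icc.2 this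
  _ = K := by rw [Nat.card_Icc]; omega

lemma cnt_add_le {S T : Set ℕ} (hS : ∀ s ∈ S, 1 ≤ s) (hT : ∀ t ∈ T, 1 ≤ t) (N : ℕ) :
    cnt (S + T) N ≤ cnt S N * cnt T N := by
  have hsub : (Finset.Icc 1 N).filter (· ∈ S + T) ⊆
      (((Finset.Icc 1 N).filter (· ∈ S)) ×ˢ ((Finset.Icc 1 N).filter (· ∈ T))).image
        (fun p => p.1 + p.2) := by
    intro n hn
    rw [mem_cnt_filter] at hn
    obtain ⟨h1, h2, hmem⟩ := hn
    rw [Set.mem_add] at hmem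
    obtain ⟨s, hs, t, ht, hst⟩ := hmem
    apply Finset.mem_image.2
    refine ⟨(s, t), ?_, hst⟩
    rw [Finset.mem_product]
    have h1s := hS s hs
    have h1t := hT t ht
    constructor
    · exact mem_cnt_filter.2 ⟨h1s, by omega, hs⟩
    · exact mem_cnt_filter.2 ⟨h1t, by omega, ht⟩
  calc ((Finset.Icc 1 N).filter (· ∈ S + T)).card ≤ _ := Finset.card_le_card hsub
  _ ≤ _ := Finset.card_image_le
  _ = _ := Finset.card_product _ _

def B (x : ℝ) : Set ℕ := {n | 1 ≤ n ∧ fr n < x}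
def Bio (u v : ℝ) : Set ℕ := {n | 1 ≤ n ∧ u < fr n ∧ fr n < v}

lemma B_mono {x y : ℝ} (h : x ≤ y) : B x ⊆ B y := fun n hn => ⟨hn.1, lt_of_lt_of_le hn.2 h⟩

lemma cnt_empty (N : ℕ) : cnt ∅ N = 0 := by simp [cnt]

lemma B_nonpos {x : ℝ} (h : x ≤ 0) : B x = ∅ := by
  ext n; simp only [B, Set.mem_setOf_eq, Set.mem_empty_iff_false, iff_false, not_and, not_lt]
  intro _; linarith [fr_nonneg n]

lemma B_add_subset {x y : ℝ} (hxy : x + y ≤ 1) : B x + B y ⊆ B (x + y) := by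
  rintro n hn
  rw [Set.mem_add] at hn
  obtain ⟨s, hs, t, ht, hst⟩ := hn
  subst hst
  refine ⟨by have := hs.1; omega, ?_⟩
  rw [fr_add_of_lt (by linarith [hs.2, ht.2])]
  linarith [hs.2, ht.2]

lemma cnt_level_le_one (u : ℝ) (N : ℕ) : cnt {n | 1 ≤ n ∧ fr n = u} N ≤ 1 := by
  apply Finset.card_le_one.2
  intro a ha b hb
  rw [mem_cnt_filter] at ha hb
  exact fr_inj (ha.2.2.2.trans hb.2.2.2.symm)

lemma cnt_B_le_Bio (u v : ℝ) (N : ℕ) :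
    cnt (B v) N ≤ cnt (Bio u v) N + cnt (B u) N + 1 := by
  have hsub : B v ⊆ (Bio u v ∪ B u) ∪ {n | 1 ≤ n ∧ fr n = u} := by
    intro n hn
    rcases lt_trichotomy (fr n) u with h | h | h
    · exact Or.inl (Or.inr ⟨hn.1, h⟩)
    · exact Or.inr ⟨hn.1, h⟩
    · exact Or.inl (Or.inl ⟨hn.1, h, hn.2⟩)
  calc cnt (B v) N ≤ cnt ((Bio u v ∪ B u) ∪ {n | 1 ≤ n ∧ fr n = u}) N := cnt_mono hsub N
  _ ≤ cnt (Bio u v ∪ B u) N + cnt {n | 1 ≤ n ∧ fr n = u} N := cnt_union_le _ _ _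
  _ ≤ (cnt (Bio u v) N + cnt (B u) N) + 1 := by
      have := cnt_union_le (Bio u v) (B u) N
      have := cnt_level_le_one u N
      omega

def g (k : ℤ) : ℝ := (⌊(k : ℝ) * lam⌋ : ℝ)

lemma step_a (m : ℕ) (n : ℕ) :
    (if fr n < fr m then (1:ℝ) else 0) = g n - g ((n:ℤ) - m) - g m := by
  set a : ℝ := (((n:ℤ) - m : ℤ) : ℝ) * lam with ha
  set b : ℝ := (m : ℝ) * lam with hb
  have hab : a + b = (n : ℝ) * lam := by rw [ha, hb]; push_cast; ring
  have hfb : Int.fract b = fr m := rfl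
  have hfn : fr n = Int.fract (a + b) := by rw [hab]; rfl
  have hga : g ((n:ℤ) - m) = (⌊a⌋ : ℝ) := rfl
  have hgb : g m = (⌊b⌋ : ℝ) := by
    unfold g; norm_num; rfl
  have hgn : g n = (⌊a + b⌋ : ℝ) := by
    unfold g; rw [hab]; norm_num
  have hfloor : ∀ z : ℤ, ∀ r : ℝ, 0 ≤ r → r < 1 → ⌊(z:ℝ) + r⌋ = z := by
    intro z r h0 h1
    rw [Int.floor_intCast_add]
    have : ⌊r⌋ = 0 := by
      rw [Int.floor_eq_zero_iff]; exact ⟨h0, h1⟩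
    omega
  have hsplit : a + b = ((⌊a⌋ + ⌊b⌋ : ℤ) : ℝ) + (Int.fract a + Int.fract b) := by
    have h1 := Int.fract_add_floor a
    have h2 := Int.fract_add_floor b
    push_cast
    linarith
  rcases lt_or_ge (Int.fract a + Int.fract b) 1 with hc | hc
  · have hfr : fr n = Int.fract a + Int.fract b := by rw [hfn, fract_add_of_lt hc]
    have hnot : ¬ fr n < fr m := by
      rw [hfr, ← hfb]
      have := Int.fract_nonneg a
      linarith
    rw [if_neg hnot]
    have hfl : ⌊a + b⌋ = ⌊a⌋ + ⌊b⌋ := by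
      rw [hsplit, hfloor _ _ (by linarith [Int.fract_nonneg a, Int.fract_nonneg b]) hc]
    rw [hgn, hga, hgb, hfl]
    push_cast; ring
  · have hfr : fr n = Int.fract a + Int.fract b - 1 := by rw [hfn, fract_add_of_ge hc]
    have hyes : fr n < fr m := by
      rw [hfr, ← hfb]
      have := Int.fract_lt_one a
      linarith
    rw [if_pos hyes]
    have hfl : ⌊a + b⌋ = ⌊a⌋ + ⌊b⌋ + 1 := by
      have : a + b = ((⌊a⌋ + ⌊b⌋ + 1 : ℤ) : ℝ) + (Int.fract a + Int.fract b - 1) := by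
        rw [hsplit]; push_cast; ring
      rw [this, hfloor _ _ (by linarith) (by
        have := Int.fract_lt_one a
        have := Int.fract_lt_one b
        linarith)]
    rw [hgn, hga, hgb, hfl]
    push_cast; ring

def usum (m : ℕ) (N : ℕ) : ℝ := ∑ j ∈ Finset.range m, g ((N : ℤ) - j)

lemma step_c (m : ℕ) (hm : 1 ≤ m) (N : ℕ) :
    ∑ n ∈ Finset.Icc 1 N, (g n - g ((n:ℤ) - m)) = usum m N - usum m 0 := by
  induction N with
  | zero => simp
  | succ N ih =>
    rw [Finset.sum_Icc_succ_top (by omega : 1 ≤ N + 1), ih]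
    have key : usum m (N + 1) - usum m N = g ((N:ℤ) + 1) - g ((N:ℤ) + 1 - m) := by
      obtain ⟨m', rfl⟩ : ∃ m', m = m' + 1 := ⟨m - 1, by omega⟩
      have h1 : usum (m' + 1) (N + 1) =
          (∑ j ∈ Finset.range m', g ((N : ℤ) - j)) + g ((N:ℤ) + 1) := by
        unfold usum
        rw [Finset.sum_range_succ' (fun j => g (((N + 1 : ℕ) : ℤ) - j)) m']
        have e1 : ∀ j : ℕ, (((N + 1 : ℕ) : ℤ) - ((j + 1 : ℕ) : ℤ)) = (N : ℤ) - j := by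
          intro j; push_cast; ring
        have e2 : (((N + 1 : ℕ) : ℤ) - ((0 : ℕ) : ℤ)) = (N : ℤ) + 1 := by push_cast; ring
        simp only [e1, e2]
      have h2 : usum (m' + 1) N =
          (∑ j ∈ Finset.range m', g ((N : ℤ) - j)) + g ((N:ℤ) - m') := by
        unfold usum
        rw [Finset.sum_range_succ]
      rw [h1, h2]
      have : (N:ℤ) + 1 - (m' + 1 : ℕ) = (N:ℤ) - m' := by push_cast; ring
      rw [this]
      ring
    have hcast : ((N + 1 : ℕ) : ℤ) = (N : ℤ) + 1 := by push_cast; ring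
    rw [hcast]
    linarith [key]

lemma step_b (m : ℕ) (N : ℕ) :
    (cnt (B (fr m)) N : ℝ) = ∑ n ∈ Finset.Icc 1 N, (if fr n < fr m then (1:ℝ) else 0) := by
  unfold cnt
  rw [Finset.card_filter]
  push_cast
  apply Finset.sum_congr rfl
  intro n hn
  rw [Finset.mem_Icc] at hn
  by_cases h : fr n < fr m
  · rw [if_pos h, if_pos ⟨hn.1, h⟩]
  · rw [if_neg h, if_neg (fun hmem => h hmem.2)]

lemma cnt_orbit (m : ℕ) (hm : m ≠ 0) :
    ∃ C : ℝ, 0 ≤ C ∧ ∀ N : ℕ, |(cnt (B (fr m)) N : ℝ) - N * fr m| ≤ C := by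
  refine ⟨m * (1 + m * |lam|) + |usum m 0|, by positivity, ?_⟩
  intro N
  have hm1 : 1 ≤ m := by omega
  have hb := step_b m N
  have hc := step_c m hm1 N
  have hsum : (cnt (B (fr m)) N : ℝ) = (usum m N - usum m 0) - N * g m := by
    rw [hb]
    have : ∀ n ∈ Finset.Icc 1 N, (if fr n < fr m then (1:ℝ) else 0)
        = (g n - g ((n:ℤ) - m)) - g m := by
      intro n _
      rw [step_a m n]
      try ring
    rw [Finset.sum_congr rfl this, Finset.sum_sub_distrib, hc, Finset.sum_const, Nat.card_Icc]
    simp only [Nat.add_sub_cancel, nsmul_eq_mul]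
  have hfrm : fr m = (m:ℝ) * lam - g m := by
    unfold fr g
    push_cast
    exact (Int.self_sub_floor _).symm
  have hdiff : (cnt (B (fr m)) N : ℝ) - N * fr m = (usum m N - N * (m * lam)) - usum m 0 := by
    rw [hsum, hfrm]; ring
  rw [hdiff]
  have hbound : |usum m N - N * (m * lam)| ≤ m * (1 + m * |lam|) := by
    have : usum m N - N * (m * lam) = ∑ j ∈ Finset.range m, (g ((N:ℤ) - j) - N * lam) := by
      rw [Finset.sum_sub_distrib]
      unfold usum
      rw [Finset.sum_const, Finset.card_range]
      ring
    rw [this]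
    calc |∑ j ∈ Finset.range m, (g ((N:ℤ) - j) - N * lam)|
        ≤ ∑ j ∈ Finset.range m, |g ((N:ℤ) - j) - N * lam| := Finset.abs_sum_le_sum_abs _ _
      _ ≤ ∑ _j ∈ Finset.range m, (1 + m * |lam|) := by
          apply Finset.sum_le_sum
          intro j hj
          rw [Finset.mem_range] at hj
          set x : ℝ := (((N:ℤ) - j : ℤ) : ℝ) * lam with hx
          have hgx : g ((N:ℤ) - j) = (⌊x⌋ : ℝ) := rfl
          have h1 : |(⌊x⌋ : ℝ) - x| ≤ 1 := by
            have := Int.sub_one_lt_floor x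
            have := Int.floor_le x
            rw [abs_le]
            constructor <;> linarith
          have h2 : x - (N:ℝ) * lam = -(j * lam) := by rw [hx]; push_cast; ring
          have h3 : |x - (N:ℝ) * lam| ≤ m * |lam| := by
            rw [h2, abs_neg, abs_mul]
            have : |(j:ℝ)| ≤ m := by
              rw [abs_of_nonneg (by positivity)]
              exact_mod_cast hj.le
            nlinarith [abs_nonneg lam, abs_nonneg (j:ℝ)]
          calc |g ((N:ℤ) - j) - N * lam| = |((⌊x⌋ : ℝ) - x) + (x - N * lam)| := by rw [hgx]; ring_nf
            _ ≤ |(⌊x⌋:ℝ) - x| + |x - N*lam| := abs_add_le _ _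
            _ ≤ 1 + m * |lam| := by linarith
      _ = m * (1 + m * |lam|) := by rw [Finset.sum_const, Finset.card_range]; ring
  calc |usum m N - N * (m * lam) - usum m 0|
      ≤ |usum m N - N * (m * lam)| + |usum m 0| := abs_sub _ _
    _ ≤ m * (1 + m * |lam|) + |usum m 0| := by linarith

lemma exists_small (δ : ℝ) (hδ : 0 < δ) : ∃ q : ℕ, 1 ≤ q ∧ (fr q < δ ∨ 1 - δ < fr q) := by
  obtain ⟨K, hK⟩ := exists_nat_one_div_lt hδ
  set Kp := K + 1 with hKpdef
  have hKp : (0:ℝ) < (Kp:ℝ) := by positivity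
  have hKd : 1 / (Kp : ℝ) < δ := by
    convert hK using 2
    · rfl
    · push_cast [hKpdef]; ring
  have maps : ∀ n ∈ Finset.Icc 1 (Kp+1), (⌊fr n * Kp⌋).toNat ∈ Finset.range Kp := by
    intro n _
    rw [Finset.mem_range]
    have h1 : fr n * Kp < Kp := by nlinarith [fr_lt_one n]
    have h2 : (0:ℝ) ≤ fr n * Kp := by
      have := fr_nonneg n; positivity
    have h3 : ⌊fr n * (Kp:ℝ)⌋ < (Kp:ℤ) := Int.floor_lt.2 (by exact_mod_cast h1)
    have h0 : 0 ≤ ⌊fr n * (Kp:ℝ)⌋ := Int.floor_nonneg.2 h2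
    omega
  have hcard : (Finset.range Kp).card < (Finset.Icc 1 (Kp+1)).card := by
    simp [Nat.card_Icc]
  obtain ⟨a, ha, b, hb, hab, hfab⟩ :=
    Finset.exists_ne_map_eq_of_card_lt_of_maps_to hcard maps
  have key : ∀ a b : ℕ, a < b → (⌊fr a * Kp⌋).toNat = (⌊fr b * Kp⌋).toNat →
      ∃ q : ℕ, 1 ≤ q ∧ (fr q < δ ∨ 1 - δ < fr q) := by
    intro a b hab hf
    have hfl : ⌊fr a * (Kp:ℝ)⌋ = ⌊fr b * (Kp:ℝ)⌋ := by
      have h0a : 0 ≤ ⌊fr a * (Kp:ℝ)⌋ := Int.floor_nonneg.2 (by have := fr_nonneg a; positivity)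
      have h0b : 0 ≤ ⌊fr b * (Kp:ℝ)⌋ := Int.floor_nonneg.2 (by have := fr_nonneg b; positivity)
      omega
    have h1 := Int.floor_le (fr a * (Kp:ℝ))
    have h2 := Int.lt_floor_add_one (fr a * (Kp:ℝ))
    have h3 := Int.floor_le (fr b * (Kp:ℝ))
    have h4 := Int.lt_floor_add_one (fr b * (Kp:ℝ))
    rw [hfl] at h1 h2
    have hclose : |fr b - fr a| < 1 / Kp := by
      have e1 : fr a - fr b < 1 / Kp := by rw [lt_div_iff₀ hKp]; nlinarith
      have e2 : fr b - fr a < 1 / Kp := by rw [lt_div_iff₀ hKp]; nlinarith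
      rw [abs_lt]
      constructor <;> linarith
    set q := b - a with hqdef
    have hq1 : 1 ≤ q := by omega
    have hsum : a + q = b := by omega
    refine ⟨q, hq1, ?_⟩
    have habs := abs_lt.1 hclose
    rcases lt_or_ge (fr a + fr q) 1 with hc | hc
    · left
      have h5 := fr_add_of_lt hc
      rw [hsum] at h5
      linarith
    · right
      have h5 := fr_add_of_ge hc
      rw [hsum] at h5
      linarith
  rcases Nat.lt_or_ge a b with h | h
  · exact key a b h hfab
  · exact key b a (by omega) hfab.symm

lemma fr_nsmul_small {q : ℕ} :
    ∀ j : ℕ, 1 ≤ j → (j : ℝ) * fr q < 1 → fr (j * q) = j * fr q := by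
  intro j
  induction j with
  | zero => omega
  | succ j ih =>
    intro _ hlt
    rcases Nat.eq_zero_or_pos j with rfl | hj
    · simp
    · have hfq := fr_nonneg q
      have hj1 : (j:ℝ) * fr q < 1 := by
        push_cast at hlt ⊢
        nlinarith
      have hih := ih hj hj1
      have hmul : (j + 1) * q = j * q + q := by ring
      rw [hmul, fr_add_of_lt (by rw [hih]; push_cast at hlt ⊢; nlinarith), hih]
      push_cast
      ring

lemma fr_nsmul_large {q : ℕ} :
    ∀ j : ℕ, 1 ≤ j → (j : ℝ) * (1 - fr q) < 1 → fr (j * q) = 1 - j * (1 - fr q) := by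
  intro j
  induction j with
  | zero => omega
  | succ j ih =>
    intro _ hlt
    rcases Nat.eq_zero_or_pos j with rfl | hj
    · have h01 : (0 + 1) * q = q := by ring
      rw [h01]
      push_cast
      ring
    · have hfq := fr_lt_one q
      have hfq0 := fr_nonneg q
      have hj1 : (j:ℝ) * (1 - fr q) < 1 := by
        push_cast at hlt ⊢
        nlinarith
      have hih := ih hj hj1
      have hmul : (j + 1) * q = j * q + q := by ring
      have hge : 1 ≤ fr (j * q) + fr q := by
        rw [hih]
        push_cast at hlt ⊢
        nlinarith
      rw [hmul, fr_add_of_ge hge, hih]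
      push_cast
      ring

lemma net0 (δ : ℝ) (hδ : 0 < δ) :
    ∃ M : ℕ, 1 ≤ M ∧ ∀ u v : ℝ, 0 ≤ u → v ≤ 1 → u + δ ≤ v →
      ∃ j : ℕ, 1 ≤ j ∧ j ≤ M ∧ u < fr j ∧ fr j < v := by
  obtain ⟨q, hq1, hq⟩ := exists_small (min (δ/2) (1/2)) (by positivity)
  rcases hq with hsmall | hlarge
  · set ε := fr q with hε
    have hε0 : 0 < ε := fr_pos (by omega)
    have hεδ : ε < δ/2 := lt_of_lt_of_le hsmall (min_le_left _ _)
    refine ⟨q * ((⌊1/ε⌋).toNat + 1), Nat.one_le_iff_ne_zero.2 (Nat.mul_ne_zero (by omega) (by omega)), ?_⟩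
    intro u v hu hv huv
    set j := (⌊u/ε⌋).toNat + 1 with hjdef
    have hfloor_nn : (0:ℤ) ≤ ⌊u/ε⌋ := Int.floor_nonneg.2 (by positivity)
    have hjr : (j : ℝ) = (⌊u/ε⌋ : ℝ) + 1 := by
      rw [hjdef, Nat.cast_add, Nat.cast_one]
      congr 1
      exact_mod_cast congrArg (fun z : ℤ => (z : ℝ)) (Int.toNat_of_nonneg hfloor_nn)
    have hju : u < j * ε := by
      have := Int.lt_floor_add_one (u/ε)
      rw [hjr]
      calc u = (u/ε) * ε := by field_simp
      _ < ((⌊u/ε⌋:ℝ) + 1) * ε := by nlinarith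
    have hjv : (j:ℝ) * ε ≤ u + ε := by
      have := Int.floor_le (u/ε)
      rw [hjr]
      have : ((⌊u/ε⌋:ℝ)) * ε ≤ u := by
        calc ((⌊u/ε⌋:ℝ)) * ε ≤ (u/ε) * ε := by nlinarith
        _ = u := by field_simp
      nlinarith
    have hjlt1 : (j:ℝ) * ε < 1 := by
      have : (j:ℝ)*ε < v := by linarith
      linarith
    have hfr := fr_nsmul_small j (by omega) hjlt1
    refine ⟨j * q, Nat.one_le_iff_ne_zero.2 (Nat.mul_ne_zero (by omega) (by omega)), ?_, ?_, ?_⟩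
    · have hjle : j ≤ (⌊1/ε⌋).toNat + 1 := by
        rw [hjdef]
        have hmono : ⌊u/ε⌋ ≤ ⌊1/ε⌋ := Int.floor_le_floor (by gcongr; linarith)
        omega
      calc j * q ≤ ((⌊1/ε⌋).toNat + 1) * q := Nat.mul_le_mul_right _ hjle
      _ = q * ((⌊1/ε⌋).toNat + 1) := Nat.mul_comm _ _
    · rw [hfr]; exact hju
    · rw [hfr]; linarith
  · set ε := 1 - fr q with hε
    have hε0 : 0 < ε := by have := fr_lt_one q; rw [hε]; linarith
    have hεδ : ε < δ/2 := by
      have h2 : (min (δ/2) (1/2) : ℝ) ≤ δ/2 := min_le_left _ _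
      rw [hε]; linarith
    refine ⟨q * ((⌊1/ε⌋).toNat + 1), Nat.one_le_iff_ne_zero.2 (Nat.mul_ne_zero (by omega) (by omega)), ?_⟩
    intro u v hu hv huv
    set j := (⌊(1-v)/ε⌋).toNat + 1 with hjdef
    have h1v : (0:ℝ) ≤ 1 - v := by linarith
    have hfloor_nn : (0:ℤ) ≤ ⌊(1-v)/ε⌋ := Int.floor_nonneg.2 (by positivity)
    have hjr : (j : ℝ) = (⌊(1-v)/ε⌋ : ℝ) + 1 := by
      rw [hjdef, Nat.cast_add, Nat.cast_one]
      congr 1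
      exact_mod_cast congrArg (fun z : ℤ => (z : ℝ)) (Int.toNat_of_nonneg hfloor_nn)
    have hju : 1 - v < j * ε := by
      have := Int.lt_floor_add_one ((1-v)/ε)
      rw [hjr]
      calc 1 - v = ((1-v)/ε) * ε := by field_simp
      _ < ((⌊(1-v)/ε⌋:ℝ) + 1) * ε := by nlinarith
    have hjv : (j:ℝ) * ε ≤ (1 - v) + ε := by
      have := Int.floor_le ((1-v)/ε)
      rw [hjr]
      have h2 : ((⌊(1-v)/ε⌋:ℝ)) * ε ≤ 1 - v := by
        calc ((⌊(1-v)/ε⌋:ℝ)) * ε ≤ ((1-v)/ε) * ε := by nlinarith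
        _ = 1 - v := by field_simp
      nlinarith
    have hvpos : ε < v := by
      have : δ ≤ v := by linarith
      linarith
    have hjlt1 : (j:ℝ) * ε < 1 := by linarith
    have hfr := fr_nsmul_large j (by omega) (by rw [← hε]; exact hjlt1)
    refine ⟨j * q, Nat.one_le_iff_ne_zero.2 (Nat.mul_ne_zero (by omega) (by omega)), ?_, ?_, ?_⟩
    · have hjle : j ≤ (⌊1/ε⌋).toNat + 1 := by
        rw [hjdef]
        have hmono : ⌊(1-v)/ε⌋ ≤ ⌊1/ε⌋ := Int.floor_le_floor (by gcongr <;> linarith)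
        omega
      calc j * q ≤ ((⌊1/ε⌋).toNat + 1) * q := Nat.mul_le_mul_right _ hjle
      _ = q * ((⌊1/ε⌋).toNat + 1) := Nat.mul_comm _ _
    · rw [hfr]
      have : (j:ℝ) * (1 - fr q) ≤ (1 - v) + ε := by rw [← hε]; exact hjv
      linarith
    · rw [hfr]
      have : 1 - v < (j:ℝ) * (1 - fr q) := by rw [← hε]; exact hju
      linarith

lemma net (δ : ℝ) (hδ : 0 < δ) :
    ∃ M : ℕ, 1 ≤ M ∧ ∀ (s : ℕ) (u v : ℝ), 0 ≤ u → v ≤ 1 → u + δ ≤ v →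
      ∃ n : ℕ, s < n ∧ n ≤ s + M ∧ u < fr n ∧ fr n < v := by
  obtain ⟨M, hM1, hM⟩ := net0 (δ/2) (by linarith)
  refine ⟨M, hM1, ?_⟩
  intro s u v hu hv huv
  have hψ0 := fr_nonneg s
  have hψ1 := fr_lt_one s
  rcases le_or_gt (fr s) ((u+v)/2) with hc | hc
  · obtain ⟨j, hj1, hjM, hjl, hjr⟩ := hM ((u+v)/2 - fr s) (v - fr s)
      (by linarith) (by linarith) (by linarith)
    refine ⟨s + j, by omega, by omega, ?_, ?_⟩
    · rw [fr_add_of_lt (by linarith)]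
      linarith
    · rw [fr_add_of_lt (by linarith)]
      linarith
  · obtain ⟨j, hj1, hjM, hjl, hjr⟩ := hM (u + 1 - fr s) ((u+v)/2 + 1 - fr s)
      (by linarith) (by linarith) (by linarith)
    refine ⟨s + j, by omega, by omega, ?_, ?_⟩
    · rw [fr_add_of_ge (by linarith)]
      linarith
    · rw [fr_add_of_ge (by linarith)]
      linarith

lemma dense_orbit (u v : ℝ) (hu : 0 ≤ u) (hv : v ≤ 1) (huv : u < v) :
    ∃ m : ℕ, 1 ≤ m ∧ u < fr m ∧ fr m < v := by
  obtain ⟨M, _, hM⟩ := net0 (v - u) (by linarith)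
  obtain ⟨j, hj1, _, hjl, hjr⟩ := hM u v hu hv (by linarith)
  exact ⟨j, hj1, hjl, hjr⟩

lemma tendsto_div_of_bounds {c : ℕ → ℕ} {x : ℝ}
    (h : ∀ ε : ℝ, 0 < ε → ∃ N₀ : ℕ, ∀ N, N₀ ≤ N →
      ((x - ε) * N ≤ (c N : ℝ)) ∧ ((c N : ℝ) ≤ (x + ε) * N)) :
    Tendsto (fun N : ℕ => (c N : ℝ) / N) atTop (𝓝 x) := by
  rw [Metric.tendsto_atTop]
  intro ε hε
  obtain ⟨N₀, hN₀⟩ := h (ε/2) (by linarith)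
  refine ⟨max N₀ 1, ?_⟩
  intro N hN
  have h1 : N₀ ≤ N := le_trans (le_max_left _ _) hN
  have hN1 : 1 ≤ N := le_trans (le_max_right _ _) hN
  have hNr : (0:ℝ) < N := by exact_mod_cast hN1
  obtain ⟨hl, hr⟩ := hN₀ N h1
  have l1 : x - ε/2 ≤ (c N:ℝ)/N := (le_div_iff₀ hNr).2 hl
  have l2 : (c N:ℝ)/N ≤ x + ε/2 := (div_le_iff₀ hNr).2 hr
  rw [Real.dist_eq, abs_lt]
  constructor <;> linarith

lemma bounds_of_tendsto {c : ℕ → ℕ} {x : ℝ}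
    (h : Tendsto (fun N : ℕ => (c N : ℝ) / N) atTop (𝓝 x)) :
    ∀ ε : ℝ, 0 < ε → ∃ N₀ : ℕ, 1 ≤ N₀ ∧ ∀ N, N₀ ≤ N →
      ((x - ε) * N ≤ (c N : ℝ)) ∧ ((c N : ℝ) ≤ (x + ε) * N) := by
  intro ε hε
  obtain ⟨N₀, hN₀⟩ := Metric.tendsto_atTop.1 h ε hε
  refine ⟨max N₀ 1, le_max_right _ _, ?_⟩
  intro N hN
  have h1 : N₀ ≤ N := le_trans (le_max_left _ _) hN
  have hN1 : 1 ≤ N := le_trans (le_max_right _ _) hN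
  have hNr : (0:ℝ) < N := by exact_mod_cast hN1
  have hd := hN₀ N h1
  rw [Real.dist_eq, abs_lt] at hd
  constructor
  · have := (le_div_iff₀ hNr).1 (by linarith [hd.1] : x - ε ≤ (c N:ℝ)/N)
    linarith
  · have := (div_le_iff₀ hNr).1 (by linarith [hd.2] : (c N:ℝ)/N ≤ x + ε)
    linarith

lemma tendsto_cnt_B (x : ℝ) (h0 : 0 ≤ x) (h1 : x ≤ 1) :
    Tendsto (fun N : ℕ => (cnt (B x) N : ℝ) / N) atTop (𝓝 x) := by
  rcases eq_or_lt_of_le h0 with rfl | hx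
  · have hB : B (0:ℝ) = ∅ := B_nonpos le_rfl
    simp only [hB, cnt_empty, Nat.cast_zero, zero_div]
    exact tendsto_const_nhds
  apply tendsto_div_of_bounds
  intro ε hε
  have hlow : ∃ N₁ : ℕ, ∀ N, N₁ ≤ N → (x - ε) * N ≤ (cnt (B x) N : ℝ) := by
    rcases le_or_gt x ε with hxe | hxe
    · refine ⟨0, fun N _ => ?_⟩
      have : (x - ε) ≤ 0 := by linarith
      have hc : (0:ℝ) ≤ (cnt (B x) N : ℝ) := by positivity
      nlinarith [Nat.cast_nonneg (α := ℝ) N]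
    · obtain ⟨m, hm1, hml, hmr⟩ := dense_orbit (x - ε/2) x (by linarith) (by linarith) (by linarith)
      obtain ⟨C, hC0, hC⟩ := cnt_orbit m (by omega)
      obtain ⟨N₂, hN₂⟩ := exists_nat_ge (2*C/ε)
      refine ⟨N₂, fun N hN => ?_⟩
      have hNN : (2*C/ε) ≤ (N:ℝ) := le_trans hN₂ (by exact_mod_cast hN)
      have hCe : C ≤ (ε/2) * N := by
        rw [div_le_iff₀ hε] at hNN
        nlinarith
      have hmc := hC N
      rw [abs_le] at hmc
      have hsub : cnt (B (fr m)) N ≤ cnt (B x) N := cnt_mono (B_mono (le_of_lt hmr)) N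
      have : (N:ℝ) * fr m - C ≤ cnt (B (fr m)) N := by linarith [hmc.1]
      have hNn : (0:ℝ) ≤ N := Nat.cast_nonneg _
      have : (x - ε) * N ≤ (N:ℝ) * fr m - C := by nlinarith
      calc (x - ε) * N ≤ (N:ℝ) * fr m - C := this
        _ ≤ (cnt (B (fr m)) N : ℝ) := by linarith [hmc.1]
        _ ≤ (cnt (B x) N : ℝ) := by exact_mod_cast hsub
  have hup : ∃ N₁ : ℕ, ∀ N, N₁ ≤ N → (cnt (B x) N : ℝ) ≤ (x + ε) * N := by
    rcases le_or_gt 1 (x + ε) with hxe | hxe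
    · refine ⟨0, fun N _ => ?_⟩
      have := cnt_le (B x) N
      have h2 : (cnt (B x) N : ℝ) ≤ N := by exact_mod_cast this
      nlinarith [Nat.cast_nonneg (α := ℝ) N]
    · obtain ⟨m, hm1, hml, hmr⟩ := dense_orbit x (x + ε/2) (by linarith) (by linarith) (by linarith)
      obtain ⟨C, hC0, hC⟩ := cnt_orbit m (by omega)
      obtain ⟨N₂, hN₂⟩ := exists_nat_ge (2*C/ε)
      refine ⟨N₂, fun N hN => ?_⟩
      have hNN : (2*C/ε) ≤ (N:ℝ) := le_trans hN₂ (by exact_mod_cast hN)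
      have hCe : C ≤ (ε/2) * N := by
        rw [div_le_iff₀ hε] at hNN
        nlinarith
      have hmc := hC N
      rw [abs_le] at hmc
      have hsub : cnt (B x) N ≤ cnt (B (fr m)) N := cnt_mono (B_mono (le_of_lt hml)) N
      have hNn : (0:ℝ) ≤ N := Nat.cast_nonneg _
      calc (cnt (B x) N : ℝ) ≤ (cnt (B (fr m)) N : ℝ) := by exact_mod_cast hsub
        _ ≤ (N:ℝ) * fr m + C := by linarith [hmc.2]
        _ ≤ (x + ε) * N := by nlinarith
  obtain ⟨Na, hNa⟩ := hlow
  obtain ⟨Nb, hNb⟩ := hup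
  exact ⟨max Na Nb, fun N hN => ⟨hNa N (le_trans (le_max_left _ _) hN), hNb N (le_trans (le_max_right _ _) hN)⟩⟩

lemma cover_main {α γ : ℝ} (hα : 0 < α) (hαγ : α ≤ γ) (hγ1 : γ ≤ 1) (R : Set ℕ)
    (hNP : ∀ δ : ℝ, 0 < δ → ∃ Mb : ℕ, ∀ u v : ℝ, 0 ≤ u → v ≤ γ → u + δ ≤ v →
      ∃ q : ℕ, q ∈ R ∧ 1 ≤ q ∧ q ≤ Mb ∧ u < fr q ∧ fr q < v) :
    ∀ κ : ℝ, 0 < κ → ∃ N₁ : ℕ, ∀ n : ℕ, N₁ ≤ n → κ < fr n → fr n < α + γ - κ →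
      n ∈ B α + R := by
  intro κ hκ
  obtain ⟨Mb, hMb⟩ := hNP (min κ α) (lt_min hκ hα)
  refine ⟨Mb + 1, ?_⟩
  intro n hn hl hr
  have hm1 : min κ α ≤ κ := min_le_left _ _
  have hm2 : min κ α ≤ α := min_le_right _ _
  have hwin : max (fr n - α) 0 + min κ α ≤ min (fr n) γ := by
    rcases max_cases (fr n - α) 0 with ⟨h1, h2⟩ | ⟨h1, h2⟩ <;>
      rcases min_cases (fr n) γ with ⟨h3, h4⟩ | ⟨h3, h4⟩ <;> rw [h1, h3] <;> linarith
  obtain ⟨q, hqR, hq1, hqMb, hql, hqr⟩ :=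
    hMb (max (fr n - α) 0) (min (fr n) γ) (le_max_right _ _) (min_le_right _ _) hwin
  have hqψ : fr q < fr n := lt_of_lt_of_le hqr (min_le_left _ _)
  have hqn : q < n := by omega
  have hx := fr_sub (le_of_lt hqn) hqψ
  have hxα : fr (n - q) < α := by
    rw [hx]
    have : fr n - α < fr q := lt_of_le_of_lt (le_max_left _ _) hql
    linarith
  have hmem : (n - q) ∈ B α := ⟨by omega, hxα⟩
  have heq : (n - q) + q = n := by omega
  rw [← heq]
  exact Set.add_mem_add hmem hqR

section chunks
variable (Lf : ℕ → ℕ)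

def Tt (m : ℕ) : ℕ := ∑ j ∈ Finset.range (m + 1), (Lf j + 1)

lemma Tt_pos (m : ℕ) : 1 ≤ Tt Lf m := by
  unfold Tt
  calc 1 ≤ Lf 0 + 1 := by omega
  _ ≤ _ := Finset.single_le_sum (f := fun j => Lf j + 1) (by intro i _; omega)
      (Finset.mem_range.2 (by omega))

lemma Tt_mono : Monotone (Tt Lf) := by
  intro a b hab
  unfold Tt
  apply Finset.sum_le_sum_of_subset
  intro x hx
  rw [Finset.mem_range] at hx ⊢
  omega

def sg : ℕ → ℕ
  | 0 => (Tt Lf 0) ^ 2 + 1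
  | m + 1 => sg m + Lf m + (Tt Lf 0) ^ 2 + ((m + 2) * Tt Lf (m + 1)) ^ 2 + 2

lemma sg_zero : sg Lf 0 = (Tt Lf 0)^2 + 1 := rfl
lemma sg_succ (m : ℕ) :
    sg Lf (m+1) = sg Lf m + Lf m + (Tt Lf 0)^2 + ((m+2) * Tt Lf (m+1))^2 + 2 := rfl

lemma sg_succ_ge (m : ℕ) : sg Lf m + Lf m + sg Lf 0 + 1 ≤ sg Lf (m+1) := by
  rw [sg_succ, sg_zero]
  generalize ((m+2) * Tt Lf (m+1))^2 = X
  omega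

lemma sg_ge_sq (m : ℕ) : ((m+1) * Tt Lf m)^2 ≤ sg Lf m := by
  cases m with
  | zero => rw [sg_zero]; simp
  | succ m =>
    rw [sg_succ]
    generalize ((m+2) * Tt Lf (m+1))^2 = X
    omega

lemma sg_strictMono : StrictMono (sg Lf) := by
  apply strictMono_nat_of_lt_succ
  intro m
  have := sg_succ_ge Lf m
  omega

lemma sg_ge_id (m : ℕ) : m + 1 ≤ sg Lf m := by
  induction m with
  | zero =>
    rw [sg_zero]
    omega
  | succ m ih =>
    have := sg_succ_ge Lf m
    omega

def Qset (γ : ℝ) : Set ℕ := {q | (∃ m, sg Lf m < q ∧ q ≤ sg Lf m + Lf m) ∧ fr q < γ}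

lemma Qset_pos (γ : ℝ) : ∀ q ∈ Qset Lf γ, 1 ≤ q := by
  rintro q ⟨⟨m, hm, _⟩, _⟩
  have := sg_ge_id Lf m
  omega

lemma Qset_subset_B (γ : ℝ) : Qset Lf γ ⊆ B γ := by
  rintro q ⟨⟨m, hm, _⟩, hfr⟩
  exact ⟨by have := sg_ge_id Lf m; omega, hfr⟩

lemma cnt_Qset_sq (γ : ℝ) (j₀ N : ℕ) (h : sg Lf j₀ ≤ N) :
    (cnt (Qset Lf γ) N * (j₀ + 1)) ^ 2 ≤ N := by
  set P : ℕ → Prop := fun m => sg Lf m ≤ N with hP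
  set ms := Nat.findGreatest P N with hms
  have hj₀N : j₀ ≤ N := by have := sg_ge_id Lf j₀; omega
  have hj₀ms : j₀ ≤ ms := Nat.le_findGreatest hj₀N h
  have hmsP : P ms := Nat.findGreatest_spec hj₀N h
  have hcnt : cnt (Qset Lf γ) N ≤ Tt Lf ms := by
    have hsub : (Finset.Icc 1 N).filter (· ∈ Qset Lf γ) ⊆
        (Finset.range (ms+1)).biUnion (fun m => Finset.Icc (sg Lf m + 1) (sg Lf m + Lf m)) := by
      intro q hq
      rw [mem_cnt_filter] at hq
      obtain ⟨hq1, hqN, ⟨m, hm1, hm2⟩, _⟩ := hq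
      have hmN : m ≤ N := by have := sg_ge_id Lf m; omega
      have hmms : m ≤ ms := Nat.le_findGreatest hmN (by rw [hP]; omega)
      apply Finset.mem_biUnion.2
      exact ⟨m, Finset.mem_range.2 (by omega), Finset.mem_Icc.2 (by omega)⟩
    calc cnt (Qset Lf γ) N ≤ _ := Finset.card_le_card hsub
      _ ≤ ∑ m ∈ Finset.range (ms+1), (Finset.Icc (sg Lf m + 1) (sg Lf m + Lf m)).card :=
          Finset.card_biUnion_le
      _ ≤ ∑ m ∈ Finset.range (ms+1), (Lf m + 1) := by
          apply Finset.sum_le_sum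
          intro m _
          rw [Nat.card_Icc]
          omega
      _ = Tt Lf ms := rfl
  calc (cnt (Qset Lf γ) N * (j₀ + 1))^2 ≤ (Tt Lf ms * (ms + 1))^2 := by
        apply Nat.pow_le_pow_left
        exact Nat.mul_le_mul hcnt (by omega)
    _ = ((ms+1) * Tt Lf ms)^2 := by ring
    _ ≤ sg Lf ms := sg_ge_sq Lf ms
    _ ≤ N := hmsP

lemma tendsto_cnt_Qset_sq (γ : ℝ) :
    Tendsto (fun N : ℕ => ((cnt (Qset Lf γ) N : ℝ)) ^ 2 / N) atTop (𝓝 0) := by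
  rw [Metric.tendsto_atTop]
  intro ε hε
  obtain ⟨j₀, hj₀⟩ := exists_nat_one_div_lt hε
  refine ⟨max (sg Lf j₀) 1, ?_⟩
  intro N hN
  have h1 : sg Lf j₀ ≤ N := le_trans (le_max_left _ _) hN
  have hN1 : 1 ≤ N := le_trans (le_max_right _ _) hN
  have hNr : (0:ℝ) < N := by exact_mod_cast hN1
  have hkey := cnt_Qset_sq Lf γ j₀ N h1
  have hcast : ((cnt (Qset Lf γ) N : ℝ) * (j₀ + 1))^2 ≤ N := by exact_mod_cast hkey
  have hpos : (0:ℝ) < ((j₀:ℝ) + 1)^2 := by positivity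
  have hle : ((cnt (Qset Lf γ) N : ℝ))^2 / N ≤ 1 / ((j₀:ℝ)+1)^2 := by
    rw [div_le_div_iff₀ hNr hpos]
    nlinarith [hcast]
  have h2 : (1:ℝ) / ((j₀:ℝ)+1)^2 ≤ 1 / ((j₀:ℝ)+1) := by
    apply one_div_le_one_div_of_le (by positivity)
    nlinarith
  rw [Real.dist_eq, sub_zero, abs_of_nonneg (by positivity)]
  calc ((cnt (Qset Lf γ) N : ℝ))^2 / N ≤ 1/((j₀:ℝ)+1) := by linarith
  _ < ε := hj₀

lemma tendsto_cnt_Qset (γ : ℝ) :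
    Tendsto (fun N : ℕ => (cnt (Qset Lf γ) N : ℝ) / N) atTop (𝓝 0) := by
  have hup := (tendsto_cnt_Qset_sq Lf γ).add (tendsto_one_div_atTop_nhds_zero_nat)
  rw [add_zero] at hup
  apply tendsto_of_tendsto_of_tendsto_of_le_of_le tendsto_const_nhds hup
  · intro N
    positivity
  · intro N
    have h1 : (cnt (Qset Lf γ) N : ℝ) ≤ (cnt (Qset Lf γ) N : ℝ)^2 + 1 := by
      nlinarith [Nat.cast_nonneg (α := ℝ) (cnt (Qset Lf γ) N),
        sq_nonneg ((cnt (Qset Lf γ) N : ℝ) - 1)]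
    show (cnt (Qset Lf γ) N : ℝ) / N ≤ (cnt (Qset Lf γ) N : ℝ)^2 / N + 1 / N
    rcases Nat.eq_zero_or_pos N with rfl | hN
    · simp
    · have hNr : (0:ℝ) < N := by exact_mod_cast hN
      calc (cnt (Qset Lf γ) N : ℝ) / N ≤ ((cnt (Qset Lf γ) N : ℝ)^2 + 1) / N := by gcongr
      _ = (cnt (Qset Lf γ) N : ℝ)^2 / N + 1 / N := add_div _ _ _
lemma sg_band (k₀ n : ℕ) (h : sg Lf k₀ < n) :
    ∃ m, k₀ ≤ m ∧ sg Lf m < n ∧ n ≤ sg Lf (m+1) := by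
  set Pr : ℕ → Prop := fun k => sg Lf k < n with hPr
  have hk₀n : k₀ ≤ n := by have := sg_ge_id Lf k₀; omega
  have h1 : k₀ ≤ Nat.findGreatest Pr n := Nat.le_findGreatest hk₀n h
  have h2 : Pr (Nat.findGreatest Pr n) := Nat.findGreatest_spec hk₀n h
  refine ⟨Nat.findGreatest Pr n, h1, h2, ?_⟩
  by_contra hcon
  push_neg at hcon
  have hle : Nat.findGreatest Pr n + 1 ≤ n := by
    have := sg_ge_id Lf (Nat.findGreatest Pr n + 1)
    omega
  have hgr := Nat.findGreatest_is_greatest (P := Pr) (n := n)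
    (k := Nat.findGreatest Pr n + 1) (Nat.lt_succ_self _) hle
  exact hgr hcon

end chunks


lemma B_add_subset' (x y : ℝ) : B x + B y ⊆ B (x + y) := by
  rintro n hn
  rw [Set.mem_add] at hn
  obtain ⟨a, ha, b, hb, rfl⟩ := hn
  refine ⟨by have := ha.1; omega, ?_⟩
  rcases lt_or_ge (fr a + fr b) 1 with hc | hc
  · rw [fr_add_of_lt hc]
    linarith [ha.2, hb.2]
  · rw [fr_add_of_ge hc]
    linarith [ha.2, hb.2]

lemma div_nat_mono {a b : ℕ} (h : a ≤ b) (N : ℕ) : (a:ℝ)/N ≤ (b:ℝ)/N := by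
  rcases Nat.eq_zero_or_pos N with rfl | hN
  · simp
  · have hNr : (0:ℝ) < N := by exact_mod_cast hN
    have hab : (a:ℝ) ≤ (b:ℝ) := by exact_mod_cast h
    gcongr


lemma cnt_le_of_tail_subset {X Y : Set ℕ} {K : ℕ} (h : ∀ n, n ∈ X → K ≤ n → n ∈ Y) (N : ℕ) :
    cnt X N ≤ cnt Y N + K := by
  have hsub : (Finset.Icc 1 N).filter (· ∈ X) ⊆
      ((Finset.Icc 1 N).filter (· ∈ Y)) ∪ Finset.Icc 1 K := by
    intro n hn
    rw [mem_cnt_filter] at hn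
    rcases le_or_gt K n with hK | hK
    · exact Finset.mem_union_left _ (mem_cnt_filter.2 ⟨hn.1, hn.2.1, h n hn.2.2 hK⟩)
    · exact Finset.mem_union_right _ (Finset.mem_Icc.2 ⟨hn.1, by omega⟩)
  calc cnt X N ≤ _ := Finset.card_le_card hsub
    _ ≤ ((Finset.Icc 1 N).filter (· ∈ Y)).card + (Finset.Icc 1 K).card := Finset.card_union_le _ _
    _ ≤ cnt Y N + K := by
        unfold cnt
        rw [Nat.card_Icc]
        omega

lemma lower_density_of_cover {AA : Set ℕ} {β : ℝ} (hβ0 : 0 < β) (hβ1 : β ≤ 1)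
    (hcov : ∀ κ : ℝ, 0 < κ → ∃ N₁ : ℕ, ∀ n : ℕ, N₁ ≤ n → κ < fr n → fr n < β - κ → n ∈ AA) :
    ∀ ε : ℝ, 0 < ε → ∃ Nl : ℕ, ∀ N, Nl ≤ N → (β - ε) * N ≤ (cnt AA N : ℝ) := by
  intro ε hε
  set κ := min (ε/5) (β/2) with hκdef
  have hκ0 : 0 < κ := lt_min (by linarith) (by linarith)
  have hκε : κ ≤ ε/5 := min_le_left _ _
  have hκβ : κ ≤ β/2 := min_le_right _ _
  obtain ⟨N₁, hN₁⟩ := hcov κ hκ0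
  obtain ⟨Na, _, hNa⟩ := bounds_of_tendsto (tendsto_cnt_B (β - κ) (by linarith) (by linarith)) κ hκ0
  obtain ⟨Nb, _, hNb⟩ := bounds_of_tendsto (tendsto_cnt_B κ (by linarith) (by linarith)) κ hκ0
  obtain ⟨Nc, hNc⟩ := exists_nat_ge ((N₁ + 1 : ℝ)/κ)
  refine ⟨max (max Na Nb) Nc, fun N hN => ?_⟩
  have hNa' : Na ≤ N := le_trans (le_trans (le_max_left _ _) (le_max_left _ _)) hN
  have hNb' : Nb ≤ N := le_trans (le_trans (le_max_right _ _) (le_max_left _ _)) hN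
  have hNc' : (N₁ + 1 : ℝ)/κ ≤ N :=
    le_trans hNc (by exact_mod_cast le_trans (le_max_right _ _) hN)
  have hK : (N₁ + 1 : ℝ) ≤ κ * N := by
    rw [div_le_iff₀ hκ0] at hNc'
    linarith
  have h1 : cnt (B (β - κ)) N ≤ cnt (Bio κ (β - κ)) N + cnt (B κ) N + 1 := cnt_B_le_Bio κ (β-κ) N
  have h2 : cnt (Bio κ (β - κ)) N ≤ cnt AA N + N₁ := by
    apply cnt_le_of_tail_subset
    intro n hn hge
    exact hN₁ n hge hn.2.1 hn.2.2
  have h3 : (β - κ - κ) * N ≤ (cnt (B (β - κ)) N : ℝ) := (hNa N hNa').1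
  have h4 : (cnt (B κ) N : ℝ) ≤ (κ + κ) * N := (hNb N hNb').2
  have h1' : (cnt (B (β - κ)) N : ℝ) ≤ (cnt (Bio κ (β - κ)) N : ℝ) + (cnt (B κ) N : ℝ) + 1 := by
    exact_mod_cast h1
  have h2' : (cnt (Bio κ (β - κ)) N : ℝ) ≤ (cnt AA N : ℝ) + N₁ := by exact_mod_cast h2
  have : (β - 5*κ) * N ≤ (cnt AA N : ℝ) := by nlinarith [Nat.cast_nonneg (α := ℝ) N]
  have hNn : (0:ℝ) ≤ N := Nat.cast_nonneg _
  nlinarith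



/-! ### Main cases -/

lemma main_tight (α : ℝ) (h0 : 0 ≤ α) (h1 : α ≤ 1) :
    ∃ A : Set ℕ, (∀ n ∈ A, 0 < n) ∧
      Tendsto (fun N : ℕ => (cnt A N : ℝ) / N) atTop (𝓝 α) ∧
      Tendsto (fun N : ℕ => (cnt (A + A) N : ℝ) / N) atTop (𝓝 (min (2 * α) 1)) := by
  rcases eq_or_lt_of_le h0 with rfl | hα
  · refine ⟨∅, by simp, ?_, ?_⟩
    · have he : (fun N : ℕ => (cnt (∅ : Set ℕ) N : ℝ) / N) = fun _ => (0:ℝ) := by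
        funext N; simp [cnt_empty]
      rw [he]
      exact tendsto_const_nhds
    · have he2 : (∅ : Set ℕ) + ∅ = ∅ := by simp
      rw [he2]
      have he : (fun N : ℕ => (cnt (∅ : Set ℕ) N : ℝ) / N) = fun _ => (0:ℝ) := by
        funext N; simp [cnt_empty]
      rw [he]
      have : min (2 * (0:ℝ)) 1 = 0 := by norm_num
      rw [this]
      exact tendsto_const_nhds
  · refine ⟨B α, fun n hn => hn.1, tendsto_cnt_B α h0 h1, ?_⟩
    set β := min (2*α) 1 with hβdef
    have hβpos : 0 < β := lt_min (by linarith) one_pos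
    have hβ1 : β ≤ 1 := min_le_right _ _
    have hβ2α : β ≤ 2*α := min_le_left _ _
    have hNP : ∀ δ : ℝ, 0 < δ → ∃ Mb : ℕ, ∀ u v : ℝ, 0 ≤ u → v ≤ α → u + δ ≤ v →
        ∃ q : ℕ, q ∈ B α ∧ 1 ≤ q ∧ q ≤ Mb ∧ u < fr q ∧ fr q < v := by
      intro δ hδ
      obtain ⟨M, hM1, hM⟩ := net0 δ hδ
      refine ⟨M, ?_⟩
      intro u v hu hv huv
      obtain ⟨j, hj1, hjM, hjl, hjr⟩ := hM u v hu (le_trans hv h1) huv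
      exact ⟨j, ⟨hj1, lt_of_lt_of_le hjr hv⟩, hj1, hjM, hjl, hjr⟩
    have hcover := cover_main hα (le_refl α) h1 (B α) hNP
    apply tendsto_div_of_bounds
    intro ε hε
    have hupper : ∃ Nu : ℕ, ∀ N, Nu ≤ N → (cnt (B α + B α) N : ℝ) ≤ (β + ε)*N := by
      rcases le_or_gt (2*α) 1 with hc | hc
      · have hsub : B α + B α ⊆ B (2*α) := by
          have h2 := B_add_subset (x := α) (y := α) (by linarith)
          rwa [show α + α = 2*α by ring] at h2
        obtain ⟨Nu, _, hNu⟩ := bounds_of_tendsto (tendsto_cnt_B (2*α) (by linarith) hc) ε hε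
        refine ⟨Nu, fun N hN => ?_⟩
        have h2 := cnt_mono hsub N
        have hmin : β = 2*α := min_eq_left hc
        calc (cnt (B α + B α) N : ℝ) ≤ (cnt (B (2*α)) N : ℝ) := by exact_mod_cast h2
        _ ≤ (2*α + ε)*N := (hNu N hN).2
        _ = (β + ε)*N := by rw [hmin]
      · have hmin : β = 1 := min_eq_right (by linarith)
        refine ⟨0, fun N _ => ?_⟩
        have h2 : (cnt (B α + B α) N : ℝ) ≤ N := by exact_mod_cast cnt_le (B α + B α) N
        have hN0 : (0:ℝ) ≤ N := Nat.cast_nonneg _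
        rw [hmin]
        nlinarith
    have hlower := lower_density_of_cover hβpos hβ1 (fun κ hκ0 => by
      obtain ⟨N₁, hN₁⟩ := hcover κ hκ0
      exact ⟨N₁, fun n hn hl hr => hN₁ n hn hl (by linarith)⟩) ε hε
    obtain ⟨Nu, hNu⟩ := hupper
    obtain ⟨Nl, hNl⟩ := hlower
    exact ⟨max Nu Nl, fun N hN =>
      ⟨hNl N (le_trans (le_max_right _ _) hN), hNu N (le_trans (le_max_left _ _) hN)⟩⟩

lemma main_slack_pos (α β : ℝ) (h0 : 0 < α) (h2 : 2 * α < β) (h3 : β ≤ 1) :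
    ∃ A : Set ℕ, (∀ n ∈ A, 0 < n) ∧
      Tendsto (fun N : ℕ => (cnt A N : ℝ) / N) atTop (𝓝 α) ∧
      Tendsto (fun N : ℕ => (cnt (A + A) N : ℝ) / N) atTop (𝓝 β) := by
  set γ := β - α with hγdef
  have hγα : α < γ := by rw [hγdef]; linarith
  have hγ1 : γ ≤ 1 := by rw [hγdef]; linarith
  have hγ0 : 0 < γ := by linarith
  have hβ0 : 0 < β := by linarith
  choose Lf hLf1 hLf using fun m : ℕ => net (1/(m+1) : ℝ) (by positivity)
  set Q := Qset Lf γ with hQdef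
  set A := B α ∪ Q with hAdef
  have hApos : ∀ n ∈ A, 0 < n := by
    rintro n (hn | hn)
    · exact hn.1
    · exact Qset_pos Lf γ n hn
  have hcntA : ∀ N, cnt (B α) N ≤ cnt A N ∧ cnt A N ≤ cnt (B α) N + cnt Q N := by
    intro N
    exact ⟨cnt_mono (Set.subset_union_left) N, cnt_union_le _ _ N⟩
  have hdA : Tendsto (fun N : ℕ => (cnt A N : ℝ) / N) atTop (𝓝 α) := by
    have hup : Tendsto (fun N : ℕ => (cnt (B α) N : ℝ)/N + (cnt Q N : ℝ)/N) atTop (𝓝 α) := by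
      have := (tendsto_cnt_B α (le_of_lt h0) (by linarith)).add (tendsto_cnt_Qset Lf γ)
      rwa [add_zero] at this
    apply tendsto_of_tendsto_of_tendsto_of_le_of_le (tendsto_cnt_B α (le_of_lt h0) (by linarith)) hup
    · intro N
      exact div_nat_mono (hcntA N).1 N
    · intro N
      have h4 := (hcntA N).2
      calc (cnt A N : ℝ)/N ≤ ((cnt (B α) N + cnt Q N : ℕ) : ℝ)/N := div_nat_mono h4 N
      _ = (cnt (B α) N : ℝ)/N + (cnt Q N : ℝ)/N := by push_cast; rw [add_div]
  refine ⟨A, hApos, hdA, ?_⟩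
  -- upper inclusion
  have hAA : A + A ⊆ B β ∪ (Q + Q) := by
    rintro n hn
    rw [Set.mem_add] at hn
    obtain ⟨a, ha, b, hb, rfl⟩ := hn
    rcases ha with ha | ha <;> rcases hb with hb | hb
    · left
      apply B_mono (show α + α ≤ β by linarith)
      exact B_add_subset' α α (Set.add_mem_add ha hb)
    · left
      apply B_mono (show α + γ ≤ β by rw [hγdef]; linarith)
      exact B_add_subset' α γ (Set.add_mem_add ha (Qset_subset_B Lf γ hb))
    · left
      apply B_mono (show γ + α ≤ β by rw [hγdef]; linarith)
      exact B_add_subset' γ α (Set.add_mem_add (Qset_subset_B Lf γ ha) hb)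
    · right
      exact Set.add_mem_add ha hb
  -- coverage
  have hNP : ∀ δ : ℝ, 0 < δ → ∃ Mb : ℕ, ∀ u v : ℝ, 0 ≤ u → v ≤ γ → u + δ ≤ v →
      ∃ q : ℕ, q ∈ Q ∧ 1 ≤ q ∧ q ≤ Mb ∧ u < fr q ∧ fr q < v := by
    intro δ hδ
    obtain ⟨m, hm⟩ := exists_nat_one_div_lt hδ
    refine ⟨sg Lf m + Lf m, ?_⟩
    intro u v hu hv huv
    have hwin : u + 1/(m+1 : ℝ) ≤ v := by
      have : (1:ℝ)/(m+1) ≤ δ := le_of_lt (by exact_mod_cast hm)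
      linarith
    obtain ⟨q, hq1, hq2, hql, hqr⟩ := hLf m (sg Lf m) u v hu (le_trans hv hγ1) hwin
    refine ⟨q, ⟨⟨m, hq1, hq2⟩, lt_of_lt_of_le hqr hv⟩, ?_, hq2, hql, hqr⟩
    have := sg_ge_id Lf m
    omega
  have hcover := cover_main h0 (le_of_lt hγα) hγ1 Q hNP
  have hcov' : ∀ κ : ℝ, 0 < κ → ∃ N₁ : ℕ, ∀ n : ℕ, N₁ ≤ n → κ < fr n → fr n < β - κ →
      n ∈ A + A := by
    intro κ hκ
    obtain ⟨N₁, hN₁⟩ := hcover κ hκ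
    refine ⟨N₁, fun n hn hl hr => ?_⟩
    have hmem : n ∈ B α + Q := hN₁ n hn hl (by rw [hγdef] at *; linarith)
    apply Set.add_subset_add (Set.subset_union_left) (Set.subset_union_right)
    exact hmem
  apply tendsto_div_of_bounds
  intro ε hε
  obtain ⟨Nl, hNl⟩ := lower_density_of_cover hβ0 h3 hcov' ε hε
  -- upper bound
  obtain ⟨Na, _, hNa⟩ := bounds_of_tendsto (tendsto_cnt_B β (le_of_lt hβ0) h3) (ε/2) (by linarith)
  have hsqtend : Tendsto (fun N : ℕ => ((fun N => (cnt Q N)^2) N : ℝ) / N) atTop (𝓝 0) := by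
    have heq : (fun N : ℕ => ((fun N => (cnt Q N)^2) N : ℝ) / N)
        = fun N : ℕ => ((cnt Q N : ℝ))^2 / N := by
      funext N
      push_cast
      ring_nf
    rw [heq]
    exact tendsto_cnt_Qset_sq Lf γ
  obtain ⟨Nb, _, hNb⟩ := bounds_of_tendsto hsqtend (ε/2) (by linarith)
  refine ⟨max (max Na Nb) Nl, fun N hN => ?_⟩
  have hNa' : Na ≤ N := le_trans (le_trans (le_max_left _ _) (le_max_left _ _)) hN
  have hNb' : Nb ≤ N := le_trans (le_trans (le_max_right _ _) (le_max_left _ _)) hN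
  have hNl' : Nl ≤ N := le_trans (le_max_right _ _) hN
  constructor
  · exact hNl N hNl'
  · have hc1 : cnt (A + A) N ≤ cnt (B β) N + cnt (Q + Q) N := by
      calc cnt (A + A) N ≤ cnt (B β ∪ (Q + Q)) N := cnt_mono hAA N
      _ ≤ _ := cnt_union_le _ _ N
    have hc2 : cnt (Q + Q) N ≤ cnt Q N * cnt Q N :=
      cnt_add_le (Qset_pos Lf γ) (Qset_pos Lf γ) N
    have hb1 : (cnt (B β) N : ℝ) ≤ (β + ε/2) * N := (hNa N hNa').2
    have hb2 : ((cnt Q N : ℝ))^2 ≤ (0 + ε/2) * N := by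
      have := (hNb N hNb').2
      push_cast at this
      nlinarith [this]
    have : (cnt (A+A) N : ℝ) ≤ (cnt (B β) N : ℝ) + (cnt Q N : ℝ) * (cnt Q N : ℝ) := by
      have := le_trans hc1 (by omega : cnt (B β) N + cnt (Q + Q) N ≤ cnt (B β) N + cnt Q N * cnt Q N)
      exact_mod_cast this
    nlinarith [this, hb1, hb2]

set_option maxHeartbeats 1000000 in
lemma main_slack_zero (β : ℝ) (h0 : 0 < β) (h3 : β ≤ 1) :
    ∃ A : Set ℕ, (∀ n ∈ A, 0 < n) ∧
      Tendsto (fun N : ℕ => (cnt A N : ℝ) / N) atTop (𝓝 0) ∧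
      Tendsto (fun N : ℕ => (cnt (A + A) N : ℝ) / N) atTop (𝓝 β) := by
  set εf : ℕ → ℝ := fun j => β / 2^(j+2) with hεf
  have εf_pos : ∀ j, 0 < εf j := fun j => by rw [hεf]; positivity
  have εf_anti : ∀ {j k : ℕ}, j ≤ k → εf k ≤ εf j := by
    intro j k h
    rw [hεf]
    simp only
    rw [div_le_div_iff₀ (by positivity) (by positivity)]
    have h4 : (2:ℝ)^(j+2) ≤ 2^(k+2) := by
      apply pow_le_pow_right₀ (by norm_num)
      omega
    nlinarith
  have εf_double : ∀ j, 2 * εf (j+1) = εf j := by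
    intro j
    rw [hεf]
    simp only
    rw [pow_succ]
    field_simp
  have εf_le : ∀ j, εf j ≤ β/4 := by
    intro j
    calc εf j ≤ εf 0 := εf_anti (Nat.zero_le _)
    _ = β/4 := by rw [hεf]; norm_num
  have εf_exists : ∀ x : ℝ, 0 < x → ∃ j, εf j < x := by
    intro x hx
    obtain ⟨j, hj⟩ := pow_unbounded_of_one_lt (β/x) (by norm_num : (1:ℝ) < 2)
    refine ⟨j, ?_⟩
    rw [hεf]
    simp only
    rw [div_lt_iff₀ (by positivity)]
    rw [div_lt_iff₀ hx] at hj
    have h4 : (2:ℝ)^j ≤ 2^(j+2) := by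
      apply pow_le_pow_right₀ (by norm_num)
      omega
    nlinarith
  choose Lf hLf1 hLf using fun m : ℕ => net (εf (m+2)) (εf_pos _)
  set Q := Qset Lf β with hQdef
  set P : Set ℕ := {p | ∃ j, sg Lf j < p ∧ p ≤ sg Lf (j+1) ∧ fr p < εf j} with hPdef
  set A := P ∪ Q with hAdef
  have hPpos : ∀ p ∈ P, 1 ≤ p := by
    rintro p ⟨j, hj1, _, _⟩
    have := sg_ge_id Lf j
    omega
  have hPB : P ⊆ B (εf 0) := by
    rintro p ⟨j, hj1, _, hj3⟩
    exact ⟨hPpos p ⟨j, hj1, ‹_›, hj3⟩, lt_of_lt_of_le hj3 (εf_anti (Nat.zero_le _))⟩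
  have hPtail : ∀ j₀ : ℕ, ∀ p ∈ P, sg Lf (j₀+1) + 1 ≤ p → p ∈ B (εf (j₀+1)) := by
    rintro j₀ p ⟨j, hj1, hj2, hj3⟩ hge
    refine ⟨by have := sg_ge_id Lf j; omega, ?_⟩
    have hjge : j₀ + 1 ≤ j := by
      by_contra hcon
      push_neg at hcon
      have : sg Lf (j+1) ≤ sg Lf (j₀+1) := (sg_strictMono Lf).monotone (by omega)
      omega
    exact lt_of_lt_of_le hj3 (εf_anti hjge)
  have hApos : ∀ n ∈ A, 0 < n := by
    rintro n (hn | hn)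
    · exact hPpos n hn
    · exact Qset_pos Lf β n hn
  -- density of A is 0
  have hdA : Tendsto (fun N : ℕ => (cnt A N : ℝ) / N) atTop (𝓝 0) := by
    apply tendsto_div_of_bounds
    intro ε hε
    obtain ⟨j₁, hj₁⟩ := εf_exists (ε/4) (by linarith)
    set K := sg Lf (j₁+1) + 1 with hK
    obtain ⟨Na, _, hNa⟩ := bounds_of_tendsto
      (tendsto_cnt_B (εf (j₁+1)) (εf_pos _).le (by linarith [εf_le (j₁+1), h3])) (ε/4) (by linarith)
    obtain ⟨Nb, _, hNb⟩ := bounds_of_tendsto (tendsto_cnt_Qset Lf β) (ε/4) (by linarith)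
    obtain ⟨Nc, hNc⟩ := exists_nat_ge ((K : ℝ) * 4 / ε)
    refine ⟨max (max Na Nb) Nc, fun N hN => ?_⟩
    have hNa' : Na ≤ N := le_trans (le_trans (le_max_left _ _) (le_max_left _ _)) hN
    have hNb' : Nb ≤ N := le_trans (le_trans (le_max_right _ _) (le_max_left _ _)) hN
    have hNc' : ((K:ℝ) * 4 / ε) ≤ N := le_trans hNc (by exact_mod_cast le_trans (le_max_right _ _) hN)
    have hKN : (K:ℝ) ≤ (ε/4) * N := by
      rw [div_le_iff₀ (by linarith : (0:ℝ) < ε)] at hNc'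
      nlinarith
    constructor
    · have : (0:ℝ) ≤ (cnt A N : ℝ) := Nat.cast_nonneg _
      nlinarith [Nat.cast_nonneg (α := ℝ) N]
    · have hc1 : cnt A N ≤ cnt P N + cnt Q N := cnt_union_le _ _ N
      have hc2 : cnt P N ≤ cnt (B (εf (j₁+1))) N + K :=
        cnt_le_of_tail_subset (fun n hn hge => hPtail j₁ n hn (by omega)) N
      have hb1 : (cnt (B (εf (j₁+1))) N : ℝ) ≤ (εf (j₁+1) + ε/4) * N := (hNa N hNa').2
      have hb2 : (cnt Q N : ℝ) ≤ (0 + ε/4) * N := (hNb N hNb').2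
      have he1 : (cnt A N : ℝ) ≤ (cnt P N : ℝ) + (cnt Q N : ℝ) := by exact_mod_cast hc1
      have he2 : (cnt P N : ℝ) ≤ (cnt (B (εf (j₁+1))) N : ℝ) + K := by exact_mod_cast hc2
      have hNn : (0:ℝ) ≤ N := Nat.cast_nonneg _
      have hεN : εf (j₁+1) * N ≤ (ε/4) * N := by
        have : εf (j₁+1) ≤ εf j₁ := εf_anti (by omega)
        nlinarith [hj₁]
      nlinarith
  refine ⟨A, hApos, hdA, ?_⟩
  -- coverage
  have hcovb : ∀ κ : ℝ, 0 < κ → ∃ N₁ : ℕ, ∀ n : ℕ, N₁ ≤ n → κ < fr n → fr n < β - κ →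
      n ∈ A + A := by
    intro κ hκ
    obtain ⟨m₀, hm₀⟩ := εf_exists (κ/2) (by linarith)
    refine ⟨sg Lf (m₀ + 1) + 1, ?_⟩
    intro n hn hl hr
    obtain ⟨m1, hm1a, hm1b, hm1c⟩ := sg_band Lf (m₀+1) n (by omega)
    have hm1pos : 1 ≤ m1 := by omega
    set m := m1 - 1 with hmdef
    have hmm : m + 1 = m1 := by omega
    have hmge : m₀ ≤ m := by omega
    have hε'pos : 0 < εf (m+2) := εf_pos _
    have hε'κ : 2 * εf (m+2) < κ := by
      have h4 : 2 * εf (m+2) = εf (m+1) := εf_double _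
      have h5 : εf (m+1) ≤ εf m₀ := εf_anti (by omega)
      linarith
    obtain ⟨q, hq0, hq2, hql, hqr⟩ := hLf m (sg Lf m) (fr n - 2*εf (m+2)) (fr n - εf (m+2))
      (by linarith) (by linarith [fr_lt_one n]) (by linarith)
    have hqQ : q ∈ Q := by
      refine ⟨⟨m, hq0, hq2⟩, ?_⟩
      have : fr n < β := by linarith
      linarith
    have hqn : q < n := by
      have h5 := sg_succ_ge Lf m
      rw [hmm] at h5
      omega
    have hfrq : fr q < fr n := by linarith
    have hfp : fr (n - q) = fr n - fr q := fr_sub (le_of_lt hqn) hfrq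
    have hpgt : sg Lf 0 < n - q := by
      have h5 := sg_succ_ge Lf m
      rw [hmm] at h5
      omega
    have hple : n - q ≤ sg Lf (m+2) := by
      have : n ≤ sg Lf (m+2) := by
        have : sg Lf (m1 + 1) = sg Lf (m+2) := by rw [← hmm]
        omega
      omega
    obtain ⟨j, hj0, hja, hjb⟩ := sg_band Lf 0 (n - q) hpgt
    have hjm : j ≤ m+1 := by
      by_contra hcon
      push_neg at hcon
      have : sg Lf (m+2) ≤ sg Lf j := (sg_strictMono Lf).monotone (by omega)
      omega
    have hpP : (n - q) ∈ P := by
      refine ⟨j, hja, hjb, ?_⟩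
      have h6 : 2 * εf (m+2) = εf (m+1) := εf_double _
      have h7 : εf (m+1) ≤ εf j := εf_anti (by omega)
      rw [hfp]
      linarith
    have heq : (n - q) + q = n := by omega
    rw [← heq]
    exact Set.add_mem_add (Set.mem_union_left _ hpP) (Set.mem_union_right _ hqQ)
  apply tendsto_div_of_bounds
  intro ε hε
  obtain ⟨Nl, hNl⟩ := lower_density_of_cover h0 h3 hcovb ε hε
  -- upper
  obtain ⟨j₀, hj₀⟩ := εf_exists (ε/4) (by linarith)
  set K := sg Lf (j₀+1) with hKdef
  set Pe := P ∩ Set.Icc 1 K with hPe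
  set Pl := P \ Set.Icc 1 K with hPl
  have hPeIcc : Pe ⊆ Set.Icc 1 K := Set.inter_subset_right
  have hPePos : ∀ p ∈ Pe, 1 ≤ p := fun p hp => hPpos p hp.1
  have hPlB : Pl ⊆ B (εf (j₀+1)) := by
    rintro p ⟨hp, hnot⟩
    apply hPtail j₀ p hp
    have h1p : 1 ≤ p := hPpos p hp
    rw [Set.mem_Icc] at hnot
    push_neg at hnot
    have := hnot h1p
    omega
  have hQB : Q ⊆ B β := Qset_subset_B Lf β
  have hup : A + A ⊆ B (β + εf (j₀+1)) ∪ ((Pe + Q) ∪ (Q + Pe) ∪ (Q + Q)) := by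
    rintro n hn
    rw [Set.mem_add] at hn
    obtain ⟨a, ha, b, hb, rfl⟩ := hn
    rcases ha with ha | ha <;> rcases hb with hb | hb
    · left
      apply B_mono (show εf 0 + εf 0 ≤ β + εf (j₀+1) by
        have h5 := εf_le 0
        have h6 := εf_pos (j₀+1)
        linarith)
      exact B_add_subset' _ _ (Set.add_mem_add (hPB ha) (hPB hb))
    · rcases Classical.em (a ∈ Set.Icc 1 K) with hK' | hK'
      · right; left; left
        exact Set.add_mem_add ⟨ha, hK'⟩ hb
      · left
        apply B_mono (show εf (j₀+1) + β ≤ β + εf (j₀+1) by linarith)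
        exact B_add_subset' _ _ (Set.add_mem_add (hPlB ⟨ha, hK'⟩) (hQB hb))
    · rcases Classical.em (b ∈ Set.Icc 1 K) with hK' | hK'
      · right; left; right
        exact Set.add_mem_add ha ⟨hb, hK'⟩
      · left
        exact B_add_subset' _ _ (Set.add_mem_add (hQB ha) (hPlB ⟨hb, hK'⟩))
    · right; right
      exact Set.add_mem_add ha hb
  -- final upper bound assembly
  have hKpos : 1 ≤ K := by have := sg_ge_id Lf (j₀+1); rw [hKdef]; omega
  have hKr : (0:ℝ) < K := by exact_mod_cast hKpos
  have hεj : εf (j₀+1) < ε/4 := lt_of_le_of_lt (εf_anti (by omega)) hj₀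
  have hBbound : ∃ Na : ℕ, ∀ N, Na ≤ N → (cnt (B (β + εf (j₀+1))) N : ℝ) ≤ (β + ε/2) * N := by
    rcases le_or_gt (β + εf (j₀+1)) 1 with hc | hc
    · obtain ⟨Na, _, hNa⟩ := bounds_of_tendsto
        (tendsto_cnt_B (β + εf (j₀+1)) (by linarith [εf_pos (j₀+1)]) hc) (ε/4) (by linarith)
      refine ⟨Na, fun N hN => ?_⟩
      have h5 := (hNa N hN).2
      have hNn : (0:ℝ) ≤ N := Nat.cast_nonneg _
      have h8 : (β + εf (j₀+1) + ε/4)*(N:ℝ) ≤ (β + ε/2)*N := by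
        apply mul_le_mul_of_nonneg_right ?_ hNn
        linarith
      linarith
    · refine ⟨0, fun N _ => ?_⟩
      have h2 : (cnt (B (β + εf (j₀+1))) N : ℝ) ≤ N := by exact_mod_cast cnt_le _ N
      have hNn : (0:ℝ) ≤ N := Nat.cast_nonneg _
      have h8 : (1:ℝ)*(N:ℝ) ≤ (β + ε/2)*N := by
        apply mul_le_mul_of_nonneg_right ?_ hNn
        linarith
      linarith
  obtain ⟨Na, hNa⟩ := hBbound
  obtain ⟨Nb, _, hNb⟩ := bounds_of_tendsto (tendsto_cnt_Qset Lf β) (ε/(16*K)) (by positivity)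
  have hsqtend : Tendsto (fun N : ℕ => (((fun N => (cnt Q N)^2) N : ℕ) : ℝ) / N) atTop (𝓝 0) := by
    have heq : (fun N : ℕ => (((fun N => (cnt Q N)^2) N : ℕ) : ℝ) / N)
        = fun N : ℕ => ((cnt Q N : ℝ))^2 / N := by
      funext N
      push_cast
      ring_nf
    rw [heq]
    exact tendsto_cnt_Qset_sq Lf β
  obtain ⟨Nc, _, hNc⟩ := bounds_of_tendsto hsqtend (ε/4) (by linarith)
  refine ⟨max (max Na Nb) (max Nc Nl), fun N hN => ?_⟩
  have hNa' : Na ≤ N := le_trans (le_trans (le_max_left _ _) (le_max_left _ _)) hN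
  have hNb' : Nb ≤ N := le_trans (le_trans (le_max_right _ _) (le_max_left _ _)) hN
  have hNc' : Nc ≤ N := le_trans (le_trans (le_max_left _ _) (le_max_right _ _)) hN
  have hNl' : Nl ≤ N := le_trans (le_trans (le_max_right _ _) (le_max_right _ _)) hN
  constructor
  · exact hNl N hNl'
  · have hQpos := Qset_pos Lf β
    have hc1 : cnt (A + A) N ≤ cnt (B (β + εf (j₀+1))) N
        + (cnt (Pe + Q) N + cnt (Q + Pe) N + cnt (Q + Q) N) := by
      calc cnt (A + A) N ≤ cnt (B (β + εf (j₀+1)) ∪ ((Pe + Q) ∪ (Q + Pe) ∪ (Q + Q))) N :=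
            cnt_mono hup N
      _ ≤ cnt (B (β + εf (j₀+1))) N + cnt ((Pe + Q) ∪ (Q + Pe) ∪ (Q + Q)) N := cnt_union_le _ _ N
      _ ≤ _ := by
          have u1 := cnt_union_le ((Pe + Q) ∪ (Q + Pe)) (Q + Q) N
          have u2 := cnt_union_le (Pe + Q) (Q + Pe) N
          omega
    have hc2 : cnt (Pe + Q) N ≤ K * cnt Q N := by
      calc cnt (Pe + Q) N ≤ cnt Pe N * cnt Q N := cnt_add_le hPePos hQpos N
      _ ≤ K * cnt Q N := Nat.mul_le_mul_right _ (cnt_le_of_subset_Icc hPeIcc N)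
    have hc3 : cnt (Q + Pe) N ≤ cnt Q N * K := by
      calc cnt (Q + Pe) N ≤ cnt Q N * cnt Pe N := cnt_add_le hQpos hPePos N
      _ ≤ cnt Q N * K := Nat.mul_le_mul_left _ (cnt_le_of_subset_Icc hPeIcc N)
    have hc4 : cnt (Q + Q) N ≤ cnt Q N * cnt Q N := cnt_add_le hQpos hQpos N
    have hb1 : (cnt (B (β + εf (j₀+1))) N : ℝ) ≤ (β + ε/2) * N := hNa N hNa'
    have hb2 : (cnt Q N : ℝ) ≤ (0 + ε/(16*K)) * N := (hNb N hNb').2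
    have hb3 : ((cnt Q N : ℝ))^2 ≤ (0 + ε/4) * N := by
      have h6 := (hNc N hNc').2
      push_cast at h6
      nlinarith
    have he1 : (cnt (A+A) N : ℝ) ≤ (cnt (B (β + εf (j₀+1))) N : ℝ)
        + (K * (cnt Q N : ℝ) + (cnt Q N : ℝ) * K + (cnt Q N : ℝ) * (cnt Q N : ℝ)) := by
      have : cnt (A + A) N ≤ cnt (B (β + εf (j₀+1))) N
          + (K * cnt Q N + cnt Q N * K + cnt Q N * cnt Q N) := by omega
      exact_mod_cast this
    have hNn : (0:ℝ) ≤ N := Nat.cast_nonneg _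
    have hQn : (0:ℝ) ≤ (cnt Q N : ℝ) := Nat.cast_nonneg _
    have hKQ : (K:ℝ) * (cnt Q N : ℝ) ≤ (ε/16) * N := by
      have h7 : (cnt Q N : ℝ) ≤ (ε/(16*K)) * N := by linarith
      calc (K:ℝ) * (cnt Q N : ℝ) ≤ (K:ℝ) * ((ε/(16*K)) * N) := by nlinarith
      _ = (ε/16) * N := by field_simp
    nlinarith

end
end SD

/-- For any `(α, β) ∈ [0,1]²` with `β ≥ min(2α, 1)`, there is a set `A` of positive
integers whose asymptotic density is `α` and such that `A + A` has asymptotic density `β`. -/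
theorem stmt_0 (α β : ℝ) (hα : α ∈ Set.Icc (0:ℝ) 1) (hβ : β ∈ Set.Icc (0:ℝ) 1)
    (h : min (2 * α) 1 ≤ β) :
    ∃ A : Set ℕ, (∀ n ∈ A, 0 < n) ∧
      Tendsto (fun n : ℕ => ((A ∩ Set.Icc 1 n).ncard : ℝ) / n) atTop (𝓝 α) ∧
      Tendsto (fun n : ℕ => (((A + A) ∩ Set.Icc 1 n).ncard : ℝ) / n) atTop (𝓝 β) := by
  have key : ∃ A : Set ℕ, (∀ n ∈ A, 0 < n) ∧
      Tendsto (fun N : ℕ => (SD.cnt A N : ℝ) / N) atTop (𝓝 α) ∧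
      Tendsto (fun N : ℕ => (SD.cnt (A + A) N : ℝ) / N) atTop (𝓝 β) := by
    rcases eq_or_lt_of_le h with heq | hlt
    · obtain ⟨A, h1, h2, h3⟩ := SD.main_tight α hα.1 hα.2
      exact ⟨A, h1, h2, heq ▸ h3⟩
    · have h2α : 2 * α < β := by
        rcases min_cases (2 * α) 1 with ⟨hmin, _⟩ | ⟨hmin, hle⟩
        · rwa [hmin] at hlt
        · exact absurd (hmin ▸ hlt) (not_lt.2 hβ.2)
      rcases eq_or_lt_of_le hα.1 with h0 | h0
      · obtain ⟨A, h1, h2, h3⟩ := SD.main_slack_zero β (by linarith) hβ.2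
        subst h0
        exact ⟨A, h1, h2, h3⟩
      · exact SD.main_slack_pos α β h0 h2α hβ.2
  obtain ⟨A, h1, h2, h3⟩ := key
  refine ⟨A, h1, ?_, ?_⟩
  · simpa only [SD.ncard_inter_eq] using h2
  · simpa only [SD.ncard_inter_eq] using h3
end

section
/- Let (α,β) ∈ [0,1]² with β ≥ min(2α,1). Then there exists a measurable subset A ⊆ 𝕋 = ℝ/ℤ such that A + A is measurable, μ(A) = α and μ(A+A) = β, where μ is the Haar probability measure on 𝕋. -/
open MeasureTheory Pointwise Set

noncomputable section Stmt1Helpers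

namespace Stmt1

/-- The summand: a boolean digit at position `n` contributes `(1/3)^(n+1)`. -/
def dig (a : ℕ → Bool) (n : ℕ) : ℝ := if a n then (1/3 : ℝ)^(n+1) else 0

lemma dig_nonneg (a : ℕ → Bool) (n : ℕ) : 0 ≤ dig a n := by
  unfold dig; split_ifs <;> positivity

lemma dig_le (a : ℕ → Bool) (n : ℕ) : dig a n ≤ (1/3 : ℝ)^(n+1) := by
  unfold dig; split_ifs
  · exact le_refl _
  · positivity

lemma summable_geom13 : Summable (fun n : ℕ => ((1:ℝ)/3)^(n+1)) := by
  have h := (summable_geometric_of_lt_one (by norm_num : (0:ℝ) ≤ 1/3)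
    (by norm_num : (1:ℝ)/3 < 1)).mul_left (1/3 : ℝ)
  refine h.congr fun n => ?_
  rw [← pow_succ']

lemma tsum_geom13 : ∑' n : ℕ, ((1:ℝ)/3)^(n+1) = 1/2 := by
  have h : ∑' n : ℕ, ((1:ℝ)/3) * ((1:ℝ)/3)^n = (1/3 : ℝ) * (1 - 1/3)⁻¹ := by
    rw [tsum_mul_left, tsum_geometric_of_lt_one (by norm_num) (by norm_num)]
  have h2 : ∑' n : ℕ, ((1:ℝ)/3)^(n+1) = ∑' n : ℕ, ((1:ℝ)/3) * ((1:ℝ)/3)^n := by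
    congr 1; funext n; rw [← pow_succ']
  rw [h2, h]; norm_num

lemma summable_dig (a : ℕ → Bool) : Summable (dig a) :=
  Summable.of_nonneg_of_le (dig_nonneg a) (dig_le a) summable_geom13

/-- The value of a boolean digit sequence. -/
def f (a : ℕ → Bool) : ℝ := ∑' n, dig a n

lemma f_nonneg (a : ℕ → Bool) : 0 ≤ f a := tsum_nonneg (dig_nonneg a)

lemma f_le (a : ℕ → Bool) : f a ≤ 1/2 := by
  have := Summable.tsum_le_tsum (dig_le a) (summable_dig a) summable_geom13
  rwa [tsum_geom13] at this

lemma continuous_f : Continuous f := by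
  apply continuous_tsum (u := fun n : ℕ => ((1:ℝ)/3)^(n+1)) (f := fun n a => dig a n)
  · intro n
    have : (fun a : ℕ → Bool => dig a n) =
        (fun b : Bool => if b then ((1:ℝ)/3)^(n+1) else 0) ∘ (fun a => a n) := rfl
    rw [this]
    exact (continuous_of_discreteTopology).comp (continuous_apply n)
  · exact summable_geom13
  · intro n a
    rw [Real.norm_eq_abs, abs_of_nonneg (dig_nonneg a n)]
    exact dig_le a n

/-- A "Cantor-type" set: numbers whose ternary digits are all `0` or `1`. -/
def C : Set ℝ := Set.range f

lemma isCompact_C : IsCompact C := isCompact_range continuous_f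

lemma measurableSet_C : MeasurableSet C := isCompact_C.isClosed.measurableSet

lemma C_subset : C ⊆ Icc 0 (1/2) := by
  rintro _ ⟨a, rfl⟩
  exact ⟨f_nonneg a, f_le a⟩

/-! ### Ternary digit expansion -/

/-- Remainder sequence for greedy ternary expansion. -/
def rseq (x : ℝ) : ℕ → ℝ
  | 0 => x
  | n+1 => 3 * rseq x n - (min 2 ⌊3 * rseq x n⌋₊ : ℕ)

/-- Ternary digits (in `{0,1,2}`). -/
def dseq (x : ℝ) (n : ℕ) : ℕ := min 2 ⌊3 * rseq x n⌋₊

lemma rseq_succ (x : ℝ) (n : ℕ) : rseq x (n+1) = 3 * rseq x n - (dseq x n : ℕ) := rfl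

lemma dseq_le (x : ℝ) (n : ℕ) : dseq x n ≤ 2 := min_le_left _ _

lemma step_mem {t : ℝ} (h0 : 0 ≤ t) (h1 : t ≤ 1) :
    0 ≤ 3*t - (min 2 ⌊3*t⌋₊ : ℕ) ∧ 3*t - (min 2 ⌊3*t⌋₊ : ℕ) ≤ 1 := by
  have h3 : (0:ℝ) ≤ 3*t := by linarith
  have hfl : ((⌊3*t⌋₊ : ℕ) : ℝ) ≤ 3*t := Nat.floor_le h3
  have hminle : ((min 2 ⌊3*t⌋₊ : ℕ) : ℝ) ≤ 3*t := by
    have h' : (min 2 ⌊3*t⌋₊ : ℕ) ≤ ⌊3*t⌋₊ := min_le_right _ _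
    exact le_trans (by exact_mod_cast Nat.cast_le.mpr h') hfl
  refine ⟨by linarith, ?_⟩
  rcases le_or_gt ⌊3*t⌋₊ 2 with hc | hc
  · rw [min_eq_right hc]
    have := Nat.lt_floor_add_one (3*t)
    push_cast at this ⊢
    linarith
  · rw [min_eq_left (by omega : 2 ≤ ⌊3*t⌋₊)]
    push_cast
    linarith

lemma rseq_mem {x : ℝ} (hx : x ∈ Icc (0:ℝ) 1) (n : ℕ) : rseq x n ∈ Icc (0:ℝ) 1 := by
  induction n with
  | zero => exact hx
  | succ n ih =>
    have := step_mem ih.1 ih.2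
    exact ⟨this.1, this.2⟩

lemma partial_sum (x : ℝ) (n : ℕ) :
    x = (∑ i ∈ Finset.range n, (dseq x i : ℝ) * ((1:ℝ)/3)^(i+1)) + ((1:ℝ)/3)^n * rseq x n := by
  induction n with
  | zero => simp [rseq]
  | succ n ih =>
    rw [Finset.sum_range_succ]
    have h1 : ((1:ℝ)/3)^(n+1) * rseq x (n+1)
        = ((1:ℝ)/3)^n * rseq x n - (dseq x n : ℝ) * ((1:ℝ)/3)^(n+1) := by
      rw [rseq_succ, pow_succ]
      ring
    rw [h1]
    linarith [ih]

lemma summable_dterm (x : ℝ) : Summable (fun n => (dseq x n : ℝ) * ((1:ℝ)/3)^(n+1)) := by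
  apply Summable.of_nonneg_of_le (fun n => by positivity)
    (fun n => ?_) (summable_geom13.mul_left 2)
  have : (dseq x n : ℝ) ≤ 2 := by exact_mod_cast dseq_le x n
  have hp : (0:ℝ) ≤ ((1:ℝ)/3)^(n+1) := by positivity
  nlinarith

lemma hasSum_dterm {x : ℝ} (hx : x ∈ Icc (0:ℝ) 1) :
    HasSum (fun n => (dseq x n : ℝ) * ((1:ℝ)/3)^(n+1)) x := by
  rw [(summable_dterm x).hasSum_iff_tendsto_nat]
  have hps : ∀ n, ∑ i ∈ Finset.range n, (dseq x i : ℝ) * ((1:ℝ)/3)^(i+1)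
      = x - ((1:ℝ)/3)^n * rseq x n := fun n => by linarith [partial_sum x n]
  simp only [hps]
  have h0 : Filter.Tendsto (fun n : ℕ => ((1:ℝ)/3)^n * rseq x n) Filter.atTop (nhds 0) := by
    have hnn : ∀ n : ℕ, 0 ≤ ((1:ℝ)/3)^n * rseq x n := by
      intro n
      have := (rseq_mem hx n).1
      positivity
    have hub : ∀ n : ℕ, ((1:ℝ)/3)^n * rseq x n ≤ ((1:ℝ)/3)^n := by
      intro n
      have h1 := (rseq_mem hx n).2
      have hp : (0:ℝ) ≤ ((1:ℝ)/3)^n := by positivity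
      nlinarith
    exact squeeze_zero hnn hub
      (tendsto_pow_atTop_nhds_zero_of_lt_one (by norm_num) (by norm_num))
  have := Filter.Tendsto.sub (tendsto_const_nhds (x := x) (f := Filter.atTop (α := ℕ))) h0
  simpa using this

lemma Icc_subset_C_add_C : Icc (0:ℝ) 1 ⊆ C + C := by
  intro x hx
  set a : ℕ → Bool := fun n => decide (1 ≤ dseq x n) with ha
  set b : ℕ → Bool := fun n => decide (2 ≤ dseq x n) with hb
  have key : ∀ n, dig a n + dig b n = (dseq x n : ℝ) * ((1:ℝ)/3)^(n+1) := by
    intro n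
    have hd : dseq x n = 0 ∨ dseq x n = 1 ∨ dseq x n = 2 := by
      have := dseq_le x n; omega
    rcases hd with h | h | h <;>
      simp [dig, ha, hb, h] <;> ring
  have hsum : f a + f b = x := by
    have h1 : f a + f b = ∑' n, (dig a n + dig b n) :=
      (Summable.tsum_add (summable_dig a) (summable_dig b)).symm
    rw [h1]
    have h2 : ∑' n, (dig a n + dig b n) = ∑' n, (dseq x n : ℝ) * ((1:ℝ)/3)^(n+1) := by
      congr 1; funext n; exact key n
    rw [h2, (hasSum_dterm hx).tsum_eq]
  exact ⟨f a, ⟨a, rfl⟩, f b, ⟨b, rfl⟩, hsum⟩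

lemma C_add_C : C + C = Icc (0:ℝ) 1 := by
  apply subset_antisymm
  · rintro _ ⟨y, ⟨a, rfl⟩, z, ⟨b, rfl⟩, rfl⟩
    show f a + f b ∈ Icc (0:ℝ) 1
    refine ⟨add_nonneg (f_nonneg a) (f_nonneg b), ?_⟩
    have h1 := f_le a
    have h2 := f_le b
    linarith
  · exact Icc_subset_C_add_C

/-! ### C is null -/

lemma C_subset_cover (n : ℕ) :
    C ⊆ ⋃ v ∈ (Finset.univ : Finset (Fin n → Bool)),
      Icc (∑ i : Fin n, dig (fun k => if h : k < n then v ⟨k, h⟩ else false) i)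
          ((∑ i : Fin n, dig (fun k => if h : k < n then v ⟨k, h⟩ else false) i) + ((1:ℝ)/3)^n) := by
  rintro _ ⟨a, rfl⟩
  refine Set.mem_biUnion (Finset.mem_univ (fun i : Fin n => a i)) ?_
  have hdig : ∀ i : Fin n,
      dig (fun k => if h : k < n then (fun j : Fin n => a j) ⟨k, h⟩ else false) i = dig a i := by
    intro i
    simp [dig, i.isLt]
  have hsum_eq : (∑ i : Fin n, dig (fun k =>
      if h : k < n then (fun j : Fin n => a j) ⟨k, h⟩ else false) i)
      = ∑ i ∈ Finset.range n, dig a i := by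
    rw [Finset.sum_congr rfl (fun i _ => hdig i)]
    exact Fin.sum_univ_eq_sum_range (fun i => dig a i) n
  rw [hsum_eq]
  have hsplit : (∑ i ∈ Finset.range n, dig a i) + ∑' i, dig a (i + n) = f a :=
    Summable.sum_add_tsum_nat_add n (summable_dig a)
  have htail0 : 0 ≤ ∑' i, dig a (i + n) := tsum_nonneg (fun i => dig_nonneg a _)
  have htail1 : ∑' i, dig a (i + n) ≤ ((1:ℝ)/3)^n := by
    have hb : ∀ i, dig a (i + n) ≤ ((1:ℝ)/3)^n * ((1:ℝ)/3)^(i+1) := by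
      intro i
      calc dig a (i + n) ≤ ((1:ℝ)/3)^(i + n + 1) := dig_le a _
        _ = ((1:ℝ)/3)^n * ((1:ℝ)/3)^(i+1) := by ring
    calc ∑' i, dig a (i + n)
        ≤ ∑' i, ((1:ℝ)/3)^n * ((1:ℝ)/3)^(i+1) := by
          apply Summable.tsum_le_tsum hb ((summable_dig a).comp_injective (fun i j => by omega))
          exact summable_geom13.mul_left _
      _ = ((1:ℝ)/3)^n * (1/2) := by rw [tsum_mul_left, tsum_geom13]
      _ ≤ ((1:ℝ)/3)^n := by
          have : (0:ℝ) ≤ ((1:ℝ)/3)^n := by positivity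
          linarith
  constructor
  · linarith
  · linarith

lemma volume_C : volume C = 0 := by
  have hbound : ∀ n : ℕ, volume C ≤ ENNReal.ofReal (((2:ℝ)/3)^n) := by
    intro n
    calc volume C ≤ volume (⋃ v ∈ (Finset.univ : Finset (Fin n → Bool)),
          Icc (∑ i : Fin n, dig (fun k => if h : k < n then v ⟨k, h⟩ else false) i)
            ((∑ i : Fin n, dig (fun k => if h : k < n then v ⟨k, h⟩ else false) i) + ((1:ℝ)/3)^n)) :=
            measure_mono (C_subset_cover n)
      _ ≤ ∑ v ∈ (Finset.univ : Finset (Fin n → Bool)), volume (Icc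
            (∑ i : Fin n, dig (fun k => if h : k < n then v ⟨k, h⟩ else false) i)
            ((∑ i : Fin n, dig (fun k => if h : k < n then v ⟨k, h⟩ else false) i) + ((1:ℝ)/3)^n)) :=
            measure_biUnion_finset_le _ _
      _ = ∑ v ∈ (Finset.univ : Finset (Fin n → Bool)), ENNReal.ofReal (((1:ℝ)/3)^n) := by
            apply Finset.sum_congr rfl
            intro v _
            rw [Real.volume_Icc]
            congr 1
            ring
      _ = (Fintype.card (Fin n → Bool)) * ENNReal.ofReal (((1:ℝ)/3)^n) := by
            rw [Finset.sum_const, Finset.card_univ, nsmul_eq_mul]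
      _ = ENNReal.ofReal (((2:ℝ)/3)^n) := by
            rw [Fintype.card_fun, Fintype.card_bool, Fintype.card_fin]
            rw [← ENNReal.ofReal_natCast, ← ENNReal.ofReal_mul (by positivity)]
            congr 1
            push_cast
            rw [div_pow, div_pow]
            ring
  have htend : Filter.Tendsto (fun n : ℕ => ENNReal.ofReal (((2:ℝ)/3)^n))
      Filter.atTop (nhds 0) := by
    have := ENNReal.tendsto_ofReal
      (tendsto_pow_atTop_nhds_zero_of_lt_one (by norm_num : (0:ℝ) ≤ 2/3) (by norm_num))
    simpa using this
  have hle : volume C ≤ 0 :=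
    le_of_tendsto_of_tendsto' tendsto_const_nhds htend hbound
  exact le_antisymm hle zero_le

/-! ### The circle -/

lemma e_coe {x : ℝ} (hx : x ∈ Ioc (0:ℝ) 1) :
    (AddCircle.measurableEquivIoc 1 0) (↑x : UnitAddCircle)
      = ⟨x, by simpa using hx⟩ := by
  have : (AddCircle.measurableEquivIoc 1 0) (↑x : UnitAddCircle)
      = QuotientAddGroup.equivIocMod (by norm_num : (0:ℝ) < 1) 0 ↑x := rfl
  rw [this, QuotientAddGroup.equivIocMod_coe]
  exact Subtype.ext ((toIocMod_eq_self _).mpr (by simpa using hx))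

lemma coe_injOn {x y : ℝ} (hx : x ∈ Ioc (0:ℝ) 1) (hy : y ∈ Ioc (0:ℝ) 1)
    (hxy : (↑x : UnitAddCircle) = ↑y) : x = y := by
  have := congrArg (AddCircle.measurableEquivIoc 1 0) hxy
  rw [e_coe hx, e_coe hy] at this
  exact Subtype.mk_eq_mk.mp this

lemma image_coe_eq_preimage {S : Set ℝ} (hS1 : S ⊆ Ioc (0:ℝ) 1) :
    ((↑) '' S : Set UnitAddCircle)
      = (AddCircle.measurableEquivIoc 1 0) ⁻¹' (Subtype.val ⁻¹' S) := by
  ext z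
  constructor
  · rintro ⟨x, hxS, rfl⟩
    show ((AddCircle.measurableEquivIoc 1 0) (↑x : UnitAddCircle) : ℝ) ∈ S
    rw [e_coe (hS1 hxS)]
    exact hxS
  · intro hz
    refine ⟨((AddCircle.measurableEquivIoc 1 0) z : ℝ), hz, ?_⟩
    have h1 : (AddCircle.measurableEquivIoc 1 0).symm ((AddCircle.measurableEquivIoc 1 0) z)
        = z := (AddCircle.measurableEquivIoc 1 0).symm_apply_apply z
    have h2 : (((AddCircle.measurableEquivIoc 1 0) z : ℝ) : UnitAddCircle)
        = (AddCircle.measurableEquivIoc 1 0).symm ((AddCircle.measurableEquivIoc 1 0) z) := rfl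
    rw [h2, h1]

lemma measurable_image_Ioc {S : Set ℝ} (hS : MeasurableSet S) (hS1 : S ⊆ Ioc (0:ℝ) 1) :
    MeasurableSet ((↑) '' S : Set UnitAddCircle) := by
  rw [image_coe_eq_preimage hS1]
  exact (AddCircle.measurableEquivIoc 1 0).measurable (measurable_subtype_coe hS)

lemma volume_image_Ioc {S : Set ℝ} (hS : MeasurableSet S) (hS1 : S ⊆ Ioc (0:ℝ) 1) :
    volume ((↑) '' S : Set UnitAddCircle) = volume S := by
  have hm := measurable_image_Ioc hS hS1
  have hpre := (AddCircle.measurePreserving_mk 1 0).measure_preimage hm.nullMeasurableSet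
  have hpreim : (QuotientAddGroup.mk : ℝ → UnitAddCircle) ⁻¹' ((↑) '' S) ∩ Ioc 0 (0+1) = S := by
    ext x
    simp only [mem_inter_iff, mem_preimage, zero_add]
    constructor
    · rintro ⟨⟨s, hsS, hsx⟩, hxI⟩
      have : s = x := coe_injOn (hS1 hsS) hxI hsx
      exact this ▸ hsS
    · intro hxS
      exact ⟨⟨x, hxS, rfl⟩, hS1 hxS⟩
  rw [Measure.restrict_apply (AddCircle.measurable_mk' hm), hpreim] at hpre
  exact hpre.symm

lemma image_Icc {S : Set ℝ} (hS : MeasurableSet S) (hS1 : S ⊆ Icc (0:ℝ) 1) :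
    MeasurableSet ((↑) '' S : Set UnitAddCircle)
      ∧ volume ((↑) '' S : Set UnitAddCircle) = volume S := by
  classical
  set S' := S ∩ Ioc 0 1 with hS'def
  set S'' := if (0:ℝ) ∈ S then S' ∪ {1} else S' with hS''def
  have hS'm : MeasurableSet S' := hS.inter measurableSet_Ioc
  have hS''m : MeasurableSet S'' := by
    rw [hS''def]; split_ifs
    · exact hS'm.union (measurableSet_singleton 1)
    · exact hS'm
  have hS''sub : S'' ⊆ Ioc (0:ℝ) 1 := by
    rw [hS''def]; split_ifs
    · refine union_subset inter_subset_right ?_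
      intro x hx; rw [mem_singleton_iff] at hx; subst hx; exact ⟨by norm_num, le_refl _⟩
    · exact inter_subset_right
  have h10 : ((1:ℝ) : UnitAddCircle) = ((0:ℝ) : UnitAddCircle) := by
    have := AddCircle.coe_period (1:ℝ)
    simpa using this
  have himg : ((↑) '' S : Set UnitAddCircle) = (↑) '' S'' := by
    apply subset_antisymm
    · rintro _ ⟨x, hxS, rfl⟩
      by_cases hx0 : x = 0
      · subst hx0
        refine ⟨1, ?_, h10⟩
        rw [hS''def, if_pos hxS]
        exact Or.inr rfl
      · have hxI : x ∈ Ioc (0:ℝ) 1 := ⟨lt_of_le_of_ne (hS1 hxS).1 (Ne.symm hx0), (hS1 hxS).2⟩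
        refine ⟨x, ?_, rfl⟩
        rw [hS''def]
        split_ifs
        · exact Or.inl ⟨hxS, hxI⟩
        · exact ⟨hxS, hxI⟩
    · rintro _ ⟨x, hxS'', rfl⟩
      rw [hS''def] at hxS''
      by_cases h0 : (0:ℝ) ∈ S
      · rw [if_pos h0] at hxS''
        rcases hxS'' with hx | hx
        · exact ⟨x, hx.1, rfl⟩
        · rw [mem_singleton_iff] at hx; subst hx
          exact ⟨0, h0, h10.symm⟩
      · rw [if_neg h0] at hxS''
        exact ⟨x, hxS''.1, rfl⟩
  have hvol' : volume S' = volume S := by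
    apply le_antisymm (measure_mono inter_subset_left)
    have hsub : S ⊆ S' ∪ {0} := by
      intro x hx
      by_cases hx0 : x = 0
      · exact Or.inr (by simp [hx0])
      · exact Or.inl ⟨hx, ⟨lt_of_le_of_ne (hS1 hx).1 (Ne.symm hx0), (hS1 hx).2⟩⟩
    calc volume S ≤ volume (S' ∪ {0}) := measure_mono hsub
      _ ≤ volume S' + volume {0} := measure_union_le _ _
      _ = volume S' := by rw [Real.volume_singleton, add_zero]
  have hvol'' : volume S'' = volume S := by
    rw [hS''def]; split_ifs
    · rw [← hvol']
      apply le_antisymm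
      · calc volume (S' ∪ {1}) ≤ volume S' + volume {1} := measure_union_le _ _
          _ = volume S' := by rw [Real.volume_singleton, add_zero]
      · exact measure_mono subset_union_left
    · exact hvol'
  refine ⟨?_, ?_⟩
  · rw [himg]; exact measurable_image_Ioc hS''m hS''sub
  · rw [himg, volume_image_Ioc hS''m hS''sub, hvol'']

lemma image_coe_add (S T : Set ℝ) :
    ((↑) '' (S + T) : Set UnitAddCircle) = ((↑) '' S + (↑) '' T : Set UnitAddCircle) := by
  have := Set.image_add (QuotientAddGroup.mk' (AddSubgroup.zmultiples (1:ℝ)))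
    (s := S) (t := T)
  simpa [QuotientAddGroup.coe_mk'] using this

lemma surj_Icc : ((↑) '' (Icc (0:ℝ) 1) : Set UnitAddCircle) = Set.univ := by
  apply eq_univ_of_forall
  intro z
  obtain ⟨b, hb, hbz⟩ := AddCircle.eq_coe_Ico z
  exact ⟨b, ⟨hb.1, le_of_lt hb.2⟩, hbz⟩

end Stmt1

end Stmt1Helpers

open Stmt1

/-- For any `(α, β) ∈ [0,1]²` with `β ≥ min(2α, 1)`, there is a measurable subset `A` of the
circle `𝕋 = ℝ/ℤ` such that `A + A` is measurable, `μ(A) = α` and `μ(A + A) = β`, where `μ` is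
the Haar probability measure on `𝕋`. -/
theorem stmt_1 (α β : ℝ) (hα : α ∈ Set.Icc (0:ℝ) 1) (hβ : β ∈ Set.Icc (0:ℝ) 1)
    (h : min (2 * α) 1 ≤ β) :
    ∃ A : Set UnitAddCircle, MeasurableSet A ∧ MeasurableSet (A + A) ∧
      volume A = ENNReal.ofReal α ∧ volume (A + A) = ENNReal.ofReal β := by
  obtain ⟨hα0, hα1⟩ := hα
  obtain ⟨hβ0, hβ1⟩ := hβ
  rcases eq_or_lt_of_le hβ0 with hβz | hβpos
  · -- β = 0, hence α = 0
    have hαz : α = 0 := by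
      rcases min_le_iff.mp h with h2 | h2 <;> linarith
    refine ⟨∅, MeasurableSet.empty, ?_, ?_, ?_⟩
    · simp
    · simp [hαz]
    · simp [← hβz]
  · -- β > 0
    have hαβ : 2*α ≤ β ∨ β = 1 := by
      rcases min_le_iff.mp h with h2 | h2
      · exact Or.inl h2
      · exact Or.inr (le_antisymm hβ1 h2)
    have hαle2 : α ≤ β/2 ∨ β = 1 := by
      rcases hαβ with h2 | h2
      · exact Or.inl (by linarith)
      · exact Or.inr h2
    set S : Set ℝ := β • C ∪ Icc 0 α with hSdef
    have hβC_sub : β • C ⊆ Icc 0 (β/2) := by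
      rintro _ ⟨c, hc, rfl⟩
      obtain ⟨hc0, hc1⟩ := C_subset hc
      constructor
      · simpa using mul_nonneg (le_of_lt hβpos) hc0
      · have : β * c ≤ β * (1/2) := mul_le_mul_of_nonneg_left hc1 (le_of_lt hβpos)
        simpa [smul_eq_mul] using by linarith
    have hβC_meas : MeasurableSet (β • C) :=
      ((isCompact_C.smul β).isClosed).measurableSet
    have hβC_vol : volume (β • C) = 0 := by
      rw [Measure.addHaar_smul volume β C, volume_C, mul_zero]
    have hS_meas : MeasurableSet S := hβC_meas.union measurableSet_Icc
    have hS_sub : S ⊆ Icc (0:ℝ) 1 := by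
      apply union_subset
      · exact hβC_sub.trans (Icc_subset_Icc (le_refl _) (by linarith))
      · exact Icc_subset_Icc (le_refl _) hα1
    have hS_vol : volume S = ENNReal.ofReal α := by
      have hle : volume S = volume (Icc 0 α) := by
        apply le_antisymm
        · calc volume S ≤ volume (β • C) + volume (Icc 0 α) := measure_union_le _ _
            _ = volume (Icc 0 α) := by rw [hβC_vol, zero_add]
        · exact measure_mono subset_union_right
      rw [hle, Real.volume_Icc, sub_zero]
    have hkey : ((↑) '' S + (↑) '' S : Set UnitAddCircle) = (↑) '' (Icc (0:ℝ) β) := by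
      rw [← image_coe_add]
      rcases hαle2 with hc | hc
      · -- 2α ≤ β : S + S = Icc 0 β exactly
        have hss : S + S = Icc (0:ℝ) β := by
          apply subset_antisymm
          · rw [hSdef, Set.union_add, Set.add_union, Set.add_union]
            refine union_subset (union_subset ?_ ?_) (union_subset ?_ ?_)
            · exact (Set.add_subset_add hβC_sub hβC_sub).trans
                ((Set.Icc_add_Icc_subset _ _ _ _).trans
                  (Icc_subset_Icc (by norm_num) (by linarith)))
            · exact (Set.add_subset_add hβC_sub (Set.Subset.refl _)).trans
                ((Set.Icc_add_Icc_subset _ _ _ _).trans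
                  (Icc_subset_Icc (by norm_num) (by linarith)))
            · exact (Set.add_subset_add (Set.Subset.refl _) hβC_sub).trans
                ((Set.Icc_add_Icc_subset _ _ _ _).trans
                  (Icc_subset_Icc (by norm_num) (by linarith)))
            · exact (Set.Icc_add_Icc_subset _ _ _ _).trans
                (Icc_subset_Icc (by norm_num) (by linarith))
          · -- Icc 0 β = β • (C + C) ⊆ β•C + β•C ⊆ S + S
            have h1 : Icc (0:ℝ) β = β • Icc (0:ℝ) 1 := by
              rw [LinearOrderedField.smul_Icc hβpos]
              simp
            have h2 : β • Icc (0:ℝ) 1 ⊆ β • C + β • C := by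
              rw [← C_add_C]
              rintro _ ⟨y, hy, rfl⟩
              obtain ⟨c1, hc1, c2, hc2, rfl⟩ := hy
              exact ⟨β • c1, ⟨c1, hc1, rfl⟩, β • c2, ⟨c2, hc2, rfl⟩, by
                simp [smul_eq_mul]; ring⟩
            rw [h1]
            refine h2.trans (Set.add_subset_add ?_ ?_) <;>
              · rw [hSdef]; exact subset_union_left
        rw [hss]
      · -- β = 1 : both sides are the full circle
        subst hc
        rw [surj_Icc]
        apply eq_univ_of_univ_subset
        rw [← surj_Icc]
        apply image_mono
        rw [← C_add_C]
        have hCS : C ⊆ S := by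
          intro x hx
          rw [hSdef]
          left
          rw [one_smul]
          exact hx
        exact Set.add_subset_add hCS hCS
    have hIccβ_sub : Icc (0:ℝ) β ⊆ Icc (0:ℝ) 1 := Icc_subset_Icc le_rfl hβ1
    obtain ⟨hA_meas, hA_vol⟩ := image_Icc hS_meas hS_sub
    obtain ⟨hB_meas, hB_vol⟩ := image_Icc measurableSet_Icc hIccβ_sub
    refine ⟨(↑) '' S, hA_meas, ?_, ?_, ?_⟩
    · rw [hkey]; exact hB_meas
    · rw [hA_vol, hS_vol]
    · rw [hkey, hB_vol, Real.volume_Icc, sub_zero]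
end

section
/- Let λ be an irrational real number and let f : [0,1] → ℝ be a bounded function whose set of discontinuity points has Lebesgue measure zero (i.e., f is Riemann-integrable). Then (1/x) ∑_{1 ≤ n ≤ x} f({λn}) converges to ∫₀¹ f(t) dt as x → ∞, where {y} denotes the fractional part of the real number y. -/
open Filter Topology MeasureTheory
open Set Real

local notation "𝕊" => AddCircle (1:ℝ)

noncomputable section WeylAux

instance weyl_prob : IsProbabilityMeasure (volume : Measure 𝕊) :=
  ⟨by rw [AddCircle.measure_univ]; norm_num⟩

instance weyl_icc_nonempty : Nonempty (Icc (0:ℝ) 1) := ⟨⟨0, by norm_num⟩⟩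

lemma cont_integrable (φ : C(𝕊, ℂ)) : Integrable (fun z => φ z) (volume : Measure 𝕊) :=
  φ.continuous.integrable_of_hasCompactSupport (HasCompactSupport.of_compactSpace _)


lemma geom_avg (z : ℂ) (hz : ‖z‖ = 1) (h1 : z ≠ 1) :
    Tendsto (fun N : ℕ => (N:ℂ)⁻¹ * ∑ n ∈ Finset.Icc 1 N, z ^ n) atTop (𝓝 0) := by
  have hne : ‖z - 1‖ ≠ 0 := by simpa [sub_eq_zero] using h1
  have hpos : 0 < ‖z - 1‖ := lt_of_le_of_ne (norm_nonneg _) (Ne.symm hne)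
  refine squeeze_zero_norm (a := fun N : ℕ => 2 / ‖z - 1‖ * (N:ℝ)⁻¹) (fun N => ?_) ?_
  · have hsum : ∑ n ∈ Finset.Icc 1 N, z ^ n = z * ((z ^ N - 1) / (z - 1)) := by
      rw [← Finset.Ico_add_one_right_eq_Icc, Finset.sum_Ico_eq_sum_range]
      simp only [Nat.add_sub_cancel, pow_add, pow_one]
      rw [← Finset.mul_sum, geom_sum_eq h1]
    rw [norm_mul, hsum, norm_mul, hz, one_mul, norm_div]
    have h2 : ‖z ^ N - 1‖ ≤ 2 := by
      calc ‖z ^ N - 1‖ ≤ ‖z ^ N‖ + ‖(1:ℂ)‖ := norm_sub_le _ _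
      _ ≤ 2 := by simp [norm_pow, hz]; norm_num
    simp only [norm_inv, Complex.norm_natCast]
    calc ((N:ℝ))⁻¹ * (‖z ^ N - 1‖ * ‖z - 1‖⁻¹) ≤ ((N:ℝ))⁻¹ * (2 * ‖z - 1‖⁻¹) := by gcongr
      _ = 2 / ‖z - 1‖ * ((N:ℝ))⁻¹ := by ring
  · have : Tendsto (fun N : ℕ => (N:ℝ)⁻¹) atTop (𝓝 0) :=
      tendsto_inv_atTop_zero.comp tendsto_natCast_atTop_atTop
    simpa using this.const_mul (2 / ‖z - 1‖)


lemma exp_ne_one (lam : ℝ) (hlam : Irrational lam) (n : ℤ) (hn : n ≠ 0) :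
    Complex.exp (2 * π * Complex.I * n * lam) ≠ 1 := by
  intro h
  obtain ⟨m, hm⟩ := Complex.exp_eq_one_iff.mp h
  have h2 : (2 * π * Complex.I) ≠ 0 := by
    simp [Real.pi_ne_zero, Complex.ofReal_ne_zero, Complex.I_ne_zero]
  have : (n : ℂ) * lam = m := by
    have h3 : (n:ℂ) * ↑lam * (2 * ↑π * Complex.I) = ↑m * (2 * ↑π * Complex.I) := by
      rw [← hm]; ring
    exact mul_right_cancel₀ h2 h3
  have : (n : ℝ) * lam = m := by exact_mod_cast this
  have : Irrational ((n:ℝ) * lam) := hlam.intCast_mul hn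
  rw [‹(n:ℝ) * lam = m›] at this
  exact this.ne_int m rfl

lemma norm_exp_eq_one (lam : ℝ) (n : ℤ) : ‖Complex.exp (2 * π * Complex.I * n * lam)‖ = 1 := by
  rw [Complex.norm_exp]
  have : (2 * ↑π * Complex.I * ↑n * ↑lam).re = 0 := by
    simp [Complex.mul_re, Complex.mul_im]
  rw [this, Real.exp_zero]

lemma fourier_orbit (lam : ℝ) (n : ℤ) (k : ℕ) :
    (fourier n ((lam * k : ℝ) : 𝕊) : ℂ) = Complex.exp (2 * π * Complex.I * n * lam) ^ k := by
  rw [fourier_coe_apply, ← Complex.exp_nat_mul]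
  push_cast
  ring_nf

lemma integral_fourier_zero (n : ℤ) (hn : n ≠ 0) :
    (∫ z : 𝕊, (fourier n z : ℂ)) = 0 := by
  rw [← AddCircle.integral_preimage (1:ℝ) 0 (fun z => (fourier n z : ℂ))]
  have h0 : ((0:ℝ) + 1) = 1 := by norm_num
  rw [h0, ← intervalIntegral.integral_of_le (by norm_num : (0:ℝ) ≤ 1)]
  have hc : (2 * ↑π * Complex.I * (n:ℂ)) ≠ 0 := by
    simp [Real.pi_ne_zero, Complex.ofReal_ne_zero, Complex.I_ne_zero, hn]
  calc (∫ x in (0:ℝ)..1, (fourier n (x : 𝕊) : ℂ))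
      = ∫ x in (0:ℝ)..1, Complex.exp ((2 * ↑π * Complex.I * (n:ℂ)) * x) := by
        refine intervalIntegral.integral_congr (fun x _ => ?_)
        rw [fourier_coe_apply]
        norm_num
    _ = (Complex.exp ((2 * ↑π * Complex.I * (n:ℂ)) * 1) -
          Complex.exp ((2 * ↑π * Complex.I * (n:ℂ)) * 0)) / (2 * ↑π * Complex.I * (n:ℂ)) :=
        integral_exp_mul_complex hc
    _ = 0 := by
        rw [mul_one, mul_zero, Complex.exp_zero]
        have : Complex.exp (2 * ↑π * Complex.I * (n:ℂ)) = 1 := by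
          rw [show (2 * ↑π * Complex.I * (n:ℂ)) = n * (2 * π * Complex.I) by ring]
          exact Complex.exp_int_mul_two_pi_mul_I n
        rw [this]
        simp


lemma coe_fract (t : ℝ) : ((Int.fract t : ℝ) : 𝕊) = ((t : ℝ) : 𝕊) := by
  have h1 : ((⌊t⌋ : ℝ) : 𝕊) = 0 := by
    have : ((⌊t⌋:ℝ) : 𝕊) = (⌊t⌋ : ℤ) • ((1:ℝ) : 𝕊) := by
      rw [← QuotientAddGroup.mk_zsmul]
      norm_num
    rw [this, AddCircle.coe_period, smul_zero]
  have : ((Int.fract t : ℝ) : 𝕊) = ((t : ℝ) : 𝕊) - ((⌊t⌋:ℝ) : 𝕊) := by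
    rw [Int.fract, ← QuotientAddGroup.mk_sub]
  rw [this, h1, sub_zero]

lemma circle_dist_eq (x y : ℝ) (hx : x ∈ Ioo (0:ℝ) 1) (hy : y ∈ Icc (0:ℝ) 1)
    (h : dist ((x : ℝ) : 𝕊) ((y : ℝ) : 𝕊) < min x (1 - x)) :
    dist ((x : ℝ) : 𝕊) ((y : ℝ) : 𝕊) = |x - y| := by
  have hd : dist ((x : ℝ) : 𝕊) ((y : ℝ) : 𝕊) = |(x - y) - round (x - y)| := by
    rw [dist_eq_norm, ← QuotientAddGroup.mk_sub, AddCircle.norm_eq]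
    norm_num
  set t := x - y with ht
  have htmem : -1 < t ∧ t < 1 := by constructor <;> [nlinarith [hx.1, hx.2, hy.1, hy.2]; nlinarith [hx.1, hx.2, hy.1, hy.2]]
  have habs : |t| < 1 := abs_lt.mpr htmem
  have hr : round t = -1 ∨ round t = 0 ∨ round t = 1 := by
    have h1 : |t - round t| ≤ 1/2 := abs_sub_round t
    have h1' := abs_le.mp h1
    have habs' := abs_lt.mp habs
    have h9 : |(round t : ℝ)| < 3/2 := by
      have he : (round t : ℝ) = t - (t - round t) := by ring
      rw [he]
      calc |t - (t - ↑(round t))| ≤ |t| + |t - ↑(round t)| := abs_sub t (t - round t)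
        _ < 3/2 := by
            have := abs_lt.mp habs
            linarith
    have h10 := abs_lt.mp h9
    have h11 : (-2 : ℤ) < round t := by
      exact_mod_cast (show (-2:ℝ) < (round t : ℝ) by linarith [h10.1])
    have h12 : round t < 2 := by
      exact_mod_cast (show ((round t : ℝ)) < 2 by linarith [h10.2])
    omega
  rcases hr with h' | h' | h' <;> rw [hd, h'] at h ⊢
  · exfalso
    push_cast at h
    have h1 : |t + 1| < x := lt_of_lt_of_le (by simpa [sub_neg_eq_add] using h) (min_le_left _ _)
    have := abs_lt.mp h1
    simp only [ht] at this
    linarith [hy.2, this.1]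
  · simp
  · exfalso
    push_cast at h
    have h1 : |t - 1| < 1 - x := lt_of_lt_of_le h (min_le_right _ _)
    have := abs_lt.mp h1
    simp only [ht] at this
    linarith [hy.1, this.2]


noncomputable def upEnv (f : ℝ → ℝ) (k : ℕ) (z : 𝕊) : ℝ :=
  ⨆ y : Icc (0:ℝ) 1, (f y - k * dist z (((y:ℝ) : ℝ) : 𝕊))

section env
variable {f : ℝ → ℝ} {M : ℝ} (hM : ∀ x ∈ Icc (0:ℝ) 1, |f x| ≤ M)

include hM in
lemma env_bdd (k : ℕ) (z : 𝕊) :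
    BddAbove (range fun y : Icc (0:ℝ) 1 => f y - k * dist z (((y:ℝ) : ℝ) : 𝕊)) := by
  refine ⟨M, ?_⟩
  rintro _ ⟨y, rfl⟩
  have h1 : f y ≤ M := (abs_le.mp (hM y y.2)).2
  have h2 : (0:ℝ) ≤ k * dist z (((y:ℝ) : ℝ) : 𝕊) := by positivity
  simp only
  linarith

include hM in
lemma upEnv_le_M (k : ℕ) (z : 𝕊) : upEnv f k z ≤ M := by
  refine ciSup_le (fun y => ?_)
  have h1 : f y ≤ M := (abs_le.mp (hM y y.2)).2
  have h2 : (0:ℝ) ≤ k * dist z (((y:ℝ) : ℝ) : 𝕊) := by positivity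
  linarith

include hM in
lemma le_upEnv (k : ℕ) {x : ℝ} (hx : x ∈ Icc (0:ℝ) 1) : f x ≤ upEnv f k ((x : ℝ) : 𝕊) := by
  have := le_ciSup (env_bdd hM k ((x : ℝ) : 𝕊)) ⟨x, hx⟩
  simpa [upEnv] using this

include hM in
lemma upEnv_lipschitz (k : ℕ) : LipschitzWith (k : NNReal) (upEnv f k) := by
  have key : ∀ z w : 𝕊, upEnv f k z ≤ upEnv f k w + k * dist z w := by
    intro z w
    refine ciSup_le (fun y => ?_)
    have h1 : dist w (((y:ℝ) : ℝ) : 𝕊) ≤ dist w z + dist z (((y:ℝ) : ℝ) : 𝕊) := dist_triangle _ _ _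
    have h2 : f y - k * dist w (((y:ℝ) : ℝ) : 𝕊) ≤ upEnv f k w := le_ciSup (env_bdd hM k w) y
    have h3 : (0:ℝ) ≤ (k:ℝ) := by positivity
    nlinarith [dist_comm z w ▸ h1, mul_le_mul_of_nonneg_left h1 h3]
  refine LipschitzWith.of_dist_le_mul (fun z w => ?_)
  rw [Real.dist_eq, abs_sub_le_iff]
  constructor
  · have := key z w; push_cast; linarith [key z w]
  · have := key w z
    rw [dist_comm w z] at this
    push_cast
    linarith
end env

section env2
variable {f : ℝ → ℝ} {M : ℝ} (hM : ∀ x ∈ Icc (0:ℝ) 1, |f x| ≤ M)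

include hM in
lemma upEnv_tendsto {x : ℝ} (hx : x ∈ Ioo (0:ℝ) 1)
    (hc : ContinuousWithinAt f (Icc (0:ℝ) 1) x) :
    Tendsto (fun k : ℕ => upEnv f k ((x:ℝ) : 𝕊)) atTop (𝓝 (f x)) := by
  rw [Metric.tendsto_atTop]
  intro ε hε
  obtain ⟨δ, hδ, hδ'⟩ := Metric.continuousWithinAt_iff.mp hc (ε/2) (by linarith)
  set δ2 : ℝ := min δ (min x (1 - x)) with hδ2def
  have hδ2pos : 0 < δ2 := by
    refine lt_min hδ (lt_min hx.1 (by linarith [hx.2]))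
  obtain ⟨K, hK⟩ := exists_nat_ge ((M - f x) / δ2)
  refine ⟨K, fun k hk => ?_⟩
  have hxm : x ∈ Icc (0:ℝ) 1 := ⟨le_of_lt hx.1, le_of_lt hx.2⟩
  have hlow : f x ≤ upEnv f k ((x:ℝ):𝕊) := le_upEnv hM k hxm
  have hkK : (M - f x) / δ2 ≤ (k : ℝ) := le_trans hK (by exact_mod_cast hk)
  have hMk : M - (k:ℝ) * δ2 ≤ f x := by
    rw [div_le_iff₀ hδ2pos] at hkK
    nlinarith
  have hup : upEnv f k ((x:ℝ):𝕊) ≤ f x + ε/2 := by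
    refine ciSup_le (fun y => ?_)
    by_cases hcase : dist ((x:ℝ):𝕊) (((y:ℝ):ℝ):𝕊) < δ2
    · have heq : dist ((x:ℝ):𝕊) (((y:ℝ):ℝ):𝕊) = |x - (y:ℝ)| :=
        circle_dist_eq x y hx y.2
          (lt_of_lt_of_le hcase (le_trans (min_le_right _ _) le_rfl))
      have hyx : dist ((y:ℝ)) x < δ := by
        rw [Real.dist_eq, abs_sub_comm, ← heq]
        exact lt_of_lt_of_le hcase (min_le_left _ _)
      have hfy := hδ' y.2 hyx
      rw [Real.dist_eq] at hfy
      have h2 : f y ≤ f x + ε/2 := by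
        have := abs_lt.mp hfy
        linarith [this.2]
      have h3 : (0:ℝ) ≤ (k:ℝ) * dist ((x:ℝ):𝕊) (((y:ℝ):ℝ):𝕊) := by positivity
      linarith
    · push_neg at hcase
      have h1 : f y ≤ M := (abs_le.mp (hM y y.2)).2
      have h3 : (k:ℝ) * δ2 ≤ (k:ℝ) * dist ((x:ℝ):𝕊) (((y:ℝ):ℝ):𝕊) := by
        have : (0:ℝ) ≤ (k:ℝ) := by positivity
        exact mul_le_mul_of_nonneg_left hcase this
      linarith
  rw [Real.dist_eq, abs_of_nonneg (by linarith)]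
  linarith
end env2


lemma weyl_continuous_complex (lam : ℝ) (hlam : Irrational lam) (G : C(𝕊, ℂ)) :
    Tendsto (fun N : ℕ => (N:ℂ)⁻¹ * ∑ k ∈ Finset.Icc 1 N, G ((lam * (k:ℕ) : ℝ) : 𝕊))
      atTop (𝓝 (∫ z : 𝕊, G z)) := by
  set A : C(𝕊, ℂ) → ℕ → ℂ :=
    fun φ N => (N:ℂ)⁻¹ * ∑ k ∈ Finset.Icc 1 N, φ ((lam * (k:ℕ) : ℝ) : 𝕊) with hA
  set P : C(𝕊, ℂ) → Prop := fun φ => Tendsto (A φ) atTop (𝓝 (∫ z : 𝕊, φ z)) with hP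
  -- P holds on the span of the fourier monomials
  have hspan : ∀ φ ∈ Submodule.span ℂ (Set.range (@fourier 1)), P φ := by
    intro φ hφ
    induction hφ using Submodule.span_induction with
    | mem φ hφ =>
        obtain ⟨n, rfl⟩ := hφ
        rcases eq_or_ne n 0 with rfl | hn
        · have h1 : ∀ᶠ N : ℕ in atTop, A (fourier 0) N = 1 := by
            filter_upwards [eventually_ge_atTop 1] with N hN
            have : (N:ℂ) ≠ 0 := by exact_mod_cast Nat.one_le_iff_ne_zero.mp hN
            simp [hA, fourier_zero, Finset.sum_const, Nat.card_Icc, this]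
          have h2 : (∫ z : 𝕊, (fourier 0 z : ℂ)) = 1 := by
            simp [fourier_zero]
          rw [hP]
          simp only [h2]
          exact Tendsto.congr' (h1.mono fun N h => h.symm) tendsto_const_nhds
        · have := geom_avg _ (norm_exp_eq_one lam n) (exp_ne_one lam hlam n hn)
          rw [hP]
          simp only [integral_fourier_zero n hn]
          refine this.congr (fun N => ?_)
          simp only [hA]
          congr 1
          exact Finset.sum_congr rfl (fun k _ => (fourier_orbit lam n k).symm)
    | zero => simpa [hP, hA] using tendsto_const_nhds
    | add φ ψ _ _ hφ hψ =>
        have : A (φ + ψ) = fun N => A φ N + A ψ N := by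
          funext N
          simp [hA, Finset.sum_add_distrib, mul_add]
        show Tendsto (A (φ + ψ)) atTop (𝓝 (∫ z : 𝕊, (φ + ψ) z))
        have hint : (∫ z : 𝕊, (φ + ψ) z) = (∫ z : 𝕊, φ z) + ∫ z : 𝕊, ψ z := by
          simp only [ContinuousMap.add_apply]
          exact integral_add (cont_integrable φ) (cont_integrable ψ)
        rw [this, hint]
        exact hφ.add hψ
    | smul c φ _ hφ =>
        have : A (c • φ) = fun N => c * A φ N := by
          funext N
          simp [hA, Finset.mul_sum, smul_eq_mul]
          ring_nf
        show Tendsto (A (c • φ)) atTop (𝓝 (∫ z : 𝕊, (c • φ) z))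
        rw [this]
        have : (∫ z : 𝕊, (c • φ) z) = c * ∫ z : 𝕊, φ z := by
          simp only [ContinuousMap.smul_apply, smul_eq_mul]
          rw [← smul_eq_mul, ← integral_smul]
          simp
        rw [this]
        exact hφ.const_mul c
  -- density argument
  refine Metric.tendsto_nhds.mpr (fun ε hε => ?_)
  have hG : G ∈ closure ((Submodule.span ℂ (Set.range (@fourier 1)) : Submodule ℂ C(𝕊, ℂ)) : Set C(𝕊, ℂ)) := by
    rw [← Submodule.topologicalClosure_coe, span_fourier_closure_eq_top]
    trivial
  obtain ⟨Q, hQmem, hQdist⟩ := Metric.mem_closure_iff.mp hG (ε/3) (by linarith)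
  have hQ : P Q := hspan Q hQmem
  have hQd : dist G Q < ε / 3 := hQdist
  filter_upwards [hQ.eventually (Metric.ball_mem_nhds _ (by linarith : (0:ℝ) < ε/3)),
    eventually_ge_atTop 1] with N hN1 hN2
  have hNne : (N:ℝ) ≠ 0 := by exact_mod_cast Nat.one_le_iff_ne_zero.mp hN2
  have key1 : dist (A G N) (A Q N) ≤ dist G Q := by
    have : A G N - A Q N = (N:ℂ)⁻¹ * ∑ k ∈ Finset.Icc 1 N,
        (G ((lam * (k:ℕ) : ℝ) : 𝕊) - Q ((lam * (k:ℕ) : ℝ) : 𝕊)) := by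
      simp [hA, Finset.sum_sub_distrib, mul_sub]
    rw [dist_eq_norm, this, norm_mul, norm_inv, Complex.norm_natCast]
    calc (N:ℝ)⁻¹ * ‖∑ k ∈ Finset.Icc 1 N, (G ((lam * (k:ℕ) : ℝ) : 𝕊) - Q ((lam * (k:ℕ) : ℝ) : 𝕊))‖
        ≤ (N:ℝ)⁻¹ * ∑ k ∈ Finset.Icc 1 N, ‖G ((lam * (k:ℕ) : ℝ) : 𝕊) - Q ((lam * (k:ℕ) : ℝ) : 𝕊)‖ := by
          gcongr
          exact norm_sum_le _ _
      _ ≤ (N:ℝ)⁻¹ * ∑ k ∈ Finset.Icc 1 N, dist G Q := by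
          gcongr with k hk
          rw [← dist_eq_norm]
          exact ContinuousMap.dist_apply_le_dist _
      _ = dist G Q := by
          rw [Finset.sum_const, Nat.card_Icc]
          simp only [Nat.add_sub_cancel, nsmul_eq_mul]
          field_simp
  have key2 : dist (∫ z : 𝕊, Q z) (∫ z : 𝕊, G z) ≤ dist G Q := by
    rw [dist_eq_norm, ← integral_sub (cont_integrable Q) (cont_integrable G)]
    calc ‖∫ z : 𝕊, (Q z - G z)‖ ≤ dist G Q * (volume (univ : Set 𝕊)).toReal := by
          refine norm_integral_le_of_norm_le_const (Eventually.of_forall fun z => ?_)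
          rw [← dist_eq_norm, dist_comm]
          exact ContinuousMap.dist_apply_le_dist _
      _ = dist G Q := by simp
  calc dist (A G N) (∫ z : 𝕊, G z)
      ≤ dist (A G N) (A Q N) + dist (A Q N) (∫ z : 𝕊, Q z) + dist (∫ z : 𝕊, Q z) (∫ z : 𝕊, G z) :=
        dist_triangle4 _ _ _ _
    _ < ε/3 + ε/3 + ε/3 := by
        have := Metric.mem_ball.mp hN1
        refine add_lt_add (add_lt_add_of_lt_of_lt (lt_of_le_of_lt key1 hQd) this) (lt_of_le_of_lt key2 hQd)
    _ = ε := by ring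


lemma weyl_continuous_real (lam : ℝ) (hlam : Irrational lam) (G : C(𝕊, ℝ)) :
    Tendsto (fun N : ℕ => (1 / (N:ℝ)) * ∑ k ∈ Finset.Icc 1 N, G ((lam * (k:ℕ) : ℝ) : 𝕊))
      atTop (𝓝 (∫ z : 𝕊, G z)) := by
  set Gc : C(𝕊, ℂ) := ⟨fun z => (G z : ℂ), Complex.continuous_ofReal.comp G.continuous⟩ with hGc
  have h := weyl_continuous_complex lam hlam Gc
  have hint : (∫ z : 𝕊, Gc z) = Complex.ofReal (∫ z : 𝕊, G z) := by
    exact integral_ofReal (𝕜 := ℂ) (f := fun z => G z)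
  rw [hint] at h
  have h2 := (Complex.continuous_re.tendsto _).comp h
  simp only [Complex.ofReal_re] at h2
  refine h2.congr (fun N => ?_)
  show ((N:ℂ)⁻¹ * ∑ k ∈ Finset.Icc 1 N, ((G ((lam * (k:ℕ) : ℝ) : 𝕊)) : ℂ)).re = _
  have : ((N:ℂ)⁻¹ * ∑ k ∈ Finset.Icc 1 N, ((G ((lam * (k:ℕ) : ℝ) : 𝕊)) : ℂ))
      = (((1/(N:ℝ)) * ∑ k ∈ Finset.Icc 1 N, G ((lam * (k:ℕ) : ℝ) : 𝕊) : ℝ) : ℂ) := by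
    push_cast
    ring
  rw [this, Complex.ofReal_re]

end WeylAux

/-- Weyl equidistribution for Riemann-integrable functions: if `λ` is irrational and
`f : [0,1] → ℝ` is bounded with a set of discontinuity points of Lebesgue measure zero,
then `(1/x) ∑_{1 ≤ n ≤ x} f({λ n}) → ∫₀¹ f` as `x → ∞`. -/
theorem stmt_3 (lam : ℝ) (hlam : Irrational lam) (f : ℝ → ℝ)
    (hbdd : ∃ M : ℝ, ∀ x ∈ Set.Icc (0:ℝ) 1, |f x| ≤ M)
    (hdisc : volume {x ∈ Set.Icc (0:ℝ) 1 | ¬ ContinuousWithinAt f (Set.Icc (0:ℝ) 1) x} = 0) :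
    Tendsto (fun x : ℕ => (1 / (x : ℝ)) * ∑ n ∈ Finset.Icc 1 x, f (Int.fract (lam * n)))
      atTop (𝓝 (∫ t in (0:ℝ)..1, f t)) := by
  obtain ⟨M, hM⟩ := hbdd
  set nf : ℝ → ℝ := fun t => - f t with hnf
  have hMn : ∀ x ∈ Icc (0:ℝ) 1, |nf x| ≤ M := fun x hx => by
    simpa [hnf, abs_neg] using hM x hx
  set H : ℕ → C(𝕊, ℝ) := fun k => ⟨upEnv f k, (upEnv_lipschitz hM k).continuous⟩ with hH
  set G : ℕ → C(𝕊, ℝ) :=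
    fun k => ⟨fun z => - upEnv nf k z, ((upEnv_lipschitz hMn k).continuous).neg⟩ with hG
  set μ : Measure ℝ := volume.restrict (Ioc (0:ℝ) 1) with hμ
  -- a.e. properties on (0,1]
  have hZ : volume ({x ∈ Icc (0:ℝ) 1 | ¬ ContinuousWithinAt f (Icc (0:ℝ) 1) x} ∪ {1}) = 0 :=
    measure_union_null hdisc (Real.volume_singleton)
  have hae : ∀ᵐ x ∂μ, x ∈ Ioo (0:ℝ) 1 ∧ ContinuousWithinAt f (Icc (0:ℝ) 1) x := by
    have h0 : ∀ᵐ x ∂μ, x ∉ ({x ∈ Icc (0:ℝ) 1 | ¬ ContinuousWithinAt f (Icc (0:ℝ) 1) x} ∪ {1}) :=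
      ae_restrict_of_ae (measure_eq_zero_iff_ae_notMem.mp hZ)
    have h1 : ∀ᵐ x ∂μ, x ∈ Ioc (0:ℝ) 1 := ae_restrict_mem measurableSet_Ioc
    filter_upwards [h0, h1] with x hx0 hx1
    have hx1' : x ≠ 1 := fun h => hx0 (Or.inr (by simp [h]))
    have hxIoo : x ∈ Ioo (0:ℝ) 1 := ⟨hx1.1, lt_of_le_of_ne hx1.2 hx1'⟩
    refine ⟨hxIoo, ?_⟩
    by_contra hc
    exact hx0 (Or.inl ⟨⟨le_of_lt hxIoo.1, le_of_lt hxIoo.2⟩, hc⟩)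
  have haeIcc : ∀ᵐ x ∂μ, x ∈ Icc (0:ℝ) 1 :=
    (ae_restrict_mem measurableSet_Ioc).mono (fun x hx => ⟨le_of_lt hx.1, hx.2⟩)
  -- measurability
  have hcoe : Continuous fun x : ℝ => ((x : ℝ) : 𝕊) := AddCircle.continuous_mk' 1
  have hHmeas : ∀ k : ℕ, AEStronglyMeasurable (fun x : ℝ => H k ((x : ℝ) : 𝕊)) μ :=
    fun k => ((H k).continuous.comp hcoe).aestronglyMeasurable
  have hGmeas : ∀ k : ℕ, AEStronglyMeasurable (fun x : ℝ => G k ((x : ℝ) : 𝕊)) μ :=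
    fun k => ((G k).continuous.comp hcoe).aestronglyMeasurable
  -- bounds
  have hMnonneg : 0 ≤ M := le_trans (abs_nonneg _) (hM 0 (by norm_num))
  have hHbound : ∀ k : ℕ, ∀ᵐ x ∂μ, ‖H k ((x : ℝ) : 𝕊)‖ ≤ M := by
    intro k
    filter_upwards [haeIcc] with x hx
    have hub : upEnv f k ((x:ℝ) : 𝕊) ≤ M := upEnv_le_M hM k _
    have hlb : f x ≤ upEnv f k ((x:ℝ) : 𝕊) := le_upEnv hM k hx
    have := abs_le.mp (hM x hx)
    have hHval : H k ((x:ℝ) : 𝕊) = upEnv f k ((x:ℝ) : 𝕊) := rfl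
    rw [Real.norm_eq_abs, hHval, abs_le]
    constructor <;> [linarith; linarith]
  have hGbound : ∀ k : ℕ, ∀ᵐ x ∂μ, ‖G k ((x : ℝ) : 𝕊)‖ ≤ M := by
    intro k
    filter_upwards [haeIcc] with x hx
    have hub : upEnv nf k ((x:ℝ) : 𝕊) ≤ M := upEnv_le_M hMn k _
    have hlb : nf x ≤ upEnv nf k ((x:ℝ) : 𝕊) := le_upEnv hMn k hx
    have := abs_le.mp (hM x hx)
    have hGval : G k ((x:ℝ) : 𝕊) = - upEnv nf k ((x:ℝ) : 𝕊) := rfl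
    rw [Real.norm_eq_abs, hGval, abs_le]
    simp only [hnf] at hlb
    constructor <;> [linarith; linarith]
  -- a.e. convergence
  have haeH : ∀ᵐ x ∂μ, Tendsto (fun k : ℕ => H k ((x : ℝ) : 𝕊)) atTop (𝓝 (f x)) := by
    filter_upwards [hae] with x hx
    exact upEnv_tendsto hM hx.1 hx.2
  have haeG : ∀ᵐ x ∂μ, Tendsto (fun k : ℕ => G k ((x : ℝ) : 𝕊)) atTop (𝓝 (f x)) := by
    filter_upwards [hae] with x hx
    have hcn : ContinuousWithinAt nf (Icc (0:ℝ) 1) x := hx.2.neg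
    have := (upEnv_tendsto hMn hx.1 hcn).neg
    simp only [hnf, neg_neg] at this
    exact this
  -- dominated convergence
  have hHint : Tendsto (fun k : ℕ => ∫ x, H k ((x : ℝ) : 𝕊) ∂μ) atTop (𝓝 (∫ x, f x ∂μ)) :=
    tendsto_integral_of_dominated_convergence (fun _ => M) hHmeas
      (integrable_const M) hHbound haeH
  have hGint : Tendsto (fun k : ℕ => ∫ x, G k ((x : ℝ) : 𝕊) ∂μ) atTop (𝓝 (∫ x, f x ∂μ)) :=
    tendsto_integral_of_dominated_convergence (fun _ => M) hGmeas
      (integrable_const M) hGbound haeG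
  -- circle integrals equal interval integrals
  have hIoc : Ioc (0:ℝ) 1 = Ioc (0:ℝ) (0 + 1) := by norm_num
  have hHcirc : ∀ k : ℕ, (∫ z : 𝕊, H k z) = ∫ x, H k ((x : ℝ) : 𝕊) ∂μ := by
    intro k
    rw [hμ, hIoc, AddCircle.integral_preimage 1 0 (fun z => H k z)]
  have hGcirc : ∀ k : ℕ, (∫ z : 𝕊, G k z) = ∫ x, G k ((x : ℝ) : 𝕊) ∂μ := by
    intro k
    rw [hμ, hIoc, AddCircle.integral_preimage 1 0 (fun z => G k z)]
  -- rewrite goal integral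
  have hgoalint : (∫ t in (0:ℝ)..1, f t) = ∫ x, f x ∂μ := by
    rw [intervalIntegral.integral_of_le (by norm_num : (0:ℝ) ≤ 1), hμ]
  rw [hgoalint]
  refine Metric.tendsto_nhds.mpr (fun ε hε => ?_)
  -- pick k
  have hball : {y : ℝ | dist y (∫ x, f x ∂μ) < ε/4} ∈ 𝓝 (∫ x, f x ∂μ) :=
    Metric.ball_mem_nhds _ (by linarith)
  obtain ⟨k, hk1, hk2⟩ := ((hHint.eventually hball).and (hGint.eventually hball)).exists
  have hWH := weyl_continuous_real lam hlam (H k)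
  have hWG := weyl_continuous_real lam hlam (G k)
  filter_upwards [hWH.eventually (Metric.ball_mem_nhds _ (by linarith : (0:ℝ) < ε/4)),
    hWG.eventually (Metric.ball_mem_nhds _ (by linarith : (0:ℝ) < ε/4)),
    eventually_ge_atTop 1] with N hN1 hN2 hN3
  -- termwise comparison
  have hfr : ∀ n : ℕ, Int.fract (lam * (n:ℕ)) ∈ Icc (0:ℝ) 1 :=
    fun n => ⟨Int.fract_nonneg _, le_of_lt (Int.fract_lt_one _)⟩
  have hterm1 : ∀ n : ℕ, f (Int.fract (lam * (n:ℕ))) ≤ H k ((lam * (n:ℕ) : ℝ) : 𝕊) := by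
    intro n
    have := le_upEnv hM k (hfr n)
    rwa [coe_fract (lam * (n:ℕ))] at this
  have hterm2 : ∀ n : ℕ, G k ((lam * (n:ℕ) : ℝ) : 𝕊) ≤ f (Int.fract (lam * (n:ℕ))) := by
    intro n
    have := le_upEnv hMn k (hfr n)
    rw [coe_fract (lam * (n:ℕ))] at this
    have hGval : G k ((lam * (n:ℕ) : ℝ) : 𝕊) = - upEnv nf k ((lam * (n:ℕ) : ℝ) : 𝕊) := rfl
    rw [hGval]
    simp only [hnf] at this
    linarith
  have hNpos : (0:ℝ) ≤ 1 / (N:ℝ) := by positivity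
  have hcmp1 : (1 / (N:ℝ)) * ∑ n ∈ Finset.Icc 1 N, f (Int.fract (lam * (n:ℕ)))
      ≤ (1 / (N:ℝ)) * ∑ n ∈ Finset.Icc 1 N, H k ((lam * (n:ℕ) : ℝ) : 𝕊) :=
    mul_le_mul_of_nonneg_left (Finset.sum_le_sum (fun n _ => hterm1 n)) hNpos
  have hcmp2 : (1 / (N:ℝ)) * ∑ n ∈ Finset.Icc 1 N, G k ((lam * (n:ℕ) : ℝ) : 𝕊)
      ≤ (1 / (N:ℝ)) * ∑ n ∈ Finset.Icc 1 N, f (Int.fract (lam * (n:ℕ))) :=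
    mul_le_mul_of_nonneg_left (Finset.sum_le_sum (fun n _ => hterm2 n)) hNpos
  rw [Real.dist_eq, abs_lt]
  have hd1 := abs_lt.mp (Real.dist_eq _ _ ▸ Metric.mem_ball.mp hN1)
  have hd2 := abs_lt.mp (Real.dist_eq _ _ ▸ Metric.mem_ball.mp hN2)
  have hd3 := abs_lt.mp (Real.dist_eq _ _ ▸ Metric.mem_ball.mp hk1)
  have hd4 := abs_lt.mp (Real.dist_eq _ _ ▸ Metric.mem_ball.mp hk2)
  rw [hHcirc k] at hd1
  rw [hGcirc k] at hd2
  constructor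
  · have := hd2.1
    have := hd4.1
    nlinarith [hcmp2, hd2.1, hd4.1]
  · nlinarith [hcmp1, hd1.2, hd3.2]
end

section
/- Let k ≥ 1 be an integer and β ∈ [0,1]. Then there exists a compact subset A ⊆ 𝕋 = ℝ/ℤ such that μ(iA) = 0 for every i with 1 ≤ i ≤ k, and μ((k+1)A) = β, where μ is the Haar probability measure on 𝕋. -/
set_option maxHeartbeats 1000000

open MeasureTheory

/-- The `i`-fold sumset `iA = {a₁ + ⋯ + a_i : a_j ∈ A}` of a subset of the circle. -/
def iterSumsetT (i : ℕ) (A : Set UnitAddCircle) : Set UnitAddCircle :=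
  {x | ∃ f : Fin i → UnitAddCircle, (∀ j, f j ∈ A) ∧ x = ∑ j, f j}

open Set Pointwise


namespace Stmt9

/-- weight of digit position `j` in base `b` : `b⁻¹^(j+1)`. -/
noncomputable def w (b : ℕ) (j : ℕ) : ℝ := ((b : ℝ))⁻¹ ^ (j + 1)

/-- the set of reals whose base-`b` expansion has all digits `≤ i`. -/
noncomputable def T (b i : ℕ) : Set ℝ :=
  {x | ∃ d : ℕ → ℕ, (∀ j, d j ≤ i) ∧ x = ∑' j, (d j : ℝ) * w b j}

variable {b : ℕ} (hb : 2 ≤ b)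

lemma rb_pos (hb : 2 ≤ b) : 0 < ((b : ℝ))⁻¹ := by
  have : (0:ℝ) < b := by exact_mod_cast Nat.lt_of_lt_of_le (by norm_num) hb
  positivity

lemma rb_lt_one (hb : 2 ≤ b) : ((b : ℝ))⁻¹ < 1 := by
  have hb1 : (1:ℝ) < b := by exact_mod_cast Nat.lt_of_lt_of_le (by norm_num) hb
  rw [inv_lt_one_iff₀]; right; exact hb1

lemma w_pos (hb : 2 ≤ b) (j : ℕ) : 0 < w b j := pow_pos (rb_pos hb) _

lemma summable_w (hb : 2 ≤ b) : Summable (w b) := by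
  have : Summable (fun j : ℕ => ((b:ℝ))⁻¹ ^ j) :=
    summable_geometric_of_lt_one (le_of_lt (rb_pos hb)) (rb_lt_one hb)
  have := this.mul_right ((b:ℝ))⁻¹
  refine this.congr fun j => ?_
  simp [w, pow_succ]

lemma tsum_w (hb : 2 ≤ b) : ∑' j, w b j = ((b : ℝ) - 1)⁻¹ := by
  have h0 : (0:ℝ) ≤ (b:ℝ)⁻¹ := (rb_pos hb).le
  have h1 : ((b:ℝ))⁻¹ < 1 := rb_lt_one hb
  have hbne : (b:ℝ) ≠ 0 := by positivity
  have hb1 : (b:ℝ) - 1 ≠ 0 := by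
    have : (1:ℝ) < b := by exact_mod_cast Nat.lt_of_lt_of_le (by norm_num) hb
    linarith
  have : ∑' j : ℕ, w b j = (∑' j : ℕ, ((b:ℝ))⁻¹ ^ j) * ((b:ℝ))⁻¹ := by
    rw [← tsum_mul_right]
    exact tsum_congr fun j => by simp [w, pow_succ]
  rw [this, tsum_geometric_of_lt_one h0 h1]
  field_simp

lemma summable_digits (hb : 2 ≤ b) {i : ℕ} {d : ℕ → ℕ} (hd : ∀ j, d j ≤ i) :
    Summable (fun j => (d j : ℝ) * w b j) := by
  refine Summable.of_nonneg_of_le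
    (fun j => mul_nonneg (Nat.cast_nonneg _) (w_pos hb j).le) (fun j => ?_)
    ((summable_w hb).mul_left (i : ℝ))
  exact mul_le_mul_of_nonneg_right (by exact_mod_cast hd j) (w_pos hb j).le

lemma tsum_digits_nonneg (hb : 2 ≤ b) {d : ℕ → ℕ} :
    0 ≤ ∑' j, (d j : ℝ) * w b j :=
  tsum_nonneg fun j => mul_nonneg (Nat.cast_nonneg _) (w_pos hb j).le

lemma tsum_digits_le (hb : 2 ≤ b) {i : ℕ} {d : ℕ → ℕ} (hd : ∀ j, d j ≤ i) :
    ∑' j, (d j : ℝ) * w b j ≤ (i : ℝ) * ((b : ℝ) - 1)⁻¹ := by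
  rw [← tsum_w hb, ← tsum_mul_left]
  refine Summable.tsum_le_tsum (fun j => ?_) (summable_digits hb hd) ((summable_w hb).mul_left _)
  exact mul_le_mul_of_nonneg_right (by exact_mod_cast hd j) (w_pos hb j).le



/-- the `i`-fold real sumset. -/
def RS (i : ℕ) (S : Set ℝ) : Set ℝ :=
  {y | ∃ f : Fin i → ℝ, (∀ j, f j ∈ S) ∧ y = ∑ j, f j}

lemma RS_T (hb : 2 ≤ b) (i : ℕ) : RS i (T b 1) = T b i := by
  ext x
  constructor
  · rintro ⟨f, hf, rfl⟩
    choose d hd hfd using hf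
    refine ⟨fun m => ∑ j, d j m, fun m => ?_, ?_⟩
    · calc ∑ j, d j m ≤ ∑ _j : Fin i, 1 := Finset.sum_le_sum fun j _ => hd j m
        _ = i := by simp
    · have hsum : ∀ j : Fin i, Summable (fun m => (d j m : ℝ) * w b m) :=
        fun j => summable_digits hb (hd j)
      calc ∑ j, f j = ∑ j, ∑' m, (d j m : ℝ) * w b m := by
              exact Finset.sum_congr rfl fun j _ => hfd j
        _ = ∑' m, ∑ j, (d j m : ℝ) * w b m := (Summable.tsum_finsetSum fun j _ => hsum j).symm
        _ = ∑' m, ((∑ j, d j m : ℕ) : ℝ) * w b m := by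
              refine tsum_congr fun m => ?_
              rw [← Finset.sum_mul]; push_cast; ring
  · rintro ⟨D, hD, rfl⟩
    classical
    refine ⟨fun j => ∑' m, ((if (j : ℕ) < D m then 1 else 0 : ℕ) : ℝ) * w b m,
      fun j => ⟨fun m => if (j : ℕ) < D m then 1 else 0, fun m => by by_cases h : (j : ℕ) < D m <;> simp [h], rfl⟩, ?_⟩
    have hsum : ∀ j : Fin i,
        Summable (fun m => ((if (j : ℕ) < D m then 1 else 0 : ℕ) : ℝ) * w b m) :=
      fun j => summable_digits hb (i := 1) (fun m => by by_cases h : (j : ℕ) < D m <;> simp [h])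
    rw [← Summable.tsum_finsetSum fun j _ => hsum j]
    refine tsum_congr fun m => ?_
    rw [← Finset.sum_mul]
    congr 1
    rw [Fin.sum_univ_eq_sum_range (fun j => ((if j < D m then 1 else 0 : ℕ) : ℝ)) i]
    push_cast
    rw [Finset.sum_boole]
    have : Finset.filter (fun j => j < D m) (Finset.range i) = Finset.range (D m) := by
      ext j
      simp only [Finset.mem_filter, Finset.mem_range]
      have := hD m
      omega
    rw [this]
    simp

lemma isCompact_T (hb : 2 ≤ b) (i : ℕ) : IsCompact (T b i) := by
  have hrange : T b i = Set.range (fun ε : ℕ → Fin (i + 1) => ∑' j, ((ε j : ℕ) : ℝ) * w b j) := by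
    ext x
    constructor
    · rintro ⟨d, hd, rfl⟩
      exact ⟨fun j => ⟨d j, Nat.lt_succ_of_le (hd j)⟩, rfl⟩
    · rintro ⟨ε, rfl⟩
      exact ⟨fun j => (ε j : ℕ), fun j => Nat.lt_succ_iff.mp (ε j).isLt, rfl⟩
  rw [hrange]
  apply isCompact_range
  refine continuous_tsum (u := fun j => (i : ℝ) * w b j) (fun j => ?_)
    ((summable_w hb).mul_left _) (fun j ε => ?_)
  · exact Continuous.mul (by continuity) continuous_const
  · rw [Real.norm_eq_abs, abs_mul, abs_of_nonneg (Nat.cast_nonneg _),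
      abs_of_nonneg (w_pos hb j).le]
    exact mul_le_mul_of_nonneg_right (by exact_mod_cast Nat.lt_succ_iff.mp (ε j).isLt)
      (w_pos hb j).le

end Stmt9

namespace Stmt9

lemma T_subset_cover {b : ℕ} (hb : 2 ≤ b) {i : ℕ} (hi : i + 2 ≤ b) (n : ℕ) :
    T b i ⊆ ⋃ e : Fin n → Fin (i + 1),
      Set.Icc (∑ m, ((e m : ℕ) : ℝ) * w b m)
        (∑ m, ((e m : ℕ) : ℝ) * w b m + ((b : ℝ))⁻¹ ^ n) := by
  rintro x ⟨D, hD, rfl⟩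
  refine Set.mem_iUnion.mpr ⟨fun m => ⟨D m, Nat.lt_succ_of_le (hD m)⟩, ?_⟩
  have hc : ∑ m : Fin n, ((D m : ℕ) : ℝ) * w b m
      = ∑ m ∈ Finset.range n, (D m : ℝ) * w b m :=
    Fin.sum_univ_eq_sum_range (fun m => (D m : ℝ) * w b m) n
  have hsplit := Summable.sum_add_tsum_nat_add (f := fun m => (D m : ℝ) * w b m) n
    (summable_digits hb hD)
  set tail := ∑' m, (D (m + n) : ℝ) * w b (m + n) with htail
  have htail_sum : Summable (fun m => (D (m + n) : ℝ) * w b (m + n)) :=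
    (summable_nat_add_iff n).mpr (summable_digits hb hD)
  have htail0 : 0 ≤ tail := tsum_nonneg fun m => mul_nonneg (Nat.cast_nonneg _) (w_pos hb _).le
  have hw : ∀ m, w b (m + n) = w b m * ((b : ℝ))⁻¹ ^ n := by
    intro m; simp only [w, pow_add]; ring
  have hrpos : (0:ℝ) < ((b : ℝ))⁻¹ ^ n := pow_pos (rb_pos hb) n
  have htaille : tail ≤ ((b : ℝ))⁻¹ ^ n := by
    have h1 : tail ≤ ∑' m, (i : ℝ) * w b (m + n) := by
      refine Summable.tsum_le_tsum (fun m => ?_) htail_sum ?_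
      · exact mul_le_mul_of_nonneg_right (by exact_mod_cast hD _) (w_pos hb _).le
      · exact Summable.mul_left _ ((summable_nat_add_iff n).mpr (summable_w hb))
    have h2 : ∑' m, (i : ℝ) * w b (m + n) = (i : ℝ) * ((b:ℝ) - 1)⁻¹ * ((b : ℝ))⁻¹ ^ n := by
      rw [tsum_mul_left]
      have : ∑' m, w b (m + n) = ((b:ℝ) - 1)⁻¹ * ((b : ℝ))⁻¹ ^ n := by
        calc ∑' m, w b (m + n) = ∑' m, w b m * ((b : ℝ))⁻¹ ^ n := tsum_congr fun m => hw m
          _ = (∑' m, w b m) * ((b : ℝ))⁻¹ ^ n := tsum_mul_right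
          _ = ((b:ℝ) - 1)⁻¹ * ((b : ℝ))⁻¹ ^ n := by rw [tsum_w hb]
      rw [this]; ring
    have hb1 : (0:ℝ) < (b:ℝ) - 1 := by
      have : (1:ℝ) < b := by exact_mod_cast Nat.lt_of_lt_of_le (by norm_num) hb
      linarith
    have h3 : (i : ℝ) * ((b:ℝ) - 1)⁻¹ ≤ 1 := by
      have hib : (i : ℝ) ≤ (b : ℝ) - 1 := by
        have : ((i : ℝ) + 2) ≤ b := by exact_mod_cast hi
        linarith
      calc (i : ℝ) * ((b:ℝ) - 1)⁻¹ ≤ ((b:ℝ) - 1) * ((b:ℝ) - 1)⁻¹ :=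
            mul_le_mul_of_nonneg_right hib (inv_nonneg.mpr hb1.le)
        _ = 1 := mul_inv_cancel₀ hb1.ne'
    calc tail ≤ (i : ℝ) * ((b:ℝ) - 1)⁻¹ * ((b : ℝ))⁻¹ ^ n := h1.trans h2.le
      _ ≤ 1 * ((b : ℝ))⁻¹ ^ n := mul_le_mul_of_nonneg_right h3 hrpos.le
      _ = ((b : ℝ))⁻¹ ^ n := one_mul _
  constructor
  · rw [hc]; linarith [hsplit]
  · rw [hc]; linarith [hsplit]

lemma volume_T_zero {b : ℕ} (hb : 2 ≤ b) {i : ℕ} (hi : i + 2 ≤ b) :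
    volume (T b i) = 0 := by
  set q : ℝ := ((i : ℝ) + 1) * ((b : ℝ))⁻¹ with hq
  have hbpos : (0:ℝ) < b := by exact_mod_cast Nat.lt_of_lt_of_le (by norm_num) hb
  have hq0 : 0 ≤ q := by positivity
  have hq1 : q < 1 := by
    rw [hq, ← div_eq_mul_inv, div_lt_one hbpos]
    have : i + 1 < b := by omega
    exact_mod_cast this
  have hbound : ∀ n : ℕ, volume (T b i) ≤ ENNReal.ofReal (q ^ n) := by
    intro n
    calc volume (T b i)
        ≤ ∑' e : Fin n → Fin (i + 1), volume (Set.Icc (∑ m, ((e m : ℕ) : ℝ) * w b m)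
            (∑ m, ((e m : ℕ) : ℝ) * w b m + ((b : ℝ))⁻¹ ^ n)) :=
          le_trans (measure_mono (T_subset_cover hb hi n)) (measure_iUnion_le _)
      _ = ∑' _e : Fin n → Fin (i + 1), ENNReal.ofReal (((b : ℝ))⁻¹ ^ n) := by
          refine tsum_congr fun e => ?_
          rw [Real.volume_Icc]; congr 1; ring
      _ = (Fintype.card (Fin n → Fin (i + 1)) : ENNReal) * ENNReal.ofReal (((b : ℝ))⁻¹ ^ n) := by
          rw [tsum_fintype, Finset.sum_const, Finset.card_univ, nsmul_eq_mul]
      _ = ENNReal.ofReal (q ^ n) := by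
          rw [Fintype.card_fun, Fintype.card_fin, Fintype.card_fin,
            ← ENNReal.ofReal_natCast, ← ENNReal.ofReal_mul (by positivity)]
          congr 1
          rw [hq, mul_pow]
          push_cast
          ring
  have htend : Filter.Tendsto (fun n : ℕ => ENNReal.ofReal (q ^ n)) Filter.atTop (nhds 0) := by
    have := tendsto_pow_atTop_nhds_zero_of_lt_one hq0 hq1
    have h2 := (ENNReal.continuous_ofReal.tendsto 0).comp this
    simpa [Function.comp_def] using h2
  exact le_antisymm (ge_of_tendsto' htend hbound) (zero_le')

end Stmt9

namespace Stmt9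

lemma T_top {b : ℕ} (hb : 2 ≤ b) : T b (b - 1) = Set.Icc 0 1 := by
  have hbpos : (0:ℝ) < b := by exact_mod_cast Nat.lt_of_lt_of_le (by norm_num) hb
  have hbne : (b:ℝ) ≠ 0 := hbpos.ne'
  have hb1R : ((b - 1 : ℕ) : ℝ) = (b:ℝ) - 1 := by
    have : 1 ≤ b := by omega
    push_cast [this]
    ring
  have hb1pos : (0:ℝ) < (b:ℝ) - 1 := by
    have : (1:ℝ) < b := by exact_mod_cast Nat.lt_of_lt_of_le (by norm_num) hb
    linarith
  ext x
  constructor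
  · rintro ⟨d, hd, rfl⟩
    refine ⟨tsum_digits_nonneg hb, ?_⟩
    have := tsum_digits_le hb hd
    rw [hb1R] at this
    calc ∑' j, (d j : ℝ) * w b j ≤ ((b:ℝ) - 1) * ((b:ℝ) - 1)⁻¹ := this
      _ = 1 := mul_inv_cancel₀ hb1pos.ne'
  · rintro ⟨hx0, hx1⟩
    rcases eq_or_lt_of_le hx1 with heq | hlt
    · refine ⟨fun _ => b - 1, fun _ => le_rfl, ?_⟩
      have : ∑' j, ((b - 1 : ℕ) : ℝ) * w b j = ((b:ℝ) - 1) * ((b:ℝ) - 1)⁻¹ := by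
        rw [tsum_mul_left, tsum_w hb, hb1R]
      rw [this, mul_inv_cancel₀ hb1pos.ne', heq]
    · -- x ∈ [0, 1)
      set N : ℕ → ℕ := fun n => ⌊x * (b:ℝ) ^ n⌋₊ with hN
      have hxbn : ∀ n, (0:ℝ) ≤ x * (b:ℝ) ^ n := fun n => by positivity
      have hN0 : N 0 = 0 := by
        simp only [hN, pow_zero, mul_one]
        exact Nat.floor_eq_zero.mpr hlt
      have hNle : ∀ n, (N n : ℝ) ≤ x * (b:ℝ) ^ n := fun n => Nat.floor_le (hxbn n)
      have hNlt : ∀ n, x * (b:ℝ) ^ n < N n + 1 := fun n => Nat.lt_floor_add_one _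
      have hstep_le : ∀ n, b * N n ≤ N (n + 1) := by
        intro n
        refine Nat.le_floor ?_
        push_cast
        calc ((b:ℝ)) * N n ≤ (b:ℝ) * (x * (b:ℝ) ^ n) :=
              mul_le_mul_of_nonneg_left (hNle n) hbpos.le
          _ = x * (b:ℝ) ^ (n + 1) := by ring
      have hstep_lt : ∀ n, N (n + 1) < b * N n + b := by
        intro n
        have h1 : x * (b:ℝ) ^ (n + 1) < (b:ℝ) * (N n + 1) := by
          calc x * (b:ℝ) ^ (n + 1) = (b:ℝ) * (x * (b:ℝ) ^ n) := by ring
            _ < (b:ℝ) * (N n + 1) := by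
                exact mul_lt_mul_of_pos_left (hNlt n) hbpos
        exact (Nat.floor_lt (hxbn (n + 1))).mpr
          (show x * (b:ℝ) ^ (n + 1) < ((b * N n + b : ℕ) : ℝ) by push_cast; linarith)
      set d : ℕ → ℕ := fun j => N (j + 1) - b * N j with hdDef
      have hd : ∀ j, d j ≤ b - 1 := by
        intro j
        have h1 := hstep_le j
        have h2 := hstep_lt j
        simp only [hdDef]
        omega
      have hcast : ∀ j, (d j : ℝ) = (N (j + 1) : ℝ) - (b:ℝ) * N j := by
        intro j
        simp only [hdDef]
        rw [Nat.cast_sub (hstep_le j)]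
        push_cast
        ring
      have hbr : ∀ n : ℕ, (b:ℝ) ^ n * ((b:ℝ))⁻¹ ^ n = 1 := by
        intro n
        rw [← mul_pow, mul_inv_cancel₀ hbne, one_pow]
      have hpartial : ∀ n, ∑ j ∈ Finset.range n, (d j : ℝ) * w b j
          = (N n : ℝ) * ((b:ℝ))⁻¹ ^ n := by
        intro n
        induction n with
        | zero => simp [hN0]
        | succ n ih =>
          rw [Finset.sum_range_succ, ih, hcast n]
          have t : (b:ℝ) * (b:ℝ)⁻¹ = 1 := mul_inv_cancel₀ hbne
          simp only [w]
          linear_combination (-((N n : ℝ) * ((b:ℝ))⁻¹ ^ n)) * t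
      have htendsto : Filter.Tendsto (fun n => (N n : ℝ) * ((b:ℝ))⁻¹ ^ n)
          Filter.atTop (nhds x) := by
        have hrtend : Filter.Tendsto (fun n : ℕ => ((b:ℝ))⁻¹ ^ n) Filter.atTop (nhds 0) :=
          tendsto_pow_atTop_nhds_zero_of_lt_one (rb_pos hb).le (rb_lt_one hb)
        have hlow : Filter.Tendsto (fun n : ℕ => x - ((b:ℝ))⁻¹ ^ n) Filter.atTop (nhds x) := by
          simpa using (tendsto_const_nhds (x := x)).sub hrtend
        refine tendsto_of_tendsto_of_tendsto_of_le_of_le hlow tendsto_const_nhds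
          (fun n => ?_) (fun n => ?_)
        · -- x - r^n ≤ N n * r^n
          have hrn : (0:ℝ) < ((b:ℝ))⁻¹ ^ n := pow_pos (rb_pos hb) n
          have := mul_lt_mul_of_pos_right (hNlt n) hrn
          have hx : x * (b:ℝ) ^ n * ((b:ℝ))⁻¹ ^ n = x := by
            rw [mul_assoc, hbr n, mul_one]
          nlinarith
        · have hrn : (0:ℝ) ≤ ((b:ℝ))⁻¹ ^ n := (pow_pos (rb_pos hb) n).le
          have := mul_le_mul_of_nonneg_right (hNle n) hrn
          have hx : x * (b:ℝ) ^ n * ((b:ℝ))⁻¹ ^ n = x := by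
            rw [mul_assoc, hbr n, mul_one]
          linarith
      have hsummable : Summable (fun j => (d j : ℝ) * w b j) := summable_digits hb hd
      have h1 : Filter.Tendsto (fun n => ∑ j ∈ Finset.range n, (d j : ℝ) * w b j)
          Filter.atTop (nhds (∑' j, (d j : ℝ) * w b j)) :=
        hsummable.hasSum.tendsto_sum_nat
      have h2 : Filter.Tendsto (fun n => ∑ j ∈ Finset.range n, (d j : ℝ) * w b j)
          Filter.atTop (nhds x) := by
        refine htendsto.congr fun n => (hpartial n).symm
      exact ⟨d, hd, (tendsto_nhds_unique h1 h2).symm⟩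

end Stmt9

namespace Stmt9

attribute [local instance] ZeroLEOneClass.factZeroLtOne

noncomputable def π : ℝ → UnitAddCircle := fun x => (x : UnitAddCircle)

lemma pi_sum {i : ℕ} (g : Fin i → ℝ) : π (∑ j, g j) = ∑ j, π (g j) :=
  map_sum (QuotientAddGroup.mk' _) g Finset.univ

lemma iterSumset_image (i : ℕ) (S : Set ℝ) :
    iterSumsetT i (π '' S) = π '' RS i S := by
  ext x
  constructor
  · rintro ⟨f, hf, rfl⟩
    choose g hg hgf using hf
    refine ⟨∑ j, g j, ⟨g, hg, rfl⟩, ?_⟩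
    rw [pi_sum]
    exact Finset.sum_congr rfl fun j _ => hgf j
  · rintro ⟨y, ⟨g, hg, rfl⟩, rfl⟩
    exact ⟨fun j => π (g j), fun j => ⟨g j, hg j, rfl⟩, pi_sum g⟩

lemma RS_image_mul (i : ℕ) (β : ℝ) (S : Set ℝ) :
    RS i ((fun t => β * t) '' S) = (fun t => β * t) '' RS i S := by
  ext x
  constructor
  · rintro ⟨f, hf, rfl⟩
    choose g hg hgf using hf
    refine ⟨∑ j, g j, ⟨g, hg, rfl⟩, ?_⟩
    show β * (∑ j, g j) = ∑ j, f j
    rw [Finset.mul_sum]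
    exact Finset.sum_congr rfl fun j _ => hgf j
  · rintro ⟨y, ⟨g, hg, rfl⟩, rfl⟩
    refine ⟨fun j => β * g j, fun j => ⟨g j, hg j, rfl⟩, ?_⟩
    show β * (∑ j, g j) = ∑ j, β * g j
    rw [Finset.mul_sum]

lemma volume_pi_image {E : Set ℝ} (hE : MeasurableSet (π '' E)) :
    volume (π '' E) = volume (π ⁻¹' (π '' E) ∩ Set.Ioc 0 1) := by
  have h := AddCircle.add_projection_respects_measure (1:ℝ) 0 hE
  rw [h]
  norm_num
  rfl

lemma preimage_sub_int {y e : ℝ} (h : π y = π e) : ∃ m : ℤ, e - y = m := by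
  have h2 := QuotientAddGroup.eq.mp h
  obtain ⟨m, hm⟩ := AddSubgroup.mem_zmultiples_iff.mp h2
  have h3 : (m : ℝ) = -y + e := by rw [← hm]; simp [zsmul_eq_mul]
  exact ⟨m, by linarith⟩

lemma preimage_inter_subset {E : Set ℝ} (hE : E ⊆ Set.Icc 0 1) :
    π ⁻¹' (π '' E) ∩ Set.Ioc 0 1 ⊆ E ∪ ((1:ℝ) +ᵥ E) := by
  rintro y ⟨⟨e, heE, he⟩, hy0, hy1⟩
  obtain ⟨m, hm⟩ := preimage_sub_int (show π y = π e from he.symm)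
  obtain ⟨he0, he1⟩ := hE heE
  have hmlb : (-1 : ℤ) ≤ m := by exact_mod_cast (show (-1:ℝ) ≤ (m:ℝ) by rw [← hm]; linarith)
  have hmub : (m : ℤ) < 1 := by exact_mod_cast (show ((m:ℤ):ℝ) < 1 by rw [← hm]; linarith)
  interval_cases m
  · -- m = -1 : y = e + 1
    right
    refine Set.mem_vadd_set.mpr ⟨e, heE, ?_⟩
    have h4 : ((-1 : ℤ) : ℝ) = e - y := hm.symm
    push_cast at h4
    simp only [vadd_eq_add]
    linarith
  · -- m = 0 : y = e
    left
    have : ((0 : ℤ) : ℝ) = e - y := hm.symm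
    push_cast at this
    have : y = e := by linarith
    rwa [this]

lemma preimage_Icc {β : ℝ} (hβ0 : 0 ≤ β) (hβ1 : β ≤ 1) :
    π ⁻¹' (π '' Set.Icc 0 β) ∩ Set.Ioc 0 1 = Set.Ioc 0 β ∪ {1} := by
  ext y
  constructor
  · rintro ⟨⟨e, heE, he⟩, hy0, hy1⟩
    obtain ⟨m, hm⟩ := preimage_sub_int (show π y = π e from he.symm)
    obtain ⟨he0, he1⟩ := heE
    have hmlb : (-1 : ℤ) ≤ m := by
      exact_mod_cast (show (-1:ℝ) ≤ (m:ℝ) by rw [← hm]; linarith)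
    have hmub : (m : ℤ) < 1 := by
      exact_mod_cast (show ((m:ℤ):ℝ) < 1 by rw [← hm]; linarith)
    interval_cases m
    · -- m = -1 : y = e + 1 ≤ 1 so e = 0, y = 1
      right
      have h' : ((-1 : ℤ) : ℝ) = e - y := hm.symm
      push_cast at h'
      have : e = 0 := le_antisymm (by linarith) he0
      simp only [Set.mem_singleton_iff]
      linarith
    · left
      have h' : ((0 : ℤ) : ℝ) = e - y := hm.symm
      push_cast at h'
      have hye : y = e := by linarith
      exact ⟨hy0, by rw [hye]; exact he1⟩
  · rintro (⟨hy0, hy1⟩ | hy)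
    · exact ⟨⟨y, ⟨hy0.le, hy1⟩, rfl⟩, hy0, hy1.trans hβ1⟩
    · simp only [Set.mem_singleton_iff] at hy
      subst hy
      have h01 : π 0 = π 1 :=
        QuotientAddGroup.eq.mpr (AddSubgroup.mem_zmultiples_iff.mpr ⟨1, by simp⟩)
      exact ⟨⟨0, ⟨le_rfl, hβ0⟩, h01⟩, by norm_num, le_rfl⟩

lemma T_subset_unit {b : ℕ} (hb : 2 ≤ b) {i : ℕ} (hi : i + 1 ≤ b) :
    T b i ⊆ Set.Icc 0 1 := by
  have hb1pos : (0:ℝ) < (b:ℝ) - 1 := by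
    have : (1:ℝ) < b := by exact_mod_cast Nat.lt_of_lt_of_le (by norm_num) hb
    linarith
  rintro x ⟨d, hd, rfl⟩
  refine ⟨tsum_digits_nonneg hb, ?_⟩
  have h1 := tsum_digits_le hb hd
  have hib : (i : ℝ) ≤ (b : ℝ) - 1 := by
    have : ((i : ℝ) + 1) ≤ b := by exact_mod_cast hi
    linarith
  calc ∑' j, (d j : ℝ) * w b j ≤ (i:ℝ) * ((b:ℝ) - 1)⁻¹ := h1
    _ ≤ ((b:ℝ) - 1) * ((b:ℝ) - 1)⁻¹ :=
        mul_le_mul_of_nonneg_right hib (inv_nonneg.mpr hb1pos.le)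
    _ = 1 := mul_inv_cancel₀ hb1pos.ne'

end Stmt9

open Stmt9 in
/-- For every `k ≥ 1` and `β ∈ [0,1]` there is a compact subset `A ⊆ 𝕋 = ℝ/ℤ` with
`μ(iA) = 0` for `1 ≤ i ≤ k` and `μ((k+1)A) = β`, where `μ` is the Haar probability
measure on `𝕋`. -/
theorem stmt_9 (k : ℕ) (hk : 1 ≤ k) (β : ℝ) (hβ : β ∈ Set.Icc (0:ℝ) 1) :
    ∃ A : Set UnitAddCircle, IsCompact A ∧
      (∀ i, 1 ≤ i → i ≤ k → volume (iterSumsetT i A) = 0) ∧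
      volume (iterSumsetT (k + 1) A) = ENNReal.ofReal β := by
  have : Fact ((0:ℝ) < 1) := ⟨by norm_num⟩
  obtain ⟨hβ0, hβ1⟩ := hβ
  set b : ℕ := k + 2 with hbdef
  have hb : 2 ≤ b := by omega
  have hcont_pi : Continuous π := AddCircle.continuous_mk' 1
  have hcont_mul : Continuous (fun t : ℝ => β * t) := continuous_const.mul continuous_id
  -- the real sets E i and basic facts
  set E : ℕ → Set ℝ := fun i => (fun t => β * t) '' T b i with hEdef
  have hEcompact : ∀ i, IsCompact (E i) := fun i => (isCompact_T hb i).image hcont_mul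
  have hEunit : ∀ i, i + 1 ≤ b → E i ⊆ Set.Icc 0 1 := by
    intro i hi
    rintro x ⟨t, ht, rfl⟩
    obtain ⟨ht0, ht1⟩ := T_subset_unit hb hi ht
    constructor
    · exact mul_nonneg hβ0 ht0
    · calc β * t ≤ 1 * 1 := mul_le_mul hβ1 ht1 ht0 zero_le_one
        _ = 1 := by norm_num
  have hmeas : ∀ i, MeasurableSet (π '' E i) :=
    fun i => (((hEcompact i).image hcont_pi).isClosed).measurableSet
  have hsum : ∀ i, iterSumsetT i (π '' E 1) = π '' E i := by
    intro i
    show iterSumsetT i (π '' ((fun t => β * t) '' T b 1))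
      = π '' ((fun t => β * t) '' T b i)
    rw [iterSumset_image, RS_image_mul, RS_T hb]
  refine ⟨π '' E 1, ((hEcompact 1).image hcont_pi), ?_, ?_⟩
  · -- null cases
    intro i hi1 hik
    rw [hsum i]
    have hEnull : volume (E i) = 0 := by
      have hsmul : E i = β • T b i := by
        show (fun t => β * t) '' T b i = β • T b i
        ext x
        simp [Set.mem_smul_set, smul_eq_mul]
      rw [hsmul, Measure.addHaar_smul]
      rw [volume_T_zero hb (by omega : i + 2 ≤ b)]
      simp
    have : volume (π ⁻¹' (π '' E i) ∩ Set.Ioc 0 1) = 0 := by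
      refine measure_mono_null (preimage_inter_subset (hEunit i (by omega))) ?_
      refine le_antisymm ?_ (zero_le')
      calc volume (E i ∪ ((1:ℝ) +ᵥ E i)) ≤ volume (E i) + volume ((1:ℝ) +ᵥ E i) :=
            measure_union_le _ _
        _ = 0 := by rw [measure_vadd, hEnull]; simp
    exact (volume_pi_image (hmeas i)).trans this
  · -- full case
    rw [hsum (k + 1)]
    have hT : T b (k + 1) = Set.Icc 0 1 := by
      have : b - 1 = k + 1 := by omega
      rw [← this, T_top hb]
    have hEfull : E (k + 1) = Set.Icc 0 β := by
      show (fun t => β * t) '' T b (k + 1) = Set.Icc 0 β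
      rw [hT, Set.image_mul_left_Icc hβ0 zero_le_one, mul_zero, mul_one]
    rw [hEfull]
    have hmeas' : MeasurableSet (π '' Set.Icc 0 β) := by
      rw [← hEfull]; exact hmeas (k + 1)
    have h1 : volume ((Set.Ioc (0:ℝ) β) ∪ {1}) = ENNReal.ofReal β := by
      refine le_antisymm ?_ ?_
      · calc volume (Set.Ioc (0:ℝ) β ∪ {1})
            ≤ volume (Set.Ioc (0:ℝ) β) + volume ({1} : Set ℝ) := measure_union_le _ _
          _ = ENNReal.ofReal β := by
              rw [Real.volume_Ioc, Real.volume_singleton, add_zero, sub_zero]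
      · calc ENNReal.ofReal β = volume (Set.Ioc (0:ℝ) β) := by rw [Real.volume_Ioc, sub_zero]
          _ ≤ volume (Set.Ioc (0:ℝ) β ∪ {1}) := measure_mono Set.subset_union_left
    rw [volume_pi_image hmeas', preimage_Icc hβ0 hβ1, h1]
end

section
/- Let k ≥ 1 and let A ⊆ 𝕋 = ℝ/ℤ be a disjoint union of k intervals (arcs). Then μ(A+A) ≤ (k+1)·μ(A), where μ is the Haar probability measure on 𝕋. -/
open MeasureTheory Pointwise Set
open scoped ENNReal

noncomputable section
namespace Stmt12

local notation "π" => ((↑) : ℝ → UnitAddCircle)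

-- equivIoc applied to coe
lemma equivIoc_coe {a x : ℝ} (hx : x ∈ Set.Ioc a (a + 1)) :
    AddCircle.equivIoc 1 a (π x) = ⟨x, hx⟩ := by
  rw [Equiv.apply_eq_iff_eq_symm_apply]
  rfl

lemma injOn_Ioc (a : ℝ) : Set.InjOn π (Set.Ioc a (a + 1)) := by
  intro x hx y hy h
  have := equivIoc_coe hx
  rw [h, equivIoc_coe hy] at this
  exact (Subtype.mk.injEq _ _ _ _ ▸ this).symm

lemma aux1 {c : ℝ} {T : Set ℝ} (hT : MeasurableSet T) (h : T ⊆ Set.Ioc c (c + 1)) :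
    MeasurableSet (π '' T) ∧ volume (π '' T) = volume T := by
  have e := AddCircle.measurableEquivIoc 1 c
  have himg : π '' T = (AddCircle.measurableEquivIoc 1 c) ⁻¹' (Subtype.val ⁻¹' T) := by
    ext q
    simp only [Set.mem_preimage, Set.mem_image]
    constructor
    · rintro ⟨x, hxT, rfl⟩
      have : (AddCircle.measurableEquivIoc 1 c) (π x) = ⟨x, h hxT⟩ := equivIoc_coe (h hxT)
      rw [this]
      exact hxT
    · intro hq
      refine ⟨(AddCircle.measurableEquivIoc 1 c q : ℝ), hq, ?_⟩
      exact (AddCircle.measurableEquivIoc 1 c).symm_apply_apply q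
  have hT' : MeasurableSet (Subtype.val ⁻¹' T : Set (Set.Ioc c (c+1))) :=
    hT.preimage measurable_subtype_coe
  have hmeas : MeasurableSet (π '' T) := by
    rw [himg]; exact (AddCircle.measurableEquivIoc 1 c).measurable hT'
  refine ⟨hmeas, ?_⟩
  have hmp := AddCircle.measurePreserving_mk 1 c
  have h1 : π ⁻¹' (π '' T) ∩ Set.Ioc c (c + 1) = T := by
    apply Set.Subset.antisymm
    · rintro x ⟨hx1, hx2⟩
      obtain ⟨t, htT, ht⟩ := hx1
      rwa [injOn_Ioc c (h htT) hx2 ht] at htT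
    · exact fun x hx => ⟨Set.mem_image_of_mem _ hx, h hx⟩
  have := hmp.measure_preimage (s := π '' T) hmeas.nullMeasurableSet
  rw [Measure.restrict_apply (hmp.measurable hmeas)] at this
  rw [← this, h1]

lemma subset_Icc_of_bdd {I : Set ℝ} (hb : BddBelow I) (ha : BddAbove I) :
    I ⊆ Set.Icc (sInf I) (sSup I) := fun _ hx => ⟨csInf_le hb hx, le_csSup ha hx⟩

lemma Ioo_subset {I : Set ℝ} (hI : I.OrdConnected) (hne : I.Nonempty) :
    Set.Ioo (sInf I) (sSup I) ⊆ I := by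
  intro x hx
  obtain ⟨y, hyI, hyx⟩ := exists_lt_of_csInf_lt hne hx.1
  obtain ⟨z, hzI, hxz⟩ := exists_lt_of_lt_csSup hne hx.2
  exact hI.out hyI hzI ⟨hyx.le, hxz.le⟩

lemma bddAbove_of_ne_top {I : Set ℝ} (hI : I.OrdConnected) (hne : I.Nonempty)
    (hv : volume I ≠ ⊤) : BddAbove I := by
  by_contra hb
  obtain ⟨x, hx⟩ := hne
  have hsub : Set.Ici x ⊆ I := by
    intro z hz
    obtain ⟨w, hwI, hzw⟩ := not_bddAbove_iff.mp hb z
    exact hI.out hx hwI ⟨hz, hzw.le⟩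
  exact hv (eq_top_iff.mpr (Real.volume_Ici (a := x) ▸ measure_mono hsub))

lemma bddBelow_of_ne_top {I : Set ℝ} (hI : I.OrdConnected) (hne : I.Nonempty)
    (hv : volume I ≠ ⊤) : BddBelow I := by
  by_contra hb
  obtain ⟨x, hx⟩ := hne
  have hsub : Set.Iic x ⊆ I := by
    intro z hz
    obtain ⟨w, hwI, hzw⟩ := not_bddBelow_iff.mp hb z
    exact hI.out hwI hx ⟨hzw.le, hz⟩
  exact hv (eq_top_iff.mpr (Real.volume_Iic (a := x) ▸ measure_mono hsub))

lemma volume_eq_of_bdd {I : Set ℝ} (hI : I.OrdConnected) (hne : I.Nonempty)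
    (hb : BddBelow I) (ha : BddAbove I) :
    volume I = ENNReal.ofReal (sSup I - sInf I) := by
  apply le_antisymm
  · calc volume I ≤ volume (Set.Icc (sInf I) (sSup I)) :=
          measure_mono (subset_Icc_of_bdd hb ha)
      _ = _ := Real.volume_Icc
  · calc ENNReal.ofReal (sSup I - sInf I) = volume (Set.Ioo (sInf I) (sSup I)) :=
          Real.volume_Ioo.symm
      _ ≤ volume I := measure_mono (Ioo_subset hI hne)

lemma measure_image {I : Set ℝ} (hI : I.OrdConnected) :
    MeasurableSet (π '' I) ∧ volume (π '' I) = min (volume I) 1 := by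
  rcases I.eq_empty_or_nonempty with rfl | hne
  · simp
  by_cases hvol : volume I < 1
  · have hvt : volume I ≠ ⊤ := (hvol.trans_le le_top).ne
    have ha := bddAbove_of_ne_top hI hne hvt
    have hb := bddBelow_of_ne_top hI hne hvt
    set a := sInf I
    set b := sSup I
    have hv := volume_eq_of_bdd hI hne hb ha
    have hba : b - a < 1 := by
      rw [hv] at hvol
      exact ENNReal.ofReal_lt_one.mp hvol
    have hsub : I ⊆ Set.Ioc (b - 1) ((b - 1) + 1) := by
      intro x hx
      have h1 : a ≤ x := csInf_le hb hx
      have h2 : x ≤ b := le_csSup ha hx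
      constructor <;> [linarith; linarith]
    have h := aux1 hI.measurableSet hsub
    exact ⟨h.1, by rw [h.2, min_eq_left hvol.le]⟩
  · push_neg at hvol
    have key : ∃ c : ℝ, Set.univ \ {π c} ⊆ π '' I := by
      by_cases ha : BddAbove I
      · by_cases hb : BddBelow I
        · set a := sInf I
          set b := sSup I
          have hv := volume_eq_of_bdd hI hne hb ha
          have hab1 : a + 1 ≤ b := by
            rw [hv] at hvol
            have := ENNReal.one_le_ofReal.mp hvol
            linarith
          refine ⟨a, fun q hq => ?_⟩
          set x := (AddCircle.equivIoc 1 a q : ℝ) with hxdef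
          have hx : x ∈ Set.Ioc a (a + 1) := (AddCircle.equivIoc 1 a q).2
          have hqx : π x = q := (AddCircle.equivIoc 1 a).symm_apply_apply q
          have hxne : x ≠ a + 1 := by
            intro h
            apply hq.2
            rw [← hqx, h]
            exact AddCircle.coe_add_period 1 a
          have hxI : x ∈ I :=
            Ioo_subset hI hne ⟨hx.1, lt_of_lt_of_le (lt_of_le_of_ne hx.2 hxne) hab1⟩
          exact ⟨x, hxI, hqx⟩
        · obtain ⟨x, hx⟩ := hne
          have hsub : Set.Ioc (x - 1) ((x - 1) + 1) ⊆ I := by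
            intro z hz
            obtain ⟨w, hwI, hzw⟩ := not_bddBelow_iff.mp hb z
            have hzx : z ≤ x := by
              have := hz.2; linarith
            exact hI.out hwI hx ⟨hzw.le, hzx⟩
          refine ⟨0, fun q _ => ?_⟩
          have : π '' Set.Ioc (x - 1) ((x - 1) + 1) = Set.univ :=
            AddCircle.coe_image_Ioc_eq 1 (x - 1)
          exact Set.image_mono (f := π) hsub (this ▸ Set.mem_univ q)
      · obtain ⟨x, hx⟩ := hne
        have hsub : Set.Ioc x (x + 1) ⊆ I := by
          intro z hz
          obtain ⟨w, hwI, hzw⟩ := not_bddAbove_iff.mp ha z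
          exact hI.out hx hwI ⟨hz.1.le, hzw.le⟩
        refine ⟨0, fun q _ => ?_⟩
        have : π '' Set.Ioc x (x + 1) = Set.univ := AddCircle.coe_image_Ioc_eq 1 x
        exact Set.image_mono (f := π) hsub (this ▸ Set.mem_univ q)
    obtain ⟨c, hc⟩ := key
    have hsing : volume ({π c} : Set UnitAddCircle) = 0 := by
      have h1 : ({c} : Set ℝ) ⊆ Set.Ioc (c - 1) ((c - 1) + 1) := by
        intro x hx
        rw [Set.mem_singleton_iff] at hx
        subst hx
        constructor <;> [linarith; linarith]
      have h := aux1 (measurableSet_singleton c) h1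
      rw [Set.image_singleton] at h
      rw [h.2, Real.volume_singleton]
    have hm2 : MeasurableSet (π '' I ∩ {π c}) :=
      ((Set.subsingleton_singleton).anti Set.inter_subset_right).measurableSet
    have hsplit : π '' I = (Set.univ \ {π c}) ∪ (π '' I ∩ {π c}) := by
      apply Set.Subset.antisymm
      · intro q hq
        by_cases h : q ∈ ({π c} : Set UnitAddCircle)
        · exact Or.inr ⟨hq, h⟩
        · exact Or.inl ⟨trivial, h⟩
      · rintro q (hq | hq)
        · exact hc hq
        · exact hq.1
    have hmeas : MeasurableSet (π '' I) := by
      rw [hsplit]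
      exact (MeasurableSet.univ.diff (measurableSet_singleton _)).union hm2
    refine ⟨hmeas, ?_⟩
    have hle : volume (π '' I) ≤ 1 :=
      le_of_le_of_eq (measure_mono (Set.subset_univ _)) UnitAddCircle.measure_univ
    have hge : (1 : ℝ≥0∞) ≤ volume (π '' I) := by
      calc (1 : ℝ≥0∞) = volume ((Set.univ \ {π c}) : Set UnitAddCircle) := by
            rw [measure_diff_null hsing, UnitAddCircle.measure_univ]
        _ ≤ _ := measure_mono hc
    rw [min_eq_right hvol]
    exact le_antisymm hle hge

lemma ordConnected_add {s t : Set ℝ} (hs : s.OrdConnected) (ht : t.OrdConnected) :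
    (s + t).OrdConnected := by
  constructor
  intro p hp q hq z hz
  obtain ⟨x, hx, y, hy, rfl⟩ := Set.mem_add.mp hp
  obtain ⟨x', hx', y', hy', rfl⟩ := Set.mem_add.mp hq
  by_cases h : z - y ≤ x'
  · have hxz : x ≤ z - y := by have := hz.1; linarith
    exact Set.mem_add.mpr ⟨z - y, hs.out hx hx' ⟨hxz, h⟩, y, hy, by ring⟩
  · push_neg at h
    have h1 : y ≤ z - x' := by linarith
    have h2 : z - x' ≤ y' := by have := hz.2; linarith
    exact Set.mem_add.mpr ⟨x', hx', z - x', ht.out hy hy' ⟨h1, h2⟩, by ring⟩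

lemma volume_add_le {s t : Set ℝ} (hs : s.OrdConnected) (ht : t.OrdConnected)
    (hsne : s.Nonempty) (htne : t.Nonempty) : volume (s + t) ≤ volume s + volume t := by
  by_cases hvs : volume s = ⊤
  · rw [hvs, top_add]; exact le_top
  by_cases hvt : volume t = ⊤
  · rw [hvt, add_top]; exact le_top
  have has := bddAbove_of_ne_top hs hsne hvs
  have hbs := bddBelow_of_ne_top hs hsne hvs
  have hat := bddAbove_of_ne_top ht htne hvt
  have hbt := bddBelow_of_ne_top ht htne hvt
  have hsub : s + t ⊆ Set.Icc (sInf s + sInf t) (sSup s + sSup t) := by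
    intro z hz
    obtain ⟨x, hx, y, hy, rfl⟩ := Set.mem_add.mp hz
    exact ⟨add_le_add (csInf_le hbs hx) (csInf_le hbt hy),
      add_le_add (le_csSup has hx) (le_csSup hat hy)⟩
  calc volume (s + t) ≤ volume (Set.Icc (sInf s + sInf t) (sSup s + sSup t)) :=
        measure_mono hsub
    _ = ENNReal.ofReal ((sSup s + sSup t) - (sInf s + sInf t)) := Real.volume_Icc
    _ = ENNReal.ofReal ((sSup s - sInf s) + (sSup t - sInf t)) := by ring_nf
    _ ≤ ENNReal.ofReal (sSup s - sInf s) + ENNReal.ofReal (sSup t - sInf t) :=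
        ENNReal.ofReal_add_le
    _ = volume s + volume t := by
        rw [volume_eq_of_bdd hs hsne hbs has, volume_eq_of_bdd ht htne hbt hat]

lemma min_add_min (a b x : ℝ≥0∞) (hx : x ≤ a + b) : min x 1 ≤ min a 1 + min b 1 := by
  rcases le_or_gt 1 a with h | h
  · calc min x 1 ≤ 1 := min_le_right _ _
      _ = min a 1 := (min_eq_right h).symm
      _ ≤ _ := le_add_right le_rfl
  rcases le_or_gt 1 b with h' | h'
  · calc min x 1 ≤ 1 := min_le_right _ _
      _ = min b 1 := (min_eq_right h').symm
      _ ≤ _ := le_add_left le_rfl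
  · rw [min_eq_left h.le, min_eq_left h'.le]
    exact (min_le_left _ _).trans hx

lemma pair_bound {s t : Set ℝ} (hs : s.OrdConnected) (ht : t.OrdConnected) :
    volume (π '' s + π '' t) ≤ volume (π '' s) + volume (π '' t) := by
  rcases s.eq_empty_or_nonempty with rfl | hsne
  · simp
  rcases t.eq_empty_or_nonempty with rfl | htne
  · simp
  have himg : π '' s + π '' t = π '' (s + t) := by
    exact (Set.image_add (QuotientAddGroup.mk' (AddSubgroup.zmultiples (1 : ℝ)))).symm
  rw [himg, (measure_image (ordConnected_add hs ht)).2,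
    (measure_image hs).2, (measure_image ht).2]
  exact min_add_min _ _ _ (volume_add_le hs ht hsne htne)

lemma comb (k : ℕ) (ℓ : Fin k → ℝ≥0∞) :
    ∑ p ∈ Finset.univ.filter (fun p : Fin k × Fin k => p.1 ≤ p.2), (ℓ p.1 + ℓ p.2)
      = ((k : ℝ≥0∞) + 1) * ∑ i, ℓ i := by
  rw [Finset.sum_filter, Fintype.sum_prod_type]
  have hsplit : ∀ i j : Fin k,
      (if i ≤ j then ℓ i + ℓ j else 0)
        = (if i ≤ j then ℓ i else 0) + (if i ≤ j then ℓ j else 0) := by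
    intro i j; split <;> simp
  simp_rw [hsplit, Finset.sum_add_distrib]
  have h1 : ∀ i : Fin k, (∑ j, if i ≤ j then ℓ i else 0) = (k - (i : ℕ)) • ℓ i := by
    intro i
    rw [← Finset.sum_filter]
    rw [show Finset.univ.filter (fun j => i ≤ j) = Finset.Ici i from by ext; simp]
    rw [Finset.sum_const, Fin.card_Ici]
  have h2 : ∀ i : Fin k, (∑ j, if j ≤ i then ℓ i else 0) = ((i : ℕ) + 1) • ℓ i := by
    intro i
    rw [← Finset.sum_filter]
    rw [show Finset.univ.filter (fun j => j ≤ i) = Finset.Iic i from by ext; simp]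
    rw [Finset.sum_const, Fin.card_Iic]
  have h2' : (∑ i : Fin k, ∑ j : Fin k, if i ≤ j then ℓ j else 0)
      = ∑ j : Fin k, ((j : ℕ) + 1) • ℓ j := by
    rw [Finset.sum_comm]
    exact Finset.sum_congr rfl fun j _ => h2 j
  simp_rw [h1]
  rw [h2', ← Finset.sum_add_distrib, Finset.mul_sum]
  refine Finset.sum_congr rfl fun i _ => ?_
  rw [← add_smul]
  have hcard : (k - (i : ℕ)) + ((i : ℕ) + 1) = k + 1 := by
    have := i.isLt; omega
  rw [hcard, nsmul_eq_mul]
  push_cast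
  ring

end Stmt12
end

/-- If `A ⊆ 𝕋 = ℝ/ℤ` is a disjoint union of `k` arcs (images of real intervals under the
projection `ℝ → ℝ/ℤ`), then `μ(A+A) ≤ (k+1)·μ(A)`, where `μ` is the Haar probability
measure on `𝕋`. -/
theorem stmt_12 (k : ℕ) (hk : 1 ≤ k) (I : Fin k → Set ℝ)
    (hI : ∀ i, (I i).OrdConnected)
    (A : Set UnitAddCircle) (hA : A = ⋃ i, ((↑) : ℝ → UnitAddCircle) '' I i)
    (hdisj : Pairwise fun i j =>
      Disjoint (((↑) : ℝ → UnitAddCircle) '' I i) (((↑) : ℝ → UnitAddCircle) '' I j)) :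
    volume (A + A) ≤ ((k : ℝ≥0∞) + 1) * volume A := by
  set B : Fin k → Set UnitAddCircle := fun i => ((↑) : ℝ → UnitAddCircle) '' I i with hB
  have hmeasB : ∀ i, MeasurableSet (B i) := fun i => (Stmt12.measure_image (hI i)).1
  have hmuA : volume A = ∑ i, volume (B i) := by
    rw [hA, measure_iUnion hdisj hmeasB, tsum_fintype]
  set P := Finset.univ.filter (fun p : Fin k × Fin k => p.1 ≤ p.2) with hP
  have hAA : A + A ⊆ ⋃ p ∈ P, (B p.1 + B p.2) := by
    rw [hA]
    intro z hz
    obtain ⟨x, hx, y, hy, rfl⟩ := Set.mem_add.mp hz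
    obtain ⟨i, hxi⟩ := Set.mem_iUnion.mp hx
    obtain ⟨j, hyj⟩ := Set.mem_iUnion.mp hy
    rcases le_or_gt i j with hij | hij
    · refine Set.mem_biUnion (Finset.mem_filter.mpr ⟨Finset.mem_univ ((i, j)), hij⟩) ?_
      exact Set.add_mem_add hxi hyj
    · refine Set.mem_biUnion (Finset.mem_filter.mpr ⟨Finset.mem_univ ((j, i)), hij.le⟩) ?_
      exact add_comm x y ▸ Set.add_mem_add hyj hxi
  calc volume (A + A) ≤ ∑ p ∈ P, volume (B p.1 + B p.2) :=
        (measure_mono hAA).trans (measure_biUnion_finset_le P _)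
    _ ≤ ∑ p ∈ P, (volume (B p.1) + volume (B p.2)) :=
        Finset.sum_le_sum fun p _ => Stmt12.pair_bound (hI p.1) (hI p.2)
    _ = ((k : ℝ≥0∞) + 1) * ∑ i, volume (B i) := by
        rw [hP]; exact Stmt12.comb k fun i => volume (B i)
    _ = ((k : ℝ≥0∞) + 1) * volume A := by rw [hmuA]
end

section
/- Let s ≥ 1 be an integer and (α_1,…,α_s) ∈ (0,1)^s. Then there exists a constant C > 0 (depending only on s and the α_i) such that for all integers n ≥ 1, ∑ ∏_{i=1}^s u_i^{−α_i} ≤ C·n^{s−1−∑_i α_i}, where the sum runs over all s-tuples of integers (u_1,…,u_s) with 1 ≤ u_i ≤ n for all i and u_1 + ⋯ + u_s = n. -/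
open Finset

/-- `x ^ (∑ f) = ∏ x ^ f i` for positive `x`. -/
lemma rpow_sum_eq {x : ℝ} (hx : 0 < x) {ι : Type*} (t : Finset ι) (f : ι → ℝ) :
    x ^ (∑ i ∈ t, f i) = ∏ i ∈ t, x ^ (f i) := by
  classical
  induction t using Finset.cons_induction with
  | empty => simp
  | cons i t hi ih => rw [Finset.sum_cons, Finset.prod_cons, Real.rpow_add hx, ih]

/-- Comparison of `∑ m^{-a}` with the integral. -/
lemma sumA {a : ℝ} (ha0 : 0 < a) (ha1 : a < 1) {n : ℕ} (hn : 1 ≤ n) :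
    ∑ m ∈ Finset.Icc 1 n, (m : ℝ) ^ (-a) ≤ (1 + 1 / (1 - a)) * (n : ℝ) ^ (1 - a) := by
  obtain ⟨m, rfl⟩ : ∃ m, n = m + 1 := ⟨n - 1, by omega⟩
  have h1a : (0:ℝ) < 1 - a := by linarith
  have hnR : (1:ℝ) ≤ ((m + 1 : ℕ) : ℝ) := by exact_mod_cast hn
  have hone : (1:ℝ) ≤ ((m + 1 : ℕ) : ℝ) ^ (1 - a) := by
    calc (1:ℝ) = (1:ℝ) ^ (1 - a) := (Real.one_rpow _).symm
    _ ≤ ((m + 1 : ℕ) : ℝ) ^ (1 - a) := Real.rpow_le_rpow zero_le_one hnR h1a.le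
  have hant : AntitoneOn (fun x : ℝ => x ^ (-a)) (Set.Icc (1:ℝ) (1 + (m : ℕ))) := by
    intro x hx y hy hxy
    exact Real.rpow_le_rpow_of_nonpos (lt_of_lt_of_le one_pos hx.1) hxy (by linarith)
  have hint := hant.sum_le_integral
  have hval : (∫ x in (1:ℝ)..(1 + (m:ℕ)), x ^ (-a)) =
      ((1 + (m:ℕ) : ℝ) ^ (1 - a) - 1) / (1 - a) := by
    rw [integral_rpow (Or.inl (by linarith))]
    have h' : -a + 1 = 1 - a := by ring
    rw [h', Real.one_rpow]
  -- rewrite the sum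
  have hsum : ∑ k ∈ Finset.Icc 1 (m + 1), (k : ℝ) ^ (-a)
      = (∑ i ∈ Finset.range m, ((1:ℝ) + ((i + 1 : ℕ) : ℝ)) ^ (-a)) + 1 := by
    rw [← Finset.Ico_add_one_right_eq_Icc, Finset.sum_Ico_eq_sum_range]
    have hmm : m + 1 + 1 - 1 = m + 1 := rfl
    rw [hmm, Finset.sum_range_succ']
    congr 1
    · refine Finset.sum_congr rfl fun i _ => ?_
      congr 1
      push_cast
      ring
    · norm_num
  have hle1 : (∑ i ∈ Finset.range m, ((1:ℝ) + ((i + 1 : ℕ) : ℝ)) ^ (-a))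
      ≤ ((1 + (m:ℕ) : ℝ) ^ (1 - a) - 1) / (1 - a) := hval ▸ hint
  have hcast : ((1:ℝ) + (m:ℕ)) = ((m + 1 : ℕ) : ℝ) := by push_cast; ring
  rw [hsum]
  rw [hcast] at hle1
  have h2 : (((m + 1 : ℕ) : ℝ) ^ (1 - a) - 1) / (1 - a)
      ≤ (((m + 1 : ℕ) : ℝ) ^ (1 - a)) / (1 - a) := by
    gcongr
    linarith
  calc (∑ i ∈ Finset.range m, ((1:ℝ) + ((i + 1 : ℕ) : ℝ)) ^ (-a)) + 1
      ≤ (((m + 1 : ℕ) : ℝ) ^ (1 - a)) / (1 - a) + ((m + 1 : ℕ) : ℝ) ^ (1 - a) := by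
        linarith
    _ = (1 + 1 / (1 - a)) * ((m + 1 : ℕ) : ℝ) ^ (1 - a) := by
        field_simp
        ring

set_option maxHeartbeats 1000000 in
/-- For `s ≥ 1` and `(α₁,…,α_s) ∈ (0,1)^s` there is a constant `C > 0` such that for all
`n ≥ 1`, the sum of `∏ u_i^{−α_i}` over all `s`-tuples `(u₁,…,u_s)` of positive integers
with `u₁ + ⋯ + u_s = n` is at most `C·n^{s−1−∑ α_i}`. -/
theorem stmt_16 (s : ℕ) (hs : 1 ≤ s) (α : Fin s → ℝ) (hα : ∀ i, α i ∈ Set.Ioo (0:ℝ) 1) :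
    ∃ C : ℝ, 0 < C ∧ ∀ n : ℕ, 1 ≤ n →
      ∑ u ∈ (Fintype.piFinset fun _ : Fin s => Finset.Icc 1 n).filter
          (fun u => ∑ i, u i = n),
        ∏ i, (u i : ℝ) ^ (-(α i)) ≤ C * (n : ℝ) ^ ((s : ℝ) - 1 - ∑ i, α i) := by
  classical
  have hα0 : ∀ i, 0 < α i := fun i => (hα i).1
  have hα1 : ∀ i, α i < 1 := fun i => (hα i).2
  have i₀ : Fin s := ⟨0, hs⟩
  set K : Fin s → ℝ := fun j => 1 + 1 / (1 - α j) with hKdef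
  have hK1 : ∀ j, (1:ℝ) ≤ K j := by
    intro j
    have h1 : (0:ℝ) < 1 - α j := by linarith [hα1 j]
    have h2 : (0:ℝ) < 1 / (1 - α j) := by positivity
    simp only [hKdef]
    linarith
  have hsR : (0:ℝ) < s := by exact_mod_cast hs
  have hKprodpos : ∀ i : Fin s, 0 < ∏ j ∈ Finset.univ.erase i, K j := fun i =>
    Finset.prod_pos fun j _ => lt_of_lt_of_le one_pos (hK1 j)
  refine ⟨∑ i : Fin s, (s:ℝ) ^ (α i) * ∏ j ∈ Finset.univ.erase i, K j, ?_, ?_⟩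
  · exact Finset.sum_pos
      (fun i _ => mul_pos (Real.rpow_pos_of_pos hsR _) (hKprodpos i))
      ⟨i₀, Finset.mem_univ i₀⟩
  intro n hn
  have hnR : (0:ℝ) < n := by exact_mod_cast hn
  set F := (Fintype.piFinset fun _ : Fin s => Finset.Icc 1 n).filter
      (fun u => ∑ i, u i = n) with hFdef
  -- Step 1: pigeonhole, each composition has a coordinate ≥ n / s
  have step1 : ∑ u ∈ F, ∏ i, (u i : ℝ) ^ (-(α i)) ≤
      ∑ i : Fin s, ∑ u ∈ F, (if n ≤ s * u i then ∏ j, (u j : ℝ) ^ (-(α j)) else 0) := by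
    rw [Finset.sum_comm]
    apply Finset.sum_le_sum
    intro u hu
    obtain ⟨i, hi⟩ : ∃ i, n ≤ s * u i := by
      by_contra hcon
      push_neg at hcon
      have hsum : (∑ j, u j) = n := (Finset.mem_filter.1 hu).2
      have h1 : ∑ j : Fin s, s * u j = s * n := by rw [← Finset.mul_sum, hsum]
      have h2 : ∑ j : Fin s, s * u j ≤ ∑ _j : Fin s, (n - 1) :=
        Finset.sum_le_sum fun j _ => by have := hcon j; omega
      simp only [Finset.sum_const, Finset.card_univ, Fintype.card_fin, smul_eq_mul] at h2
      have hle : s * n ≤ s * (n - 1) := h1 ▸ h2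
      have hn1 : n - 1 < n := by omega
      have hlt : s * (n - 1) < s * n := (Nat.mul_lt_mul_left (show 0 < s by omega)).mpr hn1
      omega
    have hnn : ∀ i' ∈ Finset.univ, (0:ℝ) ≤
        (if n ≤ s * u i' then ∏ j, (u j : ℝ) ^ (-(α j)) else 0) := by
      intro i' _
      split
      · exact Finset.prod_nonneg fun j _ => Real.rpow_nonneg (Nat.cast_nonneg _) _
      · exact le_rfl
    have := Finset.single_le_sum hnn (Finset.mem_univ i)
    rw [if_pos hi] at this
    exact this
  refine le_trans step1 ?_
  rw [Finset.sum_mul]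
  apply Finset.sum_le_sum
  intro i _
  -- per-index bound
  set h : Fin s → ℕ → ℝ := fun j m => if j = i then 1 else (m : ℝ) ^ (-(α j)) with hhdef
  set t : Fin s → Finset ℕ := fun j => if j = i then {1} else Finset.Icc 1 n with htdef
  rw [← Finset.sum_filter]
  set Fi := F.filter (fun u => n ≤ s * u i) with hFidef
  have hmemFi : ∀ u ∈ Fi, (∀ j, u j ∈ Finset.Icc 1 n) ∧ (∑ j, u j = n) ∧ n ≤ s * u i := by
    intro u hu
    obtain ⟨huF, hui⟩ := Finset.mem_filter.1 hu
    obtain ⟨hupi, husum⟩ := Finset.mem_filter.1 huF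
    exact ⟨Fintype.mem_piFinset.1 hupi, husum, hui⟩
  have hGnn : ∀ (v : Fin s → ℕ), (0:ℝ) ≤ ∏ j, h j (v j) := by
    intro v
    apply Finset.prod_nonneg
    intro j _
    simp only [hhdef]
    split
    · exact zero_le_one
    · exact Real.rpow_nonneg (Nat.cast_nonneg _) _
  -- Claim P : pointwise bound
  have claimP : ∀ u ∈ Fi, ∏ j, (u j : ℝ) ^ (-(α j)) ≤
      (s:ℝ) ^ (α i) * (n:ℝ) ^ (-(α i)) * ∏ j, h j (u j) := by
    intro u hu
    obtain ⟨hicc, hsum, hni⟩ := hmemFi u hu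
    have hG : ∏ j, h j (u j) = ∏ j ∈ Finset.univ.erase i, (u j : ℝ) ^ (-(α j)) := by
      rw [← Finset.mul_prod_erase Finset.univ (fun j => h j (u j)) (Finset.mem_univ i)]
      simp only [hhdef, if_pos rfl, one_mul]
      exact Finset.prod_congr rfl fun j hj => by
        simp [Finset.ne_of_mem_erase hj]
    have hprodnn : (0:ℝ) ≤ ∏ j ∈ Finset.univ.erase i, (u j : ℝ) ^ (-(α j)) :=
      Finset.prod_nonneg fun j _ => Real.rpow_nonneg (Nat.cast_nonneg _) _
    have hui : (n:ℝ) / (s:ℝ) ≤ (u i : ℝ) := by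
      rw [div_le_iff₀ hsR]
      have : (n:ℝ) ≤ (s:ℝ) * (u i : ℝ) := by exact_mod_cast hni
      linarith
    have hd : (0:ℝ) < (n:ℝ) / (s:ℝ) := by positivity
    have h1 : ((u i : ℝ)) ^ (-(α i)) ≤ ((n:ℝ) / (s:ℝ)) ^ (-(α i)) :=
      Real.rpow_le_rpow_of_nonpos hd hui (by linarith [hα0 i])
    have h2 : ((n:ℝ) / (s:ℝ)) ^ (-(α i)) = (s:ℝ) ^ (α i) * (n:ℝ) ^ (-(α i)) := by
      rw [Real.rpow_neg hd.le, Real.rpow_neg hnR.le, Real.div_rpow hnR.le hsR.le,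
        inv_div, div_eq_mul_inv]
    rw [hG, ← Finset.mul_prod_erase Finset.univ (fun j => (u j : ℝ) ^ (-(α j)))
      (Finset.mem_univ i)]
    calc (u i : ℝ) ^ (-(α i)) * ∏ j ∈ Finset.univ.erase i, (u j : ℝ) ^ (-(α j))
        ≤ ((n:ℝ) / (s:ℝ)) ^ (-(α i)) * ∏ j ∈ Finset.univ.erase i, (u j : ℝ) ^ (-(α j)) :=
          mul_le_mul_of_nonneg_right h1 hprodnn
      _ = (s:ℝ) ^ (α i) * (n:ℝ) ^ (-(α i)) * ∏ j ∈ Finset.univ.erase i, (u j : ℝ) ^ (-(α j)) := by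
          rw [h2]
  -- Claim G : sum bound via injection
  have claimG : ∑ u ∈ Fi, ∏ j, h j (u j) ≤ ∏ j, ∑ m ∈ t j, h j m := by
    rw [Finset.prod_univ_sum]
    have hinj : ∀ u ∈ Fi, ∀ v ∈ Fi,
        Function.update u i 1 = Function.update v i 1 → u = v := by
      intro u hu v hv huv
      have hus := (hmemFi u hu).2.1
      have hvs := (hmemFi v hv).2.1
      have hoff : ∀ j, j ≠ i → u j = v j := by
        intro j hj
        have := congrFun huv j
        simpa [Function.update_of_ne hj] using this
      have herase : ∑ j ∈ Finset.univ.erase i, u j = ∑ j ∈ Finset.univ.erase i, v j :=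
        Finset.sum_congr rfl fun j hj => hoff j (Finset.ne_of_mem_erase hj)
      have hu' : u i + ∑ j ∈ Finset.univ.erase i, u j = n := by
        rw [Finset.add_sum_erase Finset.univ u (Finset.mem_univ i)]
        exact hus
      have hv' : v i + ∑ j ∈ Finset.univ.erase i, v j = n := by
        rw [Finset.add_sum_erase Finset.univ v (Finset.mem_univ i)]
        exact hvs
      funext j
      by_cases hj : j = i
      · subst hj
        omega
      · exact hoff j hj
    calc ∑ u ∈ Fi, ∏ j, h j (u j)
        = ∑ u ∈ Fi, ∏ j, h j (Function.update u i 1 j) := by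
          refine Finset.sum_congr rfl fun u _ => Finset.prod_congr rfl fun j _ => ?_
          by_cases hj : j = i
          · subst hj; simp [hhdef]
          · rw [Function.update_of_ne hj]
      _ = ∑ v ∈ Fi.image (fun u => Function.update u i 1), ∏ j, h j (v j) :=
          by rw [Finset.sum_image hinj]
      _ ≤ ∑ v ∈ Fintype.piFinset t, ∏ j, h j (v j) := by
          apply Finset.sum_le_sum_of_subset_of_nonneg
          · intro v hv
            obtain ⟨u, hu, rfl⟩ := Finset.mem_image.1 hv
            refine Fintype.mem_piFinset.2 fun j => ?_
            by_cases hj : j = i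
            · subst hj
              simp [htdef]
            · rw [Function.update_of_ne hj]
              simpa [htdef, hj] using (hmemFi u hu).1 j
          · intro v _ _
            exact hGnn v
  -- evaluate the product
  have heval : ∏ j, ∑ m ∈ t j, h j m =
      ∏ j ∈ Finset.univ.erase i, ∑ m ∈ Finset.Icc 1 n, (m : ℝ) ^ (-(α j)) := by
    rw [← Finset.mul_prod_erase Finset.univ (fun j => ∑ m ∈ t j, h j m) (Finset.mem_univ i)]
    have h1 : ∑ m ∈ t i, h i m = 1 := by simp [htdef, hhdef]
    rw [h1, one_mul]
    refine Finset.prod_congr rfl fun j hj => ?_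
    have hj' := Finset.ne_of_mem_erase hj
    simp [htdef, hhdef, hj']
  -- bound the product by rpow of n
  have hSle : ∀ j : Fin s, ∑ m ∈ Finset.Icc 1 n, (m : ℝ) ^ (-(α j)) ≤
      K j * (n : ℝ) ^ (1 - α j) := fun j => sumA (hα0 j) (hα1 j) hn
  have hSnn : ∀ j : Fin s, (0:ℝ) ≤ ∑ m ∈ Finset.Icc 1 n, (m : ℝ) ^ (-(α j)) := fun j =>
    Finset.sum_nonneg fun m _ => Real.rpow_nonneg (Nat.cast_nonneg _) _
  have hprodle : ∏ j ∈ Finset.univ.erase i, ∑ m ∈ Finset.Icc 1 n, (m : ℝ) ^ (-(α j)) ≤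
      ∏ j ∈ Finset.univ.erase i, (K j * (n : ℝ) ^ (1 - α j)) :=
    Finset.prod_le_prod (fun j _ => hSnn j) (fun j _ => hSle j)
  -- exponent computation
  have hE : (-(α i)) + ∑ j ∈ Finset.univ.erase i, (1 - α j) = (s:ℝ) - 1 - ∑ j, α j := by
    rw [Finset.sum_sub_distrib, Finset.sum_const, Finset.card_erase_of_mem (Finset.mem_univ i),
      Finset.card_univ, Fintype.card_fin, Finset.sum_erase_eq_sub (Finset.mem_univ i),
      nsmul_eq_mul, mul_one, Nat.cast_sub hs]
    push_cast
    ring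
  calc ∑ u ∈ Fi, ∏ j, (u j : ℝ) ^ (-(α j))
      ≤ ∑ u ∈ Fi, ((s:ℝ) ^ (α i) * (n:ℝ) ^ (-(α i)) * ∏ j, h j (u j)) :=
        Finset.sum_le_sum claimP
    _ = (s:ℝ) ^ (α i) * (n:ℝ) ^ (-(α i)) * ∑ u ∈ Fi, ∏ j, h j (u j) := by
        rw [← Finset.mul_sum]
    _ ≤ (s:ℝ) ^ (α i) * (n:ℝ) ^ (-(α i)) *
        ∏ j ∈ Finset.univ.erase i, (K j * (n : ℝ) ^ (1 - α j)) := by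
        apply mul_le_mul_of_nonneg_left _ (by positivity)
        exact le_trans claimG (heval ▸ hprodle)
    _ = (s:ℝ) ^ (α i) * (∏ j ∈ Finset.univ.erase i, K j) *
        (n : ℝ) ^ ((s:ℝ) - 1 - ∑ j, α j) := by
        rw [Finset.prod_mul_distrib, ← rpow_sum_eq hnR, ← hE, Real.rpow_add hnR]
        ring
end
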